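/- arXiv:1104.4099 — 7 statements merged into one kernel-verified Lean document; each statement's English description precedes it below -/
import Mathlib

section
/- Let n ≥ 4 and let i₁ < j₁ and i₂ < j₂ be indices in {1,…,n}. Then the number of permutations σ ∈ S_n satisfying both σ⁻¹(i₁) > σ⁻¹(j₁) and σ(i₂) > σ(j₂) equals (n-3)!·(j₁-i₁-1)(j₂-i₂-1) + (n-2)!·(n²-n+2)/4. -/
open Finset Equiv

theorem count_fix {α : Type*} [Fintype α] [DecidableEq α] (s : Finset α) :
    (univ.filter fun σ : Perm α => ∀ i ∈ s, σ i = i).card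
      = (Fintype.card α - s.card).factorial := by
  have e := (Equiv.Perm.subtypeEquivSubtypePerm (fun a => a ∉ s)).trans
    (Equiv.subtypeEquivRight (q := fun f : Perm α => ∀ i ∈ s, f i = i)
      (by intro f; constructor
          · intro h i hi; exact h i (by simpa using hi)
          · intro h a ha; exact h a (by simpa using ha)))
  have h1 : Fintype.card {f : Perm α // ∀ i ∈ s, f i = i} = (Fintype.card α - s.card).factorial := by
    rw [← Fintype.card_congr e, Fintype.card_perm, Fintype.card_subtype_compl]
    congr 2
    simp [Fintype.card_subtype]
  rw [← h1]
  simp [Fintype.card_subtype]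

theorem count_ext {α : Type*} [Fintype α] [DecidableEq α] (s : Finset α) (f : α → α)
    (hf : Set.InjOn f s) :
    (univ.filter fun σ : Perm α => ∀ i ∈ s, σ i = f i).card
      = (Fintype.card α - s.card).factorial := by
  classical
  -- build a permutation σ₀ extending f on s
  have himg : ∀ a : {x // x ∈ s}, f a ∈ s.image f := fun a => Finset.mem_image_of_mem f a.2
  have hbij : Function.Bijective (fun a : {x // x ∈ s} => (⟨f a, himg a⟩ : {x // x ∈ s.image f})) := by
    constructor
    · intro a b hab
      exact Subtype.ext (hf a.2 b.2 (by simpa using congrArg Subtype.val hab))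
    · rintro ⟨y, hy⟩
      obtain ⟨x, hx, rfl⟩ := Finset.mem_image.mp hy
      exact ⟨⟨x, hx⟩, rfl⟩
  let e : {x // x ∈ s} ≃ {x // x ∈ s.image f} := Equiv.ofBijective _ hbij
  have hcard : Fintype.card {x // ¬ x ∈ s} = Fintype.card {x // ¬ x ∈ s.image f} := by
    rw [Fintype.card_subtype_compl, Fintype.card_subtype_compl, Fintype.card_coe,
      Fintype.card_coe, Finset.card_image_of_injOn hf]
  have e' : {x // ¬ x ∈ s} ≃ {x // ¬ x ∈ s.image f} := Fintype.equivOfCardEq hcard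
  set σ₀ : Perm α := Equiv.subtypeCongr e e' with hσ₀
  have hext : ∀ i ∈ s, σ₀ i = f i := by
    intro i hi
    rw [hσ₀]
    unfold Equiv.subtypeCongr
    simp [hi]
    rfl
  rw [← count_fix (α := α) s]
  apply Finset.card_bij' (fun σ _ => σ₀⁻¹ * σ) (fun τ _ => σ₀ * τ)
  · intro σ hσ
    simp only [Finset.mem_filter, Finset.mem_univ, true_and] at hσ ⊢
    intro i hi
    simp [Equiv.Perm.mul_apply, hσ i hi, ← hext i hi]
  · intro τ hτ
    simp only [Finset.mem_filter, Finset.mem_univ, true_and] at hτ ⊢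
    intro i hi
    simp [Equiv.Perm.mul_apply, hτ i hi, hext i hi]
  · intro σ _; simp
  · intro τ _; simp

theorem count2 {n : ℕ} {x₁ x₂ y₁ y₂ : Fin n} (hx : x₁ ≠ x₂) (hy : y₁ ≠ y₂) :
    (univ.filter fun σ : Perm (Fin n) => σ x₁ = y₁ ∧ σ x₂ = y₂).card = (n - 2).factorial := by
  classical
  set f : Fin n → Fin n := fun i => if i = x₁ then y₁ else y₂ with hfdef
  have hinj : Set.InjOn f ({x₁, x₂} : Finset (Fin n)) := by
    intro a ha b hb hab
    simp only [Finset.coe_insert, Set.mem_insert_iff, Finset.coe_singleton,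
      Set.mem_singleton_iff] at ha hb
    rcases ha with rfl | rfl <;> rcases hb with rfl | rfl <;> simp_all [f, hx.symm]
  have key := count_ext ({x₁, x₂} : Finset (Fin n)) f hinj
  have hcard : ({x₁, x₂} : Finset (Fin n)).card = 2 := by
    rw [Finset.card_insert_of_notMem (by simp [hx]), Finset.card_singleton]
  rw [hcard, Fintype.card_fin] at key
  rw [← key]
  congr 1
  ext σ
  simp [Finset.mem_filter, Finset.forall_mem_insert, f, hx.symm, hx]

theorem count3 {n : ℕ} {x₁ x₂ x₃ y₁ y₂ y₃ : Fin n} (hx12 : x₁ ≠ x₂) (hx13 : x₁ ≠ x₃)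
    (hx23 : x₂ ≠ x₃) (hy12 : y₁ ≠ y₂) (hy13 : y₁ ≠ y₃) (hy23 : y₂ ≠ y₃) :
    (univ.filter fun σ : Perm (Fin n) => σ x₁ = y₁ ∧ σ x₂ = y₂ ∧ σ x₃ = y₃).card
      = (n - 3).factorial := by
  classical
  set f : Fin n → Fin n := fun i => if i = x₁ then y₁ else if i = x₂ then y₂ else y₃ with hfdef
  have hinj : Set.InjOn f ({x₁, x₂, x₃} : Finset (Fin n)) := by
    intro a ha b hb hab
    simp only [Finset.coe_insert, Set.mem_insert_iff, Finset.coe_singleton,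
      Set.mem_singleton_iff] at ha hb
    rcases ha with rfl | rfl | rfl <;> rcases hb with rfl | rfl | rfl <;>
      simp_all [f, hx12.symm, hx13.symm, hx23.symm]
  have key := count_ext ({x₁, x₂, x₃} : Finset (Fin n)) f hinj
  have hcard : ({x₁, x₂, x₃} : Finset (Fin n)).card = 3 := by
    rw [Finset.card_insert_of_notMem (by simp [hx12, hx13]),
      Finset.card_insert_of_notMem (by simp [hx23]), Finset.card_singleton]
  rw [hcard, Fintype.card_fin] at key
  rw [← key]
  congr 1
  ext σ
  simp [Finset.mem_filter, Finset.forall_mem_insert, f, hx12.symm, hx13.symm, hx23.symm, hx12, hx13, hx23]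

theorem count4 {n : ℕ} {x₁ x₂ x₃ x₄ y₁ y₂ y₃ y₄ : Fin n} (hx12 : x₁ ≠ x₂) (hx13 : x₁ ≠ x₃)
    (hx14 : x₁ ≠ x₄) (hx23 : x₂ ≠ x₃) (hx24 : x₂ ≠ x₄) (hx34 : x₃ ≠ x₄)
    (hy12 : y₁ ≠ y₂) (hy13 : y₁ ≠ y₃) (hy14 : y₁ ≠ y₄) (hy23 : y₂ ≠ y₃) (hy24 : y₂ ≠ y₄)
    (hy34 : y₃ ≠ y₄) :
    (univ.filter fun σ : Perm (Fin n) => σ x₁ = y₁ ∧ σ x₂ = y₂ ∧ σ x₃ = y₃ ∧ σ x₄ = y₄).card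
      = (n - 4).factorial := by
  classical
  set f : Fin n → Fin n :=
    fun i => if i = x₁ then y₁ else if i = x₂ then y₂ else if i = x₃ then y₃ else y₄ with hfdef
  have hinj : Set.InjOn f ({x₁, x₂, x₃, x₄} : Finset (Fin n)) := by
    intro a ha b hb hab
    simp only [Finset.coe_insert, Set.mem_insert_iff, Finset.coe_singleton,
      Set.mem_singleton_iff] at ha hb
    rcases ha with rfl | rfl | rfl | rfl <;> rcases hb with rfl | rfl | rfl | rfl <;>
      simp_all [f, hx12.symm, hx13.symm, hx14.symm, hx23.symm, hx24.symm, hx34.symm]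
  have key := count_ext ({x₁, x₂, x₃, x₄} : Finset (Fin n)) f hinj
  have hcard : ({x₁, x₂, x₃, x₄} : Finset (Fin n)).card = 4 := by
    rw [Finset.card_insert_of_notMem (by simp [hx12, hx13, hx14]),
      Finset.card_insert_of_notMem (by simp [hx23, hx24]),
      Finset.card_insert_of_notMem (by simp [hx34]), Finset.card_singleton]
  rw [hcard, Fintype.card_fin] at key
  rw [← key]
  congr 1
  ext σ
  simp [Finset.mem_filter, Finset.forall_mem_insert, f, hx12.symm, hx13.symm, hx14.symm, hx23.symm, hx24.symm,
    hx34.symm, hx12, hx13, hx14, hx23, hx24, hx34]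

theorem pairs_card {n : ℕ} (x y : Fin n) (hxy : x ≠ y) :
    2 * (univ.filter fun z : Fin n × Fin n =>
        z.2 < z.1 ∧ z.1 ≠ x ∧ z.1 ≠ y ∧ z.2 ≠ x ∧ z.2 ≠ y).card
      = (n - 2) * (n - 3) := by
  classical
  set s : Finset (Fin n) := univ.filter (fun a => a ≠ x ∧ a ≠ y) with hs
  have hscard : s.card = n - 2 := by
    have h1 : s = (univ.erase x).erase y := by
      ext a; simp [hs]; tauto
    rw [h1, Finset.card_erase_of_mem (by simp [hxy.symm]),
      Finset.card_erase_of_mem (Finset.mem_univ x), Finset.card_univ, Fintype.card_fin]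
    omega
  have hA : (univ.filter fun z : Fin n × Fin n =>
      z.2 < z.1 ∧ z.1 ≠ x ∧ z.1 ≠ y ∧ z.2 ≠ x ∧ z.2 ≠ y)
      = (s ×ˢ s).filter (fun z => z.2 < z.1) := by
    ext z; simp [hs, Finset.mem_product]; tauto
  have hcardeq : ((s ×ˢ s).filter (fun z => z.2 < z.1)).card
      = ((s ×ˢ s).filter (fun z => z.1 < z.2)).card := by
    apply Finset.card_bij' (fun z _ => z.swap) (fun z _ => z.swap)
    · intro z _; rfl
    · intro z _; rfl
    · intro z hz; simp only [Finset.mem_filter, Finset.mem_product] at hz ⊢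
      exact ⟨⟨hz.1.2, hz.1.1⟩, hz.2⟩
    · intro z hz; simp only [Finset.mem_filter, Finset.mem_product] at hz ⊢
      exact ⟨⟨hz.1.2, hz.1.1⟩, hz.2⟩
  have hunion : ((s ×ˢ s).filter (fun z => z.2 < z.1)) ∪ ((s ×ˢ s).filter (fun z => z.1 < z.2))
      = s.offDiag := by
    ext z
    simp only [Finset.mem_union, Finset.mem_filter, Finset.mem_product, Finset.mem_offDiag]
    constructor
    · rintro (⟨⟨h1, h2⟩, h3⟩ | ⟨⟨h1, h2⟩, h3⟩)
      · exact ⟨h1, h2, (ne_of_lt h3).symm⟩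
      · exact ⟨h1, h2, ne_of_lt h3⟩
    · rintro ⟨h1, h2, h3⟩
      rcases lt_or_gt_of_ne h3 with h | h
      · exact Or.inr ⟨⟨h1, h2⟩, h⟩
      · exact Or.inl ⟨⟨h1, h2⟩, h⟩
  have hdisj : Disjoint ((s ×ˢ s).filter (fun z => z.2 < z.1))
      ((s ×ˢ s).filter (fun z => z.1 < z.2)) := by
    rw [Finset.disjoint_left]
    intro z hz1 hz2
    simp only [Finset.mem_filter] at hz1 hz2
    exact absurd hz2.2 (not_lt_of_gt hz1.2)
  have hsum := Finset.card_union_of_disjoint hdisj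
  rw [hunion, Finset.offDiag_card, ← hcardeq] at hsum
  rw [hA]
  have hm : (n-2) * (n-2) - (n-2) = (n-2) * (n - 3) := by
    cases h : n - 2 with
    | zero => simp
    | succ k =>
      have h3 : n - 3 = k := by omega
      rw [h3]
      have h4 : (k+1) * (k+1) = (k+1) * k + (k+1) := by ring
      omega
  rw [hscard, hm] at hsum
  omega

section CaseLemmas
variable {n : ℕ} {i₁ j₁ i₂ j₂ : Fin n}

theorem caseB (h₁ : i₁ < j₁) (h₂ : i₂ < j₂) :
    (univ.filter fun σ : Perm (Fin n) =>
        (σ⁻¹ j₁ < σ⁻¹ i₁) ∧ σ i₂ = j₁ ∧ σ j₂ = i₁).card = (n - 2).factorial := by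
  rw [← count2 (x₁ := i₂) (x₂ := j₂) (y₁ := j₁) (y₂ := i₁) h₂.ne h₁.ne']
  congr 1
  ext σ
  simp only [Finset.mem_filter, Finset.mem_univ, true_and]
  constructor
  · rintro ⟨_, h⟩; exact h
  · rintro ⟨hc1, hc2⟩
    refine ⟨?_, hc1, hc2⟩
    have e1 : σ⁻¹ j₁ = i₂ := by rw [Equiv.Perm.inv_eq_iff_eq]; exact hc1.symm
    have e2 : σ⁻¹ i₁ = j₂ := by rw [Equiv.Perm.inv_eq_iff_eq]; exact hc2.symm
    rw [e1, e2]; exact h₂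

theorem caseC (h₁ : i₁ < j₁) (h₂ : i₂ < j₂) {v : Fin n} (hv : v < i₁) :
    (univ.filter fun σ : Perm (Fin n) =>
        (σ⁻¹ j₁ < σ⁻¹ i₁) ∧ σ i₂ = i₁ ∧ σ j₂ = v).card
      = (i₂ : ℕ) * (n - 3).factorial := by
  classical
  rw [Finset.card_eq_sum_card_fiberwise (f := fun σ => σ⁻¹ j₁) (t := univ)
    (fun σ _ => mem_univ _)]
  have hfib : ∀ p : Fin n,
      ((univ.filter fun σ : Perm (Fin n) =>
        (σ⁻¹ j₁ < σ⁻¹ i₁) ∧ σ i₂ = i₁ ∧ σ j₂ = v).filter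
          fun σ => σ⁻¹ j₁ = p).card = if p < i₂ then (n - 3).factorial else 0 := by
    intro p
    rw [Finset.filter_filter]
    split_ifs with hp
    · rw [← count3 (x₁ := i₂) (x₂ := j₂) (x₃ := p) (y₁ := i₁) (y₂ := v) (y₃ := j₁)
        h₂.ne (ne_of_gt hp) (ne_of_gt (hp.trans h₂))
        (ne_of_gt hv) h₁.ne (ne_of_lt (hv.trans h₁))]
      congr 1
      ext σ
      simp only [Finset.mem_filter, Finset.mem_univ, true_and]
      constructor
      · rintro ⟨⟨_, hc1, hc2⟩, hc3⟩
        exact ⟨hc1, hc2, by rw [← hc3]; exact σ.apply_symm_apply j₁⟩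
      · rintro ⟨hc1, hc2, hc3⟩
        have e1 : σ⁻¹ i₁ = i₂ := by rw [Equiv.Perm.inv_eq_iff_eq]; exact hc1.symm
        have e2 : σ⁻¹ j₁ = p := by rw [Equiv.Perm.inv_eq_iff_eq]; exact hc3.symm
        exact ⟨⟨by rw [e1, e2]; exact hp, hc1, hc2⟩, e2⟩
    · rw [Finset.card_eq_zero, Finset.filter_eq_empty_iff]
      rintro σ _ ⟨⟨hA, hc1, _⟩, hc3⟩
      have e1 : σ⁻¹ i₁ = i₂ := by rw [Equiv.Perm.inv_eq_iff_eq]; exact hc1.symm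
      rw [e1, hc3] at hA
      exact hp hA
  rw [Finset.sum_congr rfl fun p _ => hfib p, Finset.sum_ite, Finset.sum_const,
    Finset.sum_const_zero, add_zero, smul_eq_mul]
  congr 1
  have h : (univ.filter fun p : Fin n => p < i₂) = Finset.Iio i₂ := by ext p; simp
  rw [h, Fin.card_Iio]

theorem caseD (h₁ : i₁ < j₁) (h₂ : i₂ < j₂) {v : Fin n} (hv : v < j₁) (hvi : v ≠ i₁) :
    (univ.filter fun σ : Perm (Fin n) =>
        (σ⁻¹ j₁ < σ⁻¹ i₁) ∧ σ i₂ = j₁ ∧ σ j₂ = v).card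
      = (n - 1 - (i₂ : ℕ) - 1) * (n - 3).factorial := by
  classical
  rw [Finset.card_eq_sum_card_fiberwise (f := fun σ => σ⁻¹ i₁) (t := univ)
    (fun σ _ => mem_univ _)]
  have hfib : ∀ p : Fin n,
      ((univ.filter fun σ : Perm (Fin n) =>
        (σ⁻¹ j₁ < σ⁻¹ i₁) ∧ σ i₂ = j₁ ∧ σ j₂ = v).filter
          fun σ => σ⁻¹ i₁ = p).card
        = if i₂ < p ∧ p ≠ j₂ then (n - 3).factorial else 0 := by
    intro p
    rw [Finset.filter_filter]
    split_ifs with hp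
    · rw [← count3 (x₁ := i₂) (x₂ := j₂) (x₃ := p) (y₁ := j₁) (y₂ := v) (y₃ := i₁)
        h₂.ne (ne_of_lt hp.1) (Ne.symm hp.2)
        (ne_of_gt hv) h₁.ne' hvi]
      congr 1
      ext σ
      simp only [Finset.mem_filter, Finset.mem_univ, true_and]
      constructor
      · rintro ⟨⟨_, hc1, hc2⟩, hc3⟩
        exact ⟨hc1, hc2, by rw [← hc3]; exact σ.apply_symm_apply i₁⟩
      · rintro ⟨hc1, hc2, hc3⟩
        have e1 : σ⁻¹ j₁ = i₂ := by rw [Equiv.Perm.inv_eq_iff_eq]; exact hc1.symm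
        have e2 : σ⁻¹ i₁ = p := by rw [Equiv.Perm.inv_eq_iff_eq]; exact hc3.symm
        exact ⟨⟨by rw [e1, e2]; exact hp.1, hc1, hc2⟩, e2⟩
    · rw [Finset.card_eq_zero, Finset.filter_eq_empty_iff]
      rintro σ _ ⟨⟨hA, hc1, hc2⟩, hc3⟩
      have e1 : σ⁻¹ j₁ = i₂ := by rw [Equiv.Perm.inv_eq_iff_eq]; exact hc1.symm
      apply hp
      constructor
      · rw [← e1, ← hc3]; exact hA
      · intro hpj
        rw [hpj] at hc3
        rw [Equiv.Perm.inv_eq_iff_eq] at hc3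
        rw [hc2] at hc3
        exact hvi hc3.symm
  rw [Finset.sum_congr rfl fun p _ => hfib p, Finset.sum_ite, Finset.sum_const,
    Finset.sum_const_zero, add_zero, smul_eq_mul]
  congr 1
  have h : (univ.filter fun p : Fin n => i₂ < p ∧ p ≠ j₂) = (Finset.Ioi i₂).erase j₂ := by
    ext p; simp [Finset.mem_erase]; tauto
  rw [h, Finset.card_erase_of_mem (by simp [h₂]), Fin.card_Ioi]

theorem caseE (h₁ : i₁ < j₁) (h₂ : i₂ < j₂) {u : Fin n} (hu : i₁ < u) (huj : u ≠ j₁) :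
    (univ.filter fun σ : Perm (Fin n) =>
        (σ⁻¹ j₁ < σ⁻¹ i₁) ∧ σ i₂ = u ∧ σ j₂ = i₁).card
      = ((j₂ : ℕ) - 1) * (n - 3).factorial := by
  classical
  rw [Finset.card_eq_sum_card_fiberwise (f := fun σ => σ⁻¹ j₁) (t := univ)
    (fun σ _ => mem_univ _)]
  have hfib : ∀ p : Fin n,
      ((univ.filter fun σ : Perm (Fin n) =>
        (σ⁻¹ j₁ < σ⁻¹ i₁) ∧ σ i₂ = u ∧ σ j₂ = i₁).filter
          fun σ => σ⁻¹ j₁ = p).card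
        = if p < j₂ ∧ p ≠ i₂ then (n - 3).factorial else 0 := by
    intro p
    rw [Finset.filter_filter]
    split_ifs with hp
    · rw [← count3 (x₁ := i₂) (x₂ := j₂) (x₃ := p) (y₁ := u) (y₂ := i₁) (y₃ := j₁)
        h₂.ne (Ne.symm hp.2) (ne_of_gt hp.1)
        (ne_of_gt hu) huj h₁.ne]
      congr 1
      ext σ
      simp only [Finset.mem_filter, Finset.mem_univ, true_and]
      constructor
      · rintro ⟨⟨_, hc1, hc2⟩, hc3⟩
        exact ⟨hc1, hc2, by rw [← hc3]; exact σ.apply_symm_apply j₁⟩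
      · rintro ⟨hc1, hc2, hc3⟩
        have e1 : σ⁻¹ i₁ = j₂ := by rw [Equiv.Perm.inv_eq_iff_eq]; exact hc2.symm
        have e2 : σ⁻¹ j₁ = p := by rw [Equiv.Perm.inv_eq_iff_eq]; exact hc3.symm
        exact ⟨⟨by rw [e1, e2]; exact hp.1, hc1, hc2⟩, e2⟩
    · rw [Finset.card_eq_zero, Finset.filter_eq_empty_iff]
      rintro σ _ ⟨⟨hA, hc1, hc2⟩, hc3⟩
      have e1 : σ⁻¹ i₁ = j₂ := by rw [Equiv.Perm.inv_eq_iff_eq]; exact hc2.symm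
      apply hp
      constructor
      · rw [← e1, ← hc3]; exact hA
      · intro hpi
        rw [hpi, Equiv.Perm.inv_eq_iff_eq, hc1] at hc3
        exact huj hc3.symm
  rw [Finset.sum_congr rfl fun p _ => hfib p, Finset.sum_ite, Finset.sum_const,
    Finset.sum_const_zero, add_zero, smul_eq_mul]
  congr 1
  have h : (univ.filter fun p : Fin n => p < j₂ ∧ p ≠ i₂) = (Finset.Iio j₂).erase i₂ := by
    ext p; simp [Finset.mem_erase]; tauto
  rw [h, Finset.card_erase_of_mem (by simp [h₂]), Fin.card_Iio]

theorem caseF (h₁ : i₁ < j₁) (h₂ : i₂ < j₂) {u : Fin n} (hu : j₁ < u) :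
    (univ.filter fun σ : Perm (Fin n) =>
        (σ⁻¹ j₁ < σ⁻¹ i₁) ∧ σ i₂ = u ∧ σ j₂ = j₁).card
      = (n - 1 - (j₂ : ℕ)) * (n - 3).factorial := by
  classical
  rw [Finset.card_eq_sum_card_fiberwise (f := fun σ => σ⁻¹ i₁) (t := univ)
    (fun σ _ => mem_univ _)]
  have hfib : ∀ p : Fin n,
      ((univ.filter fun σ : Perm (Fin n) =>
        (σ⁻¹ j₁ < σ⁻¹ i₁) ∧ σ i₂ = u ∧ σ j₂ = j₁).filter
          fun σ => σ⁻¹ i₁ = p).card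
        = if j₂ < p then (n - 3).factorial else 0 := by
    intro p
    rw [Finset.filter_filter]
    split_ifs with hp
    · rw [← count3 (x₁ := i₂) (x₂ := j₂) (x₃ := p) (y₁ := u) (y₂ := j₁) (y₃ := i₁)
        h₂.ne (ne_of_lt (h₂.trans hp)) (ne_of_lt hp)
        (ne_of_gt hu) (ne_of_gt (h₁.trans hu)) h₁.ne']
      congr 1
      ext σ
      simp only [Finset.mem_filter, Finset.mem_univ, true_and]
      constructor
      · rintro ⟨⟨_, hc1, hc2⟩, hc3⟩
        exact ⟨hc1, hc2, by rw [← hc3]; exact σ.apply_symm_apply i₁⟩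
      · rintro ⟨hc1, hc2, hc3⟩
        have e1 : σ⁻¹ j₁ = j₂ := by rw [Equiv.Perm.inv_eq_iff_eq]; exact hc2.symm
        have e2 : σ⁻¹ i₁ = p := by rw [Equiv.Perm.inv_eq_iff_eq]; exact hc3.symm
        exact ⟨⟨by rw [e1, e2]; exact hp, hc1, hc2⟩, e2⟩
    · rw [Finset.card_eq_zero, Finset.filter_eq_empty_iff]
      rintro σ _ ⟨⟨hA, hc1, hc2⟩, hc3⟩
      have e1 : σ⁻¹ j₁ = j₂ := by rw [Equiv.Perm.inv_eq_iff_eq]; exact hc2.symm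
      rw [e1, hc3] at hA
      exact hp hA
  rw [Finset.sum_congr rfl fun p _ => hfib p, Finset.sum_ite, Finset.sum_const,
    Finset.sum_const_zero, add_zero, smul_eq_mul]
  congr 1
  have h : (univ.filter fun p : Fin n => j₂ < p) = Finset.Ioi j₂ := by ext p; simp
  rw [h, Fin.card_Ioi]

theorem caseS (h₁ : i₁ < j₁) (h₂ : i₂ < j₂) {u v : Fin n}
    (hui : u ≠ i₁) (huj : u ≠ j₁) (hvi : v ≠ i₁) (hvj : v ≠ j₁) (hvu : v < u) :
    (univ.filter fun σ : Perm (Fin n) =>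
        (σ⁻¹ j₁ < σ⁻¹ i₁) ∧ σ i₂ = u ∧ σ j₂ = v).card
      = (univ.filter fun z : Fin n × Fin n =>
          z.2 < z.1 ∧ z.1 ≠ i₂ ∧ z.1 ≠ j₂ ∧ z.2 ≠ i₂ ∧ z.2 ≠ j₂).card
        * (n - 4).factorial := by
  classical
  rw [Finset.card_eq_sum_card_fiberwise (f := fun σ => (σ⁻¹ i₁, σ⁻¹ j₁))
    (t := univ) (fun σ _ => mem_univ _)]
  have hfib : ∀ z : Fin n × Fin n,
      ((univ.filter fun σ : Perm (Fin n) =>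
        (σ⁻¹ j₁ < σ⁻¹ i₁) ∧ σ i₂ = u ∧ σ j₂ = v).filter
          fun σ => (σ⁻¹ i₁, σ⁻¹ j₁) = z).card
        = if z.2 < z.1 ∧ z.1 ≠ i₂ ∧ z.1 ≠ j₂ ∧ z.2 ≠ i₂ ∧ z.2 ≠ j₂
            then (n - 4).factorial else 0 := by
    intro z
    rw [Finset.filter_filter]
    split_ifs with hp
    · obtain ⟨hz1, hz2, hz3, hz4, hz5⟩ := hp
      rw [← count4 (x₁ := i₂) (x₂ := j₂) (x₃ := z.1) (x₄ := z.2)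
          (y₁ := u) (y₂ := v) (y₃ := i₁) (y₄ := j₁)
        h₂.ne (Ne.symm hz2) (Ne.symm hz4) (Ne.symm hz3) (Ne.symm hz5) (ne_of_gt hz1)
        (ne_of_gt hvu) hui huj hvi hvj h₁.ne]
      congr 1
      ext σ
      simp only [Finset.mem_filter, Finset.mem_univ, true_and, Prod.ext_iff]
      constructor
      · rintro ⟨⟨_, hc1, hc2⟩, hc3, hc4⟩
        exact ⟨hc1, hc2, by rw [← hc3]; exact σ.apply_symm_apply i₁,
          by rw [← hc4]; exact σ.apply_symm_apply j₁⟩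
      · rintro ⟨hc1, hc2, hc3, hc4⟩
        have e1 : σ⁻¹ i₁ = z.1 := by rw [Equiv.Perm.inv_eq_iff_eq]; exact hc3.symm
        have e2 : σ⁻¹ j₁ = z.2 := by rw [Equiv.Perm.inv_eq_iff_eq]; exact hc4.symm
        exact ⟨⟨by rw [e1, e2]; exact hz1, hc1, hc2⟩, e1, e2⟩
    · rw [Finset.card_eq_zero, Finset.filter_eq_empty_iff]
      rintro σ _ ⟨⟨hA, hc1, hc2⟩, hc3⟩
      rw [Prod.ext_iff] at hc3
      obtain ⟨e1, e2⟩ := hc3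
      apply hp
      refine ⟨by rw [← e1, ← e2]; exact hA, ?_, ?_, ?_, ?_⟩
      · intro h
        have e1' : σ⁻¹ i₁ = i₂ := by rw [← h]; exact e1
        rw [Equiv.Perm.inv_eq_iff_eq, hc1] at e1'
        exact hui e1'.symm
      · intro h
        have e1' : σ⁻¹ i₁ = j₂ := by rw [← h]; exact e1
        rw [Equiv.Perm.inv_eq_iff_eq, hc2] at e1'
        exact hvi e1'.symm
      · intro h
        have e2' : σ⁻¹ j₁ = i₂ := by rw [← h]; exact e2
        rw [Equiv.Perm.inv_eq_iff_eq, hc1] at e2'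
        exact huj e2'.symm
      · intro h
        have e2' : σ⁻¹ j₁ = j₂ := by rw [← h]; exact e2
        rw [Equiv.Perm.inv_eq_iff_eq, hc2] at e2'
        exact hvj e2'.symm
  rw [Finset.sum_congr rfl fun z _ => hfib z, Finset.sum_ite, Finset.sum_const,
    Finset.sum_const_zero, add_zero, smul_eq_mul]

end CaseLemmas

section Main
variable {n : ℕ} {i₁ j₁ i₂ j₂ : Fin n}

theorem fiber_eq (h₁ : i₁ < j₁) (h₂ : i₂ < j₂) (x : Fin n × Fin n) :
    ((univ.filter fun σ : Perm (Fin n) => σ⁻¹ j₁ < σ⁻¹ i₁ ∧ σ j₂ < σ i₂).filter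
      fun σ => (σ i₂, σ j₂) = x).card
    = (if x.1 = j₁ ∧ x.2 = i₁ then (n - 2).factorial else 0)
    + (if x.1 = i₁ ∧ x.2 < i₁ then (i₂ : ℕ) * (n - 3).factorial else 0)
    + (if x.1 = j₁ ∧ x.2 < j₁ ∧ x.2 ≠ i₁ then
        (n - 1 - (i₂ : ℕ) - 1) * (n - 3).factorial else 0)
    + (if x.2 = i₁ ∧ i₁ < x.1 ∧ x.1 ≠ j₁ then ((j₂ : ℕ) - 1) * (n - 3).factorial else 0)
    + (if x.2 = j₁ ∧ j₁ < x.1 then (n - 1 - (j₂ : ℕ)) * (n - 3).factorial else 0)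
    + (if x.2 < x.1 ∧ x.1 ≠ i₁ ∧ x.1 ≠ j₁ ∧ x.2 ≠ i₁ ∧ x.2 ≠ j₁ then
        (univ.filter fun z : Fin n × Fin n =>
          z.2 < z.1 ∧ z.1 ≠ i₂ ∧ z.1 ≠ j₂ ∧ z.2 ≠ i₂ ∧ z.2 ≠ j₂).card
          * (n - 4).factorial else 0) := by
  classical
  obtain ⟨u, v⟩ := x
  rw [Finset.filter_filter]
  simp only
  have HIJ : (i₁ : ℕ) < (j₁ : ℕ) := h₁
  by_cases hvu : v < u
  · have hset : (univ.filter fun σ : Perm (Fin n) =>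
        (σ⁻¹ j₁ < σ⁻¹ i₁ ∧ σ j₂ < σ i₂) ∧ (σ i₂, σ j₂) = (u, v))
        = univ.filter fun σ : Perm (Fin n) => (σ⁻¹ j₁ < σ⁻¹ i₁) ∧ σ i₂ = u ∧ σ j₂ = v := by
      ext σ
      simp only [Finset.mem_filter, Finset.mem_univ, true_and, Prod.mk.injEq]
      constructor
      · rintro ⟨⟨hA, _⟩, h1, h2⟩; exact ⟨hA, h1, h2⟩
      · rintro ⟨hA, h1, h2⟩; exact ⟨⟨hA, by rw [h1, h2]; exact hvu⟩, h1, h2⟩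
    rw [hset]
    have HVU : (v : ℕ) < (u : ℕ) := hvu
    by_cases hu1 : u = i₁
    · have HU : (u : ℕ) = i₁ := congrArg Fin.val hu1
      rw [hu1] at hvu
      rw [hu1, caseC h₁ h₂ hvu]
      simp only [Fin.ext_iff, Fin.lt_def, ne_eq]; try simp only [eq_self_iff_true, lt_self_iff_false, not_true, not_false_iff, true_and, and_true, false_and, and_false, if_true, if_false]
      first | omega | (split_ifs <;> omega)
    · have HU1 : (u : ℕ) ≠ i₁ := fun h => hu1 (Fin.val_injective h)
      by_cases hu2 : u = j₁
      · have HU : (u : ℕ) = j₁ := congrArg Fin.val hu2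
        by_cases hv1 : v = i₁
        · have HV : (v : ℕ) = i₁ := congrArg Fin.val hv1
          rw [hu2, hv1, caseB h₁ h₂]
          simp only [Fin.ext_iff, Fin.lt_def, ne_eq]; try simp only [eq_self_iff_true, lt_self_iff_false, not_true, not_false_iff, true_and, and_true, false_and, and_false, if_true, if_false]
          first | omega | (split_ifs <;> omega)
        · have HV1 : (v : ℕ) ≠ i₁ := fun h => hv1 (Fin.val_injective h)
          have hvj : v < j₁ := hu2 ▸ hvu
          rw [hu2, caseD h₁ h₂ hvj hv1]
          simp only [Fin.ext_iff, Fin.lt_def, ne_eq]; try simp only [eq_self_iff_true, lt_self_iff_false, not_true, not_false_iff, true_and, and_true, false_and, and_false, if_true, if_false]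
          first | omega | (split_ifs <;> omega)
      · have HU2 : (u : ℕ) ≠ j₁ := fun h => hu2 (Fin.val_injective h)
        by_cases hv1 : v = i₁
        · have HV : (v : ℕ) = i₁ := congrArg Fin.val hv1
          have hiu : i₁ < u := hv1 ▸ hvu
          rw [hv1, caseE h₁ h₂ hiu hu2]
          simp only [Fin.ext_iff, Fin.lt_def, ne_eq]; try simp only [eq_self_iff_true, lt_self_iff_false, not_true, not_false_iff, true_and, and_true, false_and, and_false, if_true, if_false]
          first | omega | (split_ifs <;> omega)
        · have HV1 : (v : ℕ) ≠ i₁ := fun h => hv1 (Fin.val_injective h)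
          by_cases hv2 : v = j₁
          · have HV : (v : ℕ) = j₁ := congrArg Fin.val hv2
            have hju : j₁ < u := hv2 ▸ hvu
            rw [hv2, caseF h₁ h₂ hju]
            simp only [Fin.ext_iff, Fin.lt_def, ne_eq]; try simp only [eq_self_iff_true, lt_self_iff_false, not_true, not_false_iff, true_and, and_true, false_and, and_false, if_true, if_false]
            first | omega | (split_ifs <;> omega)
          · have HV2 : (v : ℕ) ≠ j₁ := fun h => hv2 (Fin.val_injective h)
            rw [caseS h₁ h₂ hu1 hu2 hv1 hv2 hvu]
            simp only [Fin.ext_iff, Fin.lt_def, ne_eq]; try simp only [eq_self_iff_true, lt_self_iff_false, not_true, not_false_iff, true_and, and_true, false_and, and_false, if_true, if_false]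
            first | omega | (split_ifs <;> omega)
  · have HVU : ¬ (v : ℕ) < (u : ℕ) := hvu
    have hset : (univ.filter fun σ : Perm (Fin n) =>
        (σ⁻¹ j₁ < σ⁻¹ i₁ ∧ σ j₂ < σ i₂) ∧ (σ i₂, σ j₂) = (u, v)) = ∅ := by
      rw [Finset.filter_eq_empty_iff]
      rintro σ _ ⟨⟨_, hB⟩, hc⟩
      rw [Prod.mk.injEq] at hc
      rw [hc.1, hc.2] at hB
      exact hvu hB
    rw [hset, Finset.card_empty]
    simp only [Fin.ext_iff, Fin.lt_def, ne_eq]; try simp only [eq_self_iff_true, lt_self_iff_false, not_true, not_false_iff, true_and, and_true, false_and, and_false, if_true, if_false]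
    first | omega | (split_ifs <;> omega)

end Main

set_option maxHeartbeats 2000000 in
theorem stmt_5 (n : ℕ) (hn : 4 ≤ n) (i₁ j₁ i₂ j₂ : Fin n)
    (h₁ : i₁ < j₁) (h₂ : i₂ < j₂) :
    (Finset.univ.filter
      (fun σ : Equiv.Perm (Fin n) => σ⁻¹ j₁ < σ⁻¹ i₁ ∧ σ j₂ < σ i₂)).card =
      (n - 3).factorial * (((j₁ : ℕ) - i₁ - 1) * ((j₂ : ℕ) - i₂ - 1)) +
        (n - 2).factorial * (n ^ 2 - n + 2) / 4 := by
  classical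
  rw [Finset.card_eq_sum_card_fiberwise (f := fun σ : Perm (Fin n) => (σ i₂, σ j₂))
    (t := univ) (fun σ _ => mem_univ _)]
  rw [Finset.sum_congr rfl (fun x _ => fiber_eq h₁ h₂ x)]
  simp only [Finset.sum_add_distrib]
  simp only [Finset.sum_ite, Finset.sum_const, Finset.sum_const_zero, add_zero, smul_eq_mul]
  -- class cardinalities
  have hc1 : (univ.filter fun x : Fin n × Fin n => x.1 = j₁ ∧ x.2 = i₁).card = 1 := by
    have h : (univ.filter fun x : Fin n × Fin n => x.1 = j₁ ∧ x.2 = i₁) = {(j₁, i₁)} := by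
      ext x; simp [Prod.ext_iff]
    rw [h, Finset.card_singleton]
  have hc2 : (univ.filter fun x : Fin n × Fin n => x.1 = i₁ ∧ x.2 < i₁).card = (i₁ : ℕ) := by
    have h : (univ.filter fun x : Fin n × Fin n => x.1 = i₁ ∧ x.2 < i₁)
        = {i₁} ×ˢ Finset.Iio i₁ := by
      ext ⟨a, b⟩; simp [Finset.mem_product]; aesop
    rw [h, Finset.card_product, Finset.card_singleton, Fin.card_Iio, one_mul]
  have hc3 : (univ.filter fun x : Fin n × Fin n => x.1 = j₁ ∧ x.2 < j₁ ∧ x.2 ≠ i₁).card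
      = (j₁ : ℕ) - 1 := by
    have h : (univ.filter fun x : Fin n × Fin n => x.1 = j₁ ∧ x.2 < j₁ ∧ x.2 ≠ i₁)
        = {j₁} ×ˢ ((Finset.Iio j₁).erase i₁) := by
      ext ⟨a, b⟩; simp [Finset.mem_product, Finset.mem_erase]; aesop
    rw [h, Finset.card_product, Finset.card_singleton, one_mul,
      Finset.card_erase_of_mem (by simp [h₁]), Fin.card_Iio]
  have hc4 : (univ.filter fun x : Fin n × Fin n => x.2 = i₁ ∧ i₁ < x.1 ∧ x.1 ≠ j₁).card
      = n - 1 - (i₁ : ℕ) - 1 := by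
    have h : (univ.filter fun x : Fin n × Fin n => x.2 = i₁ ∧ i₁ < x.1 ∧ x.1 ≠ j₁)
        = ((Finset.Ioi i₁).erase j₁) ×ˢ {i₁} := by
      ext ⟨a, b⟩; simp [Finset.mem_product, Finset.mem_erase]; aesop
    rw [h, Finset.card_product, Finset.card_singleton, mul_one,
      Finset.card_erase_of_mem (by simp [h₁]), Fin.card_Ioi]
  have hc5 : (univ.filter fun x : Fin n × Fin n => x.2 = j₁ ∧ j₁ < x.1).card
      = n - 1 - (j₁ : ℕ) := by
    have h : (univ.filter fun x : Fin n × Fin n => x.2 = j₁ ∧ j₁ < x.1)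
        = (Finset.Ioi j₁) ×ˢ {j₁} := by
      ext ⟨a, b⟩; simp [Finset.mem_product]; aesop
    rw [h, Finset.card_product, Finset.card_singleton, mul_one, Fin.card_Ioi]
  rw [hc1, hc2, hc3, hc4, hc5]
  have hT1 := pairs_card i₁ j₁ h₁.ne
  have hT2 := pairs_card i₂ j₂ h₂.ne
  set C1 := (univ.filter fun z : Fin n × Fin n =>
      z.2 < z.1 ∧ z.1 ≠ i₁ ∧ z.1 ≠ j₁ ∧ z.2 ≠ i₁ ∧ z.2 ≠ j₁).card with hC1
  set C2 := (univ.filter fun z : Fin n × Fin n =>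
      z.2 < z.1 ∧ z.1 ≠ i₂ ∧ z.1 ≠ j₂ ∧ z.2 ≠ i₂ ∧ z.2 ≠ j₂).card with hC2
  -- arithmetic
  have e3 : (n - 3).factorial = (n - 3) * (n - 4).factorial := by
    rw [show n - 3 = (n - 4) + 1 by omega, Nat.factorial_succ]
  have e2 : (n - 2).factorial = (n - 2) * ((n - 3) * (n - 4).factorial) := by
    rw [show n - 2 = (n - 3) + 1 by omega, Nat.factorial_succ, ← e3,
      show n - 3 + 1 = n - 2 by omega]
  have hdvd : 4 ∣ (n - 2).factorial * (n ^ 2 - n + 2) := by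
    obtain ⟨s, hs⟩ : 2 ∣ (n - 2).factorial := Nat.dvd_factorial (by norm_num) (by omega)
    obtain ⟨t, ht⟩ : 2 ∣ n ^ 2 - n + 2 := by
      obtain ⟨r, hr⟩ | ⟨r, hr⟩ := Nat.even_or_odd n
      · have e : n ^ 2 = 4 * (r * r) := by rw [hr]; ring
        have hrr : r ≤ 2 * (r * r) := by nlinarith
        exact ⟨2 * (r * r) - r + 1, by omega⟩
      · have e : n ^ 2 = 2 * (2 * (r * r)) + 4 * r + 1 := by rw [hr]; ring
        exact ⟨2 * (r * r) + r + 1, by omega⟩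
    exact ⟨s * t, by rw [hs, ht]; ring⟩
  obtain ⟨K, hK⟩ := hdvd
  rw [hK, Nat.mul_div_cancel_left K (by norm_num)]
  rw [e2] at hK
  have h44 : 4 * (C1 * (C2 * (n - 4).factorial))
      = ((n - 2) * (n - 3)) * (((n - 2) * (n - 3)) * (n - 4).factorial) := by
    rw [show 4 * (C1 * (C2 * (n - 4).factorial))
        = (2 * C1) * ((2 * C2) * (n - 4).factorial) by ring, hT1, hT2]
  apply Nat.eq_of_mul_eq_mul_left (show 0 < 4 by norm_num)
  rw [e2, e3]
  have ha : (i₁ : ℕ) < (j₁ : ℕ) := h₁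
  have hb : (j₁ : ℕ) < n := j₁.isLt
  have hcc : (i₂ : ℕ) < (j₂ : ℕ) := h₂
  have hd : (j₂ : ℕ) < n := j₂.isLt
  set Q := (n - 4).factorial with hQ
  zify [hn, ha.le, hcc.le, hb.le, hd.le,
    show 1 ≤ (j₁ : ℕ) by omega, show 1 ≤ (j₂ : ℕ) by omega,
    show 1 ≤ n by omega, show 2 ≤ n by omega, show 3 ≤ n by omega,
    show (i₁ : ℕ) ≤ n - 1 by omega, show (j₁ : ℕ) ≤ n - 1 by omega,
    show (i₂ : ℕ) ≤ n - 1 by omega, show (j₂ : ℕ) ≤ n - 1 by omega,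
    show 1 ≤ n - 1 - (i₁ : ℕ) by omega, show 1 ≤ n - 1 - (i₂ : ℕ) by omega,
    show 1 ≤ (j₁ : ℕ) - (i₁ : ℕ) by omega, show 1 ≤ (j₂ : ℕ) - (i₂ : ℕ) by omega,
    show (i₁ : ℕ) ≤ (j₁ : ℕ) - 1 by omega, show (i₂ : ℕ) ≤ (j₂ : ℕ) - 1 by omega,
    show n ≤ n ^ 2 by nlinarith] at hK h44 ⊢
  linear_combination h44 + hK
end

section
/- Let n ≥ 4 and let i₁ < j₁ and i₂ < j₂ be indices in {1,…,n}. Then the number of permutations σ ∈ S_n satisfying σ⁻¹(i₁) > σ⁻¹(j₁) and σ(j₂) > σ(i₂) equals (n-2)!·(n²-n-2)/4 − (n-3)!·(j₁-i₁-1)(j₂-i₂-1). -/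
open Finset Equiv

lemma aux_card_extend {α : Type*} [Fintype α] [DecidableEq α] (s : Finset α) (f : α → α)
    (hinj : Set.InjOn f ↑s) :
    (Finset.univ.filter (fun σ : Equiv.Perm α => ∀ x ∈ s, σ x = f x)).card
      = (Fintype.card α - s.card).factorial := by
  classical
  set S : Set α := ↑s with hS
  let e₀ : S ≃ (f '' S) := Equiv.Set.imageOfInjOn f S hinj
  have he₀ : ∀ x : S, (e₀ x : α) = f x := fun x => rfl
  have h1 : {σ : Equiv.Perm α // ∀ x ∈ s, σ x = f x} ≃ {e : α ≃ α // ∀ x : S, e x = e₀ x} := by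
    apply Equiv.subtypeEquivRight
    intro e
    constructor
    · rintro h ⟨x, hx⟩; rw [he₀]; exact h x hx
    · intro h x hx; have := h ⟨x, hx⟩; rwa [he₀] at this
  have h2 := (Equiv.Set.compl e₀)
  have hcard : Fintype.card {σ : Equiv.Perm α // ∀ x ∈ s, σ x = f x}
      = Fintype.card ((Sᶜ : Set α) ≃ ((f '' S)ᶜ : Set α)) :=
    Fintype.card_congr (h1.trans h2)
  have hcS : Fintype.card S = s.card := by simp [hS]
  have hc1 : Fintype.card (Sᶜ : Set α) = Fintype.card α - s.card := by
    rw [Fintype.card_compl_set, hcS]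
  have hc2 : Fintype.card ((f '' S)ᶜ : Set α) = Fintype.card α - s.card := by
    rw [Fintype.card_compl_set, ← Fintype.card_congr e₀, hcS]
  have hcc : Fintype.card ((Sᶜ : Set α) ≃ ((f '' S)ᶜ : Set α))
      = (Fintype.card α - s.card).factorial := by
    rw [Fintype.card_equiv (Fintype.equivOfCardEq (hc1.trans hc2.symm)), hc1]
  rw [← hcc, ← hcard, Fintype.card_subtype]

lemma aux_card_two {n : ℕ} (x₁ x₂ y₁ y₂ : Fin n) (hx : x₁ ≠ x₂) (hy : y₁ ≠ y₂) :
    (Finset.univ.filter (fun σ : Equiv.Perm (Fin n) => σ x₁ = y₁ ∧ σ x₂ = y₂)).card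
      = (n - 2).factorial := by
  classical
  have h := aux_card_extend ({x₁, x₂} : Finset (Fin n))
      (fun x => if x = x₁ then y₁ else y₂) ?_
  · rw [Finset.card_insert_of_notMem (by simpa using hx), Finset.card_singleton,
      Fintype.card_fin] at h
    rw [← h]
    congr 1
    ext σ
    simp only [Finset.mem_filter, Finset.mem_univ, true_and, Finset.mem_insert,
      Finset.mem_singleton, forall_eq_or_imp, forall_eq, if_pos rfl, if_neg hx.symm]
    simp
  · intro a ha b hb hab
    simp only [Finset.coe_insert, Finset.coe_singleton, Set.mem_insert_iff,
      Set.mem_singleton_iff] at ha hb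
    rcases ha with rfl | rfl <;> rcases hb with rfl | rfl <;>
      simp_all [if_neg hx.symm, hy, hy.symm]

lemma aux_card_three {n : ℕ} (x₁ x₂ x₃ y₁ y₂ y₃ : Fin n) (h12 : x₁ ≠ x₂) (h13 : x₁ ≠ x₃)
    (h23 : x₂ ≠ x₃) (g12 : y₁ ≠ y₂) (g13 : y₁ ≠ y₃) (g23 : y₂ ≠ y₃) :
    (Finset.univ.filter (fun σ : Equiv.Perm (Fin n) => σ x₁ = y₁ ∧ σ x₂ = y₂ ∧ σ x₃ = y₃)).card
      = (n - 3).factorial := by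
  classical
  have h := aux_card_extend ({x₁, x₂, x₃} : Finset (Fin n))
      (fun x => if x = x₁ then y₁ else if x = x₂ then y₂ else y₃) ?_
  · rw [Finset.card_insert_of_notMem (by simp [h12, h13]),
      Finset.card_insert_of_notMem (by simpa using h23), Finset.card_singleton,
      Fintype.card_fin] at h
    rw [← h]
    congr 1
    ext σ
    simp only [Finset.mem_filter, Finset.mem_univ, true_and, Finset.mem_insert,
      Finset.mem_singleton, forall_eq_or_imp, forall_eq, if_pos rfl, if_neg h12.symm,
      if_neg h13.symm, if_neg h23.symm]
    simp
  · intro a ha b hb hab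
    simp only [Finset.coe_insert, Finset.coe_singleton, Set.mem_insert_iff,
      Set.mem_singleton_iff] at ha hb
    rcases ha with rfl | rfl | rfl <;> rcases hb with rfl | rfl | rfl <;>
      simp_all [if_neg h12.symm, if_neg h13.symm, if_neg h23.symm, g12, g13, g23,
        g12.symm, g13.symm, g23.symm]

lemma aux_sum_gt {n : ℕ} (c d : Fin n) (h : c < d) :
    ∑ x : Fin n, (if x ≠ c ∧ x ≠ d then (if c < x then (1:ℤ) else -1) else 0)
      = (n : ℤ) - 2 * (c : ℕ) - 2 := by
  classical
  rw [← Finset.sum_filter, ← Finset.sum_filter_add_sum_filter_not _ (fun x => c < x)]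
  have h1 : (Finset.univ.filter (fun x : Fin n => x ≠ c ∧ x ≠ d)).filter (fun x => c < x)
      = (Finset.Ioi c).erase d := by
    ext x
    simp only [Finset.mem_filter, Finset.mem_univ, true_and, Finset.mem_erase, Finset.mem_Ioi]
    constructor
    · rintro ⟨⟨_, hd⟩, hc⟩; exact ⟨hd, hc⟩
    · rintro ⟨hd, hc⟩; exact ⟨⟨ne_of_gt hc, hd⟩, hc⟩
  have h2 : (Finset.univ.filter (fun x : Fin n => x ≠ c ∧ x ≠ d)).filter (fun x => ¬ c < x)
      = Finset.Iio c := by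
    ext x
    simp only [Finset.mem_filter, Finset.mem_univ, true_and, Finset.mem_Iio, not_lt]
    constructor
    · rintro ⟨⟨hc, _⟩, hle⟩; exact lt_of_le_of_ne hle hc
    · intro hx; exact ⟨⟨ne_of_lt hx, ne_of_lt (hx.trans h)⟩, le_of_lt hx⟩
  rw [h1, h2]
  have e1 : ∀ x ∈ (Finset.Ioi c).erase d, (if c < x then (1:ℤ) else -1) = 1 := by
    intro x hx
    exact if_pos (Finset.mem_Ioi.mp (Finset.mem_erase.mp hx).2)
  have e2 : ∀ x ∈ Finset.Iio c, (if c < x then (1:ℤ) else -1) = -1 := by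
    intro x hx
    exact if_neg (not_lt.mpr (le_of_lt (Finset.mem_Iio.mp hx)))
  rw [Finset.sum_congr rfl e1, Finset.sum_congr rfl e2, Finset.sum_const, Finset.sum_const,
    Finset.card_erase_of_mem (Finset.mem_Ioi.mpr h), Fin.card_Ioi, Fin.card_Iio]
  have hd := d.isLt
  have hc : (c : ℕ) < (d : ℕ) := h
  simp only [nsmul_eq_mul, mul_one, mul_neg]
  omega

lemma aux_sum_gt' {n : ℕ} (c d : Fin n) (h : c < d) :
    ∑ x : Fin n, (if x ≠ c ∧ x ≠ d then (if d < x then (1:ℤ) else -1) else 0)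
      = (n : ℤ) - 2 * (d : ℕ) := by
  classical
  rw [← Finset.sum_filter, ← Finset.sum_filter_add_sum_filter_not _ (fun x => d < x)]
  have h1 : (Finset.univ.filter (fun x : Fin n => x ≠ c ∧ x ≠ d)).filter (fun x => d < x)
      = Finset.Ioi d := by
    ext x
    simp only [Finset.mem_filter, Finset.mem_univ, true_and, Finset.mem_Ioi]
    constructor
    · rintro ⟨_, hc⟩; exact hc
    · intro hx; exact ⟨⟨ne_of_gt (h.trans hx), ne_of_gt hx⟩, hx⟩
  have h2 : (Finset.univ.filter (fun x : Fin n => x ≠ c ∧ x ≠ d)).filter (fun x => ¬ d < x)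
      = (Finset.Iio d).erase c := by
    ext x
    simp only [Finset.mem_filter, Finset.mem_univ, true_and, Finset.mem_erase, Finset.mem_Iio,
      not_lt]
    constructor
    · rintro ⟨⟨hc, hd⟩, hle⟩; exact ⟨hc, lt_of_le_of_ne hle hd⟩
    · rintro ⟨hc, hx⟩; exact ⟨⟨hc, ne_of_lt hx⟩, le_of_lt hx⟩
  rw [h1, h2]
  have e1 : ∀ x ∈ Finset.Ioi d, (if d < x then (1:ℤ) else -1) = 1 := by
    intro x hx
    exact if_pos (Finset.mem_Ioi.mp hx)
  have e2 : ∀ x ∈ (Finset.Iio d).erase c, (if d < x then (1:ℤ) else -1) = -1 := by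
    intro x hx
    exact if_neg (not_lt.mpr (le_of_lt (Finset.mem_Iio.mp (Finset.mem_erase.mp hx).2)))
  rw [Finset.sum_congr rfl e1, Finset.sum_congr rfl e2, Finset.sum_const, Finset.sum_const,
    Finset.card_erase_of_mem (Finset.mem_Iio.mpr h), Fin.card_Ioi, Fin.card_Iio]
  have hd := d.isLt
  have hc : (c : ℕ) < (d : ℕ) := h
  simp only [nsmul_eq_mul, mul_one, mul_neg]
  omega

lemma aux_sum_lt {n : ℕ} (c d : Fin n) (h : c < d) :
    ∑ x : Fin n, (if x ≠ c ∧ x ≠ d then (if x < c then (1:ℤ) else -1) else 0)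
      = 2 * (c : ℕ) + 2 - (n : ℤ) := by
  have key : ∀ x : Fin n, (if x ≠ c ∧ x ≠ d then (if x < c then (1:ℤ) else -1) else 0)
      = - (if x ≠ c ∧ x ≠ d then (if c < x then (1:ℤ) else -1) else 0) := by
    intro x
    by_cases hx : x ≠ c ∧ x ≠ d
    · rw [if_pos hx, if_pos hx]
      rcases lt_or_gt_of_ne hx.1 with h' | h'
      · rw [if_pos h', if_neg (not_lt.mpr (le_of_lt h'))]; ring
      · rw [if_neg (not_lt.mpr (le_of_lt h')), if_pos h']
    · rw [if_neg hx, if_neg hx]; ring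
  rw [Finset.sum_congr rfl (fun x _ => key x), Finset.sum_neg_distrib, aux_sum_gt c d h]
  ring

lemma aux_sum_lt' {n : ℕ} (c d : Fin n) (h : c < d) :
    ∑ x : Fin n, (if x ≠ c ∧ x ≠ d then (if x < d then (1:ℤ) else -1) else 0)
      = 2 * (d : ℕ) - (n : ℤ) := by
  have key : ∀ x : Fin n, (if x ≠ c ∧ x ≠ d then (if x < d then (1:ℤ) else -1) else 0)
      = - (if x ≠ c ∧ x ≠ d then (if d < x then (1:ℤ) else -1) else 0) := by
    intro x
    by_cases hx : x ≠ c ∧ x ≠ d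
    · rw [if_pos hx, if_pos hx]
      rcases lt_or_gt_of_ne hx.2 with h' | h'
      · rw [if_pos h', if_neg (not_lt.mpr (le_of_lt h'))]; ring
      · rw [if_neg (not_lt.mpr (le_of_lt h')), if_pos h']
    · rw [if_neg hx, if_neg hx]; ring
  rw [Finset.sum_congr rfl (fun x _ => key x), Finset.sum_neg_distrib, aux_sum_gt' c d h]
  ring

lemma aux_case {n : ℕ} (w z v v' : Fin n) (hwz : w ≠ z) (hvv' : v ≠ v') (F G : Fin n → ℤ) :
    ∑ σ ∈ Finset.univ.filter (fun σ : Equiv.Perm (Fin n) => σ w = v ∧ σ z ≠ v'),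
        G (σ⁻¹ v') * F (σ z)
      = ((n-3).factorial : ℤ) *
        ((∑ p : Fin n, if p ≠ w ∧ p ≠ z then G p else 0) *
         (∑ b : Fin n, if b ≠ v ∧ b ≠ v' then F b else 0)) := by
  classical
  set T := Finset.univ.filter (fun σ : Equiv.Perm (Fin n) => σ w = v ∧ σ z ≠ v') with hT
  have inner : ∀ b p : Fin n,
      ∑ σ ∈ (T.filter (fun σ => σ z = b)).filter (fun σ : Equiv.Perm (Fin n) => σ⁻¹ v' = p),
          G (σ⁻¹ v') * F (σ z)
        = (if (p ≠ w ∧ p ≠ z) ∧ (b ≠ v ∧ b ≠ v') then ((n-3).factorial : ℤ) else 0)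
            * (G p * F b) := by
    intro b p
    have hconst : ∀ σ ∈ (T.filter (fun σ => σ z = b)).filter
        (fun σ : Equiv.Perm (Fin n) => σ⁻¹ v' = p), G (σ⁻¹ v') * F (σ z) = G p * F b := by
      intro σ hσ
      simp only [hT, Finset.mem_filter, Finset.mem_univ, true_and] at hσ
      rw [hσ.2, hσ.1.2]
    rw [Finset.sum_congr rfl hconst, Finset.sum_const, nsmul_eq_mul]
    congr 1
    by_cases hc : (p ≠ w ∧ p ≠ z) ∧ (b ≠ v ∧ b ≠ v')
    · rw [if_pos hc]
      obtain ⟨⟨hpw, hpz⟩, hbv, hbv'⟩ := hc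
      rw [show ((T.filter (fun σ => σ z = b)).filter
            (fun σ : Equiv.Perm (Fin n) => σ⁻¹ v' = p))
          = Finset.univ.filter
            (fun σ : Equiv.Perm (Fin n) => σ w = v ∧ σ z = b ∧ σ p = v') from ?_]
      · exact_mod_cast congrArg (Nat.cast : ℕ → ℤ)
          (aux_card_three w z p v b v' hwz (Ne.symm hpw) (Ne.symm hpz) (Ne.symm hbv) hvv' hbv')
      · ext σ
        simp only [hT, Finset.mem_filter, Finset.mem_univ, true_and]
        constructor
        · rintro ⟨⟨⟨hw, hz'⟩, hzb⟩, hp⟩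
          exact ⟨hw, hzb, by rw [← hp]; exact σ.apply_symm_apply v'⟩
        · rintro ⟨hw, hzb, hp⟩
          exact ⟨⟨⟨hw, by rw [hzb]; exact hbv'⟩, hzb⟩, by rw [← hp]; exact σ.symm_apply_apply p⟩
    · rw [if_neg hc]
      norm_cast
      rw [Finset.card_eq_zero, Finset.eq_empty_iff_forall_notMem]
      intro σ hσ
      simp only [hT, Finset.mem_filter, Finset.mem_univ, true_and] at hσ
      obtain ⟨⟨⟨hw, hz'⟩, hzb⟩, hp⟩ := hσ
      have hσp : σ p = v' := by rw [← hp]; exact σ.apply_symm_apply v'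
      apply hc
      refine ⟨⟨?_, ?_⟩, ?_, ?_⟩
      · rintro rfl; exact hvv' (hw.symm.trans hσp)
      · rintro rfl; exact hz' hσp
      · rintro rfl; exact hwz (σ.injective (hw.trans hzb.symm))
      · rintro rfl; exact hz' hzb
  calc ∑ σ ∈ T, G (σ⁻¹ v') * F (σ z)
      = ∑ b : Fin n, ∑ σ ∈ T.filter (fun σ => σ z = b), G (σ⁻¹ v') * F (σ z) :=
        (Finset.sum_fiberwise T (fun σ => σ z) _).symm
    _ = ∑ b : Fin n, ∑ p : Fin n,
          ∑ σ ∈ (T.filter (fun σ => σ z = b)).filter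
            (fun σ : Equiv.Perm (Fin n) => σ⁻¹ v' = p), G (σ⁻¹ v') * F (σ z) :=
        Finset.sum_congr rfl (fun b _ =>
          (Finset.sum_fiberwise (T.filter (fun σ => σ z = b)) (fun σ => σ⁻¹ v') _).symm)
    _ = ∑ b : Fin n, ∑ p : Fin n,
          (if (p ≠ w ∧ p ≠ z) ∧ (b ≠ v ∧ b ≠ v') then ((n-3).factorial : ℤ) else 0)
            * (G p * F b) :=
        Finset.sum_congr rfl (fun b _ => Finset.sum_congr rfl (fun p _ => inner b p))
    _ = ∑ b : Fin n, ∑ p : Fin n,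
          ((n-3).factorial : ℤ) * ((if p ≠ w ∧ p ≠ z then G p else 0)
            * (if b ≠ v ∧ b ≠ v' then F b else 0)) := by
        refine Finset.sum_congr rfl (fun b _ => Finset.sum_congr rfl (fun p _ => ?_))
        by_cases h1 : p ≠ w ∧ p ≠ z <;> by_cases h2 : b ≠ v ∧ b ≠ v' <;>
          simp [h1, h2] <;> ring
    _ = ((n-3).factorial : ℤ) * ∑ b : Fin n, ∑ p : Fin n,
          ((if p ≠ w ∧ p ≠ z then G p else 0) * (if b ≠ v ∧ b ≠ v' then F b else 0)) := by
        simp only [← Finset.mul_sum]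
    _ = ((n-3).factorial : ℤ) *
        ((∑ p : Fin n, if p ≠ w ∧ p ≠ z then G p else 0) *
         (∑ b : Fin n, if b ≠ v ∧ b ≠ v' then F b else 0)) := by
        rw [Finset.sum_comm, ← Finset.sum_mul_sum]

lemma aux_sumA {n : ℕ} (i₁ j₁ : Fin n) (h : i₁ ≠ j₁) :
    ∑ σ : Equiv.Perm (Fin n), (if σ⁻¹ j₁ < σ⁻¹ i₁ then (1:ℤ) else -1) = 0 := by
  classical
  apply Finset.sum_ninvolution (fun σ => Equiv.swap i₁ j₁ * σ)
  · intro σ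
    have e1 : (Equiv.swap i₁ j₁ * σ)⁻¹ j₁ = σ⁻¹ i₁ := by
      rw [mul_inv_rev, Equiv.Perm.mul_apply, Equiv.swap_inv, Equiv.swap_apply_right]
    have e2 : (Equiv.swap i₁ j₁ * σ)⁻¹ i₁ = σ⁻¹ j₁ := by
      rw [mul_inv_rev, Equiv.Perm.mul_apply, Equiv.swap_inv, Equiv.swap_apply_left]
    rw [e1, e2]
    have hne : σ⁻¹ j₁ ≠ σ⁻¹ i₁ := fun hc => h (σ⁻¹.injective hc).symm
    rcases lt_or_gt_of_ne hne with h' | h'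
    · rw [if_pos h', if_neg (not_lt.mpr (le_of_lt h'))]; ring
    · rw [if_neg (not_lt.mpr (le_of_lt h')), if_pos h']; ring
  · intro σ _ hc
    have : Equiv.swap i₁ j₁ = 1 := mul_eq_right.mp hc
    exact h (((by simpa using congrArg (fun e : Equiv.Perm (Fin n) => e i₁) this) : _ = _).symm)
  · intro σ; exact Finset.mem_univ _
  · intro σ; rw [← mul_assoc, Equiv.swap_mul_self, one_mul]

lemma aux_sumB {n : ℕ} (i₂ j₂ : Fin n) (h : i₂ ≠ j₂) :
    ∑ σ : Equiv.Perm (Fin n), (if σ i₂ < σ j₂ then (1:ℤ) else -1) = 0 := by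
  classical
  apply Finset.sum_ninvolution (fun σ => σ * Equiv.swap i₂ j₂)
  · intro σ
    have e1 : (σ * Equiv.swap i₂ j₂) i₂ = σ j₂ := by
      rw [Equiv.Perm.mul_apply, Equiv.swap_apply_left]
    have e2 : (σ * Equiv.swap i₂ j₂) j₂ = σ i₂ := by
      rw [Equiv.Perm.mul_apply, Equiv.swap_apply_right]
    rw [e1, e2]
    have hne : σ i₂ ≠ σ j₂ := fun hc => h (σ.injective hc)
    rcases lt_or_gt_of_ne hne with h' | h'
    · rw [if_pos h', if_neg (not_lt.mpr (le_of_lt h'))]; ring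
    · rw [if_neg (not_lt.mpr (le_of_lt h')), if_pos h']; ring
  · intro σ _ hc
    have : Equiv.swap i₂ j₂ = 1 := mul_eq_left.mp hc
    exact h (((by simpa using congrArg (fun e : Equiv.Perm (Fin n) => e i₂) this) : _ = _).symm)
  · intro σ; exact Finset.mem_univ _
  · intro σ; rw [mul_assoc, Equiv.swap_mul_self, mul_one]

lemma aux_rest {n : ℕ} (i₁ j₁ i₂ j₂ : Fin n) (h : i₁ ≠ j₁) :
    ∑ σ ∈ Finset.univ.filter (fun σ : Equiv.Perm (Fin n) =>
        σ i₂ ≠ i₁ ∧ σ i₂ ≠ j₁ ∧ σ j₂ ≠ i₁ ∧ σ j₂ ≠ j₁),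
      (if σ⁻¹ j₁ < σ⁻¹ i₁ then (1:ℤ) else -1) * (if σ i₂ < σ j₂ then (1:ℤ) else -1) = 0 := by
  classical
  apply Finset.sum_involution (fun σ _ => Equiv.swap i₁ j₁ * σ)
  · intro σ hσ
    simp only [Finset.mem_filter, Finset.mem_univ, true_and] at hσ
    obtain ⟨h1, h2, h3, h4⟩ := hσ
    have e1 : (Equiv.swap i₁ j₁ * σ)⁻¹ j₁ = σ⁻¹ i₁ := by
      rw [mul_inv_rev, Equiv.Perm.mul_apply, Equiv.swap_inv, Equiv.swap_apply_right]
    have e2 : (Equiv.swap i₁ j₁ * σ)⁻¹ i₁ = σ⁻¹ j₁ := by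
      rw [mul_inv_rev, Equiv.Perm.mul_apply, Equiv.swap_inv, Equiv.swap_apply_left]
    have e3 : (Equiv.swap i₁ j₁ * σ) i₂ = σ i₂ := by
      rw [Equiv.Perm.mul_apply, Equiv.swap_apply_of_ne_of_ne h1 h2]
    have e4 : (Equiv.swap i₁ j₁ * σ) j₂ = σ j₂ := by
      rw [Equiv.Perm.mul_apply, Equiv.swap_apply_of_ne_of_ne h3 h4]
    rw [e1, e2, e3, e4]
    have hne : σ⁻¹ j₁ ≠ σ⁻¹ i₁ := fun hc => h (σ⁻¹.injective hc).symm
    rcases lt_or_gt_of_ne hne with h' | h'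
    · rw [if_pos h', if_neg (not_lt.mpr (le_of_lt h'))]; ring
    · rw [if_neg (not_lt.mpr (le_of_lt h')), if_pos h']; ring
  · intro σ hσ _ hc
    have : Equiv.swap i₁ j₁ = 1 := mul_eq_right.mp hc
    exact h (((by simpa using congrArg (fun e : Equiv.Perm (Fin n) => e i₁) this) : _ = _).symm)
  · intro σ hσ
    simp only [Finset.mem_filter, Finset.mem_univ, true_and] at hσ ⊢
    obtain ⟨h1, h2, h3, h4⟩ := hσ
    rw [Equiv.Perm.mul_apply, Equiv.Perm.mul_apply, Equiv.swap_apply_of_ne_of_ne h1 h2,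
      Equiv.swap_apply_of_ne_of_ne h3 h4]
    exact ⟨h1, h2, h3, h4⟩
  · intro σ hσ; rw [← mul_assoc, Equiv.swap_mul_self, one_mul]

theorem stmt_6 (n : ℕ) (hn : 4 ≤ n) (i₁ j₁ i₂ j₂ : Fin n)
    (h₁ : i₁ < j₁) (h₂ : i₂ < j₂) :
    ((Finset.univ.filter
      (fun σ : Equiv.Perm (Fin n) => σ⁻¹ j₁ < σ⁻¹ i₁ ∧ σ i₂ < σ j₂)).card : ℤ) =
      ((n - 2).factorial : ℤ) * ((n : ℤ) ^ 2 - n - 2) / 4 -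
        ((n - 3).factorial : ℤ) * (((j₁ : ℕ) : ℤ) - ((i₁ : ℕ) : ℤ) - 1) *
          (((j₂ : ℕ) : ℤ) - ((i₂ : ℕ) : ℤ) - 1) := by
  classical
  have hne₁ : i₁ ≠ j₁ := ne_of_lt h₁
  have hne₂ : i₂ ≠ j₂ := ne_of_lt h₂
  -- Step 1: 4 * N = n! + S
  have key : (4:ℤ) * ((Finset.univ.filter
      (fun σ : Equiv.Perm (Fin n) => σ⁻¹ j₁ < σ⁻¹ i₁ ∧ σ i₂ < σ j₂)).card : ℤ)
      = (n.factorial : ℤ) + ∑ σ : Equiv.Perm (Fin n),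
          (if σ⁻¹ j₁ < σ⁻¹ i₁ then (1:ℤ) else -1) * (if σ i₂ < σ j₂ then (1:ℤ) else -1) := by
    have hcs : ((Finset.univ.filter
        (fun σ : Equiv.Perm (Fin n) => σ⁻¹ j₁ < σ⁻¹ i₁ ∧ σ i₂ < σ j₂)).card : ℤ)
        = ∑ σ : Equiv.Perm (Fin n),
            (if σ⁻¹ j₁ < σ⁻¹ i₁ ∧ σ i₂ < σ j₂ then (1:ℤ) else 0) := by
      rw [Finset.card_filter]
      push_cast
      rfl
    rw [hcs, Finset.mul_sum]
    have hpt : ∀ σ : Equiv.Perm (Fin n),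
        (4:ℤ) * (if σ⁻¹ j₁ < σ⁻¹ i₁ ∧ σ i₂ < σ j₂ then (1:ℤ) else 0)
        = 1 + (if σ⁻¹ j₁ < σ⁻¹ i₁ then (1:ℤ) else -1) + (if σ i₂ < σ j₂ then (1:ℤ) else -1)
          + (if σ⁻¹ j₁ < σ⁻¹ i₁ then (1:ℤ) else -1) * (if σ i₂ < σ j₂ then (1:ℤ) else -1) := by
      intro σ
      by_cases hA : σ⁻¹ j₁ < σ⁻¹ i₁ <;> by_cases hB : σ i₂ < σ j₂ <;>
        simp only [hA, hB, and_self, and_true, and_false, true_and, false_and, ↓reduceIte] <;> norm_num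
    rw [Finset.sum_congr rfl (fun σ _ => hpt σ), Finset.sum_add_distrib,
      Finset.sum_add_distrib, Finset.sum_add_distrib, aux_sumA i₁ j₁ hne₁,
      aux_sumB i₂ j₂ hne₂, Finset.sum_const, Finset.card_univ, Fintype.card_perm,
      Fintype.card_fin]
    push_cast
    ring
  -- Step 2: decompose S
  set f : Equiv.Perm (Fin n) → ℤ := fun σ =>
    (if σ⁻¹ j₁ < σ⁻¹ i₁ then (1:ℤ) else -1) * (if σ i₂ < σ j₂ then (1:ℤ) else -1) with hf
  have d0 : ∑ σ : Equiv.Perm (Fin n), f σ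
      = ∑ σ ∈ Finset.univ.filter (fun σ : Equiv.Perm (Fin n) => σ i₂ = i₁), f σ
      + ∑ σ ∈ Finset.univ.filter (fun σ : Equiv.Perm (Fin n) => ¬(σ i₂ = i₁)), f σ :=
    (Finset.sum_filter_add_sum_filter_not Finset.univ _ f).symm
  have d1 : ∑ σ ∈ Finset.univ.filter (fun σ : Equiv.Perm (Fin n) => σ i₂ = i₁), f σ
      = ∑ σ ∈ Finset.univ.filter
          (fun σ : Equiv.Perm (Fin n) => σ i₂ = i₁ ∧ σ j₂ = j₁), f σ
      + ∑ σ ∈ Finset.univ.filter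
          (fun σ : Equiv.Perm (Fin n) => σ i₂ = i₁ ∧ ¬(σ j₂ = j₁)), f σ := by
    rw [← Finset.sum_filter_add_sum_filter_not
      (Finset.univ.filter (fun σ : Equiv.Perm (Fin n) => σ i₂ = i₁))
      (fun σ => σ j₂ = j₁) f, Finset.filter_filter, Finset.filter_filter]
  have d2 : ∑ σ ∈ Finset.univ.filter (fun σ : Equiv.Perm (Fin n) => ¬(σ i₂ = i₁)), f σ
      = ∑ σ ∈ Finset.univ.filter (fun σ : Equiv.Perm (Fin n) => σ i₂ = j₁), f σ
      + ∑ σ ∈ Finset.univ.filter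
          (fun σ : Equiv.Perm (Fin n) => ¬(σ i₂ = i₁) ∧ ¬(σ i₂ = j₁)), f σ := by
    rw [← Finset.sum_filter_add_sum_filter_not
      (Finset.univ.filter (fun σ : Equiv.Perm (Fin n) => ¬(σ i₂ = i₁)))
      (fun σ => σ i₂ = j₁) f, Finset.filter_filter, Finset.filter_filter]
    congr 2
    ext σ
    simp only [Finset.mem_filter, Finset.mem_univ, true_and]
    constructor
    · rintro ⟨_, h⟩; exact h
    · intro h; exact ⟨by rw [h]; exact fun hc => hne₁ hc.symm, h⟩
  have d3 : ∑ σ ∈ Finset.univ.filter (fun σ : Equiv.Perm (Fin n) => σ i₂ = j₁), f σ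
      = ∑ σ ∈ Finset.univ.filter
          (fun σ : Equiv.Perm (Fin n) => σ i₂ = j₁ ∧ σ j₂ = i₁), f σ
      + ∑ σ ∈ Finset.univ.filter
          (fun σ : Equiv.Perm (Fin n) => σ i₂ = j₁ ∧ ¬(σ j₂ = i₁)), f σ := by
    rw [← Finset.sum_filter_add_sum_filter_not
      (Finset.univ.filter (fun σ : Equiv.Perm (Fin n) => σ i₂ = j₁))
      (fun σ => σ j₂ = i₁) f, Finset.filter_filter, Finset.filter_filter]
  have d4 : ∑ σ ∈ Finset.univ.filter
        (fun σ : Equiv.Perm (Fin n) => ¬(σ i₂ = i₁) ∧ ¬(σ i₂ = j₁)), f σ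
      = ∑ σ ∈ Finset.univ.filter
          (fun σ : Equiv.Perm (Fin n) => σ j₂ = i₁ ∧ ¬(σ i₂ = j₁)), f σ
      + ∑ σ ∈ Finset.univ.filter
          (fun σ : Equiv.Perm (Fin n) =>
            (¬(σ i₂ = i₁) ∧ ¬(σ i₂ = j₁)) ∧ ¬(σ j₂ = i₁)), f σ := by
    rw [← Finset.sum_filter_add_sum_filter_not
      (Finset.univ.filter
        (fun σ : Equiv.Perm (Fin n) => ¬(σ i₂ = i₁) ∧ ¬(σ i₂ = j₁)))
      (fun σ => σ j₂ = i₁) f, Finset.filter_filter, Finset.filter_filter]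
    congr 2
    ext σ
    simp only [Finset.mem_filter, Finset.mem_univ, true_and]
    constructor
    · rintro ⟨⟨_, h2⟩, h3⟩; exact ⟨h3, h2⟩
    · rintro ⟨h3, h2⟩
      refine ⟨⟨fun hc => ?_, h2⟩, h3⟩
      exact hne₂ (σ.injective (hc.trans h3.symm))
  have d5 : ∑ σ ∈ Finset.univ.filter
        (fun σ : Equiv.Perm (Fin n) =>
          (¬(σ i₂ = i₁) ∧ ¬(σ i₂ = j₁)) ∧ ¬(σ j₂ = i₁)), f σ
      = ∑ σ ∈ Finset.univ.filter
          (fun σ : Equiv.Perm (Fin n) => σ j₂ = j₁ ∧ ¬(σ i₂ = i₁)), f σ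
      + ∑ σ ∈ Finset.univ.filter
          (fun σ : Equiv.Perm (Fin n) =>
            σ i₂ ≠ i₁ ∧ σ i₂ ≠ j₁ ∧ σ j₂ ≠ i₁ ∧ σ j₂ ≠ j₁), f σ := by
    rw [← Finset.sum_filter_add_sum_filter_not
      (Finset.univ.filter
        (fun σ : Equiv.Perm (Fin n) => (¬(σ i₂ = i₁) ∧ ¬(σ i₂ = j₁)) ∧ ¬(σ j₂ = i₁)))
      (fun σ => σ j₂ = j₁) f, Finset.filter_filter, Finset.filter_filter]
    congr 2
    · ext σ
      simp only [Finset.mem_filter, Finset.mem_univ, true_and]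
      constructor
      · rintro ⟨⟨⟨h1, _⟩, _⟩, h5⟩; exact ⟨h5, h1⟩
      · rintro ⟨h5, h1⟩
        refine ⟨⟨⟨h1, fun hc => ?_⟩, fun hc => ?_⟩, h5⟩
        · exact hne₂ (σ.injective (hc.trans h5.symm))
        · exact hne₁ (hc.symm.trans h5)
    · ext σ
      simp only [Finset.mem_filter, Finset.mem_univ, true_and, ne_eq]
      tauto
  -- values of the six pieces
  have vT1 : ∑ σ ∈ Finset.univ.filter
        (fun σ : Equiv.Perm (Fin n) => σ i₂ = i₁ ∧ σ j₂ = j₁), f σ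
      = -(((n-2).factorial : ℕ) : ℤ) := by
    have hc : ∀ σ ∈ Finset.univ.filter
        (fun σ : Equiv.Perm (Fin n) => σ i₂ = i₁ ∧ σ j₂ = j₁), f σ = -1 := by
      intro σ hσ
      simp only [Finset.mem_filter, Finset.mem_univ, true_and] at hσ
      obtain ⟨ha, hb⟩ := hσ
      have e1 : σ⁻¹ j₁ = j₂ := by rw [← hb, Equiv.Perm.inv_def, Equiv.symm_apply_apply]
      have e2 : σ⁻¹ i₁ = i₂ := by rw [← ha, Equiv.Perm.inv_def, Equiv.symm_apply_apply]
      simp only [hf]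
      rw [e1, e2, ha, hb, if_neg (not_lt.mpr (le_of_lt h₂)), if_pos h₁]
      ring
    rw [Finset.sum_congr rfl hc, Finset.sum_const, aux_card_two i₂ j₂ i₁ j₁ hne₂ hne₁]
    simp
  have vT2 : ∑ σ ∈ Finset.univ.filter
        (fun σ : Equiv.Perm (Fin n) => σ i₂ = j₁ ∧ σ j₂ = i₁), f σ
      = -(((n-2).factorial : ℕ) : ℤ) := by
    have hc : ∀ σ ∈ Finset.univ.filter
        (fun σ : Equiv.Perm (Fin n) => σ i₂ = j₁ ∧ σ j₂ = i₁), f σ = -1 := by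
      intro σ hσ
      simp only [Finset.mem_filter, Finset.mem_univ, true_and] at hσ
      obtain ⟨ha, hb⟩ := hσ
      have e1 : σ⁻¹ j₁ = i₂ := by rw [← ha, Equiv.Perm.inv_def, Equiv.symm_apply_apply]
      have e2 : σ⁻¹ i₁ = j₂ := by rw [← hb, Equiv.Perm.inv_def, Equiv.symm_apply_apply]
      simp only [hf]
      rw [e1, e2, ha, hb, if_pos h₂, if_neg (not_lt.mpr (le_of_lt h₁))]
      ring
    rw [Finset.sum_congr rfl hc, Finset.sum_const, aux_card_two i₂ j₂ j₁ i₁ hne₂ hne₁.symm]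
    simp
  have vT3 : ∑ σ ∈ Finset.univ.filter
        (fun σ : Equiv.Perm (Fin n) => σ i₂ = i₁ ∧ ¬(σ j₂ = j₁)), f σ
      = (((n-3).factorial : ℕ) : ℤ)
          * ((2 * ((i₂:ℕ):ℤ) + 2 - (n:ℤ)) * ((n:ℤ) - 2 * ((i₁:ℕ):ℤ) - 2)) := by
    have hstep : ∀ σ ∈ Finset.univ.filter
        (fun σ : Equiv.Perm (Fin n) => σ i₂ = i₁ ∧ ¬(σ j₂ = j₁)), f σ
        = (fun p => if p < i₂ then (1:ℤ) else -1) (σ⁻¹ j₁)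
          * (fun b => if i₁ < b then (1:ℤ) else -1) (σ j₂) := by
      intro σ hσ
      simp only [Finset.mem_filter, Finset.mem_univ, true_and] at hσ
      obtain ⟨ha, _⟩ := hσ
      have e2 : σ⁻¹ i₁ = i₂ := by rw [← ha, Equiv.Perm.inv_def, Equiv.symm_apply_apply]
      simp only [hf]
      rw [e2, ha]
    rw [Finset.sum_congr rfl hstep]
    have hA := aux_case i₂ j₂ i₁ j₁ hne₂ hne₁
      (fun b => if i₁ < b then (1:ℤ) else -1) (fun p => if p < i₂ then (1:ℤ) else -1)
    simp only [ne_eq] at hA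
    rw [hA, aux_sum_lt i₂ j₂ h₂, aux_sum_gt i₁ j₁ h₁]
  have vT4 : ∑ σ ∈ Finset.univ.filter
        (fun σ : Equiv.Perm (Fin n) => σ i₂ = j₁ ∧ ¬(σ j₂ = i₁)), f σ
      = (((n-3).factorial : ℕ) : ℤ)
          * (((n:ℤ) - 2 * ((i₂:ℕ):ℤ) - 2) * ((n:ℤ) - 2 * ((j₁:ℕ):ℤ))) := by
    have hstep : ∀ σ ∈ Finset.univ.filter
        (fun σ : Equiv.Perm (Fin n) => σ i₂ = j₁ ∧ ¬(σ j₂ = i₁)), f σ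
        = (fun p => if i₂ < p then (1:ℤ) else -1) (σ⁻¹ i₁)
          * (fun b => if j₁ < b then (1:ℤ) else -1) (σ j₂) := by
      intro σ hσ
      simp only [Finset.mem_filter, Finset.mem_univ, true_and] at hσ
      obtain ⟨ha, _⟩ := hσ
      have e2 : σ⁻¹ j₁ = i₂ := by rw [← ha, Equiv.Perm.inv_def, Equiv.symm_apply_apply]
      simp only [hf]
      rw [e2, ha]
    rw [Finset.sum_congr rfl hstep]
    have hA := aux_case i₂ j₂ j₁ i₁ hne₂ hne₁.symm
      (fun b => if j₁ < b then (1:ℤ) else -1) (fun p => if i₂ < p then (1:ℤ) else -1)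
    simp only [ne_eq] at hA
    rw [hA, aux_sum_gt i₂ j₂ h₂]
    have hb := aux_sum_gt' i₁ j₁ h₁
    simp only [ne_eq] at hb
    rw [show (∑ b : Fin n, if ¬(b = j₁) ∧ ¬(b = i₁) then (if j₁ < b then (1:ℤ) else -1) else 0)
        = ∑ b : Fin n, if ¬(b = i₁) ∧ ¬(b = j₁) then (if j₁ < b then (1:ℤ) else -1) else 0
      from Finset.sum_congr rfl (fun b _ => if_congr and_comm rfl rfl), hb]
  have vT5 : ∑ σ ∈ Finset.univ.filter
        (fun σ : Equiv.Perm (Fin n) => σ j₂ = i₁ ∧ ¬(σ i₂ = j₁)), f σ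
      = (((n-3).factorial : ℕ) : ℤ)
          * ((2 * ((j₂:ℕ):ℤ) - (n:ℤ)) * (2 * ((i₁:ℕ):ℤ) + 2 - (n:ℤ))) := by
    have hstep : ∀ σ ∈ Finset.univ.filter
        (fun σ : Equiv.Perm (Fin n) => σ j₂ = i₁ ∧ ¬(σ i₂ = j₁)), f σ
        = (fun p => if p < j₂ then (1:ℤ) else -1) (σ⁻¹ j₁)
          * (fun b => if b < i₁ then (1:ℤ) else -1) (σ i₂) := by
      intro σ hσ
      simp only [Finset.mem_filter, Finset.mem_univ, true_and] at hσ
      obtain ⟨ha, _⟩ := hσ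
      have e2 : σ⁻¹ i₁ = j₂ := by rw [← ha, Equiv.Perm.inv_def, Equiv.symm_apply_apply]
      simp only [hf]
      rw [e2, ha]
    rw [Finset.sum_congr rfl hstep]
    have hA := aux_case j₂ i₂ i₁ j₁ hne₂.symm hne₁
      (fun b => if b < i₁ then (1:ℤ) else -1) (fun p => if p < j₂ then (1:ℤ) else -1)
    simp only [ne_eq] at hA
    rw [hA]
    have hp := aux_sum_lt' i₂ j₂ h₂
    simp only [ne_eq] at hp
    rw [show (∑ p : Fin n, if ¬(p = j₂) ∧ ¬(p = i₂) then (if p < j₂ then (1:ℤ) else -1) else 0)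
        = ∑ p : Fin n, if ¬(p = i₂) ∧ ¬(p = j₂) then (if p < j₂ then (1:ℤ) else -1) else 0
      from Finset.sum_congr rfl (fun p _ => if_congr and_comm rfl rfl), hp, aux_sum_lt i₁ j₁ h₁]
  have vT6 : ∑ σ ∈ Finset.univ.filter
        (fun σ : Equiv.Perm (Fin n) => σ j₂ = j₁ ∧ ¬(σ i₂ = i₁)), f σ
      = (((n-3).factorial : ℕ) : ℤ)
          * (((n:ℤ) - 2 * ((j₂:ℕ):ℤ)) * (2 * ((j₁:ℕ):ℤ) - (n:ℤ))) := by
    have hstep : ∀ σ ∈ Finset.univ.filter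
        (fun σ : Equiv.Perm (Fin n) => σ j₂ = j₁ ∧ ¬(σ i₂ = i₁)), f σ
        = (fun p => if j₂ < p then (1:ℤ) else -1) (σ⁻¹ i₁)
          * (fun b => if b < j₁ then (1:ℤ) else -1) (σ i₂) := by
      intro σ hσ
      simp only [Finset.mem_filter, Finset.mem_univ, true_and] at hσ
      obtain ⟨ha, _⟩ := hσ
      have e2 : σ⁻¹ j₁ = j₂ := by rw [← ha, Equiv.Perm.inv_def, Equiv.symm_apply_apply]
      simp only [hf]
      rw [e2, ha]
    rw [Finset.sum_congr rfl hstep]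
    have hA := aux_case j₂ i₂ j₁ i₁ hne₂.symm hne₁.symm
      (fun b => if b < j₁ then (1:ℤ) else -1) (fun p => if j₂ < p then (1:ℤ) else -1)
    simp only [ne_eq] at hA
    rw [hA]
    have hp := aux_sum_gt' i₂ j₂ h₂
    simp only [ne_eq] at hp
    have hb := aux_sum_lt' i₁ j₁ h₁
    simp only [ne_eq] at hb
    rw [show (∑ p : Fin n, if ¬(p = j₂) ∧ ¬(p = i₂) then (if j₂ < p then (1:ℤ) else -1) else 0)
        = ∑ p : Fin n, if ¬(p = i₂) ∧ ¬(p = j₂) then (if j₂ < p then (1:ℤ) else -1) else 0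
      from Finset.sum_congr rfl (fun p _ => if_congr and_comm rfl rfl), hp]
    rw [show (∑ b : Fin n, if ¬(b = j₁) ∧ ¬(b = i₁) then (if b < j₁ then (1:ℤ) else -1) else 0)
        = ∑ b : Fin n, if ¬(b = i₁) ∧ ¬(b = j₁) then (if b < j₁ then (1:ℤ) else -1) else 0
      from Finset.sum_congr rfl (fun b _ => if_congr and_comm rfl rfl), hb]
  have vRest : ∑ σ ∈ Finset.univ.filter
        (fun σ : Equiv.Perm (Fin n) =>
          σ i₂ ≠ i₁ ∧ σ i₂ ≠ j₁ ∧ σ j₂ ≠ i₁ ∧ σ j₂ ≠ j₁), f σ = 0 := by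
    simp only [hf]
    exact aux_rest i₁ j₁ i₂ j₂ hne₁
  -- total value of S
  have hS : ∑ σ : Equiv.Perm (Fin n), f σ
      = -2 * (((n-2).factorial : ℕ) : ℤ)
        + (((n-3).factorial : ℕ) : ℤ) *
          (-4 * ((((j₁:ℕ):ℤ) - ((i₁:ℕ):ℤ) - 1) * (((j₂:ℕ):ℤ) - ((i₂:ℕ):ℤ) - 1))) := by
    rw [d0, d1, d2, d3, d4, d5, vT1, vT2, vT3, vT4, vT5, vT6, vRest]
    ring
  -- final arithmetic
  obtain ⟨m, rfl⟩ : ∃ m, n = m + 4 := ⟨n - 4, by omega⟩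
  rw [show m + 4 - 2 = m + 2 from by omega, show m + 4 - 3 = m + 1 from by omega] at hS ⊢
  have hfac : (((m+4).factorial : ℕ) : ℤ) = ((m:ℤ)+4) * ((m:ℤ)+3) * (((m+2).factorial : ℕ) : ℤ) := by
    rw [show m + 4 = (m+3)+1 from rfl, Nat.factorial_succ, show m + 3 = (m+2)+1 from rfl,
      Nat.factorial_succ]
    push_cast
    ring
  have e1 : (((m+2).factorial : ℕ) : ℤ) * (((m+4 : ℕ) : ℤ)^2 - ((m+4 : ℕ) : ℤ) - 2)
      = (((m+4).factorial : ℕ) : ℤ) - 2 * (((m+2).factorial : ℕ) : ℤ) := by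
    rw [hfac]
    push_cast
    ring
  obtain ⟨k, hk⟩ : (4:ℤ) ∣ (((m+2).factorial : ℕ) : ℤ) * (((m+4 : ℕ) : ℤ)^2 - ((m+4 : ℕ) : ℤ) - 2) := by
    obtain ⟨x, hx⟩ : (2:ℤ) ∣ (((m+2).factorial : ℕ) : ℤ) := by
      exact_mod_cast Int.natCast_dvd_natCast.mpr (Nat.dvd_factorial (by norm_num) (by omega))
    obtain ⟨y, hy⟩ : (2:ℤ) ∣ (((m+4 : ℕ) : ℤ)^2 - ((m+4 : ℕ) : ℤ) - 2) := by
      have heven : Even (((m:ℤ)+3) * ((m:ℤ)+4)) := Int.even_mul_succ_self ((m:ℤ)+3)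
      obtain ⟨t, ht⟩ := heven
      refine ⟨t - 1, ?_⟩
      push_cast
      rw [show ((m:ℤ)+4)^2 - ((m:ℤ)+4) - 2 = ((m:ℤ)+3) * ((m:ℤ)+4) - 2 from by ring, ht]
      ring
    exact ⟨x * y, by rw [hx, hy]; ring⟩
  rw [hk, Int.mul_ediv_cancel_left _ (by norm_num)]
  have h4 : 4 * ((Finset.univ.filter
      (fun σ : Equiv.Perm (Fin (m+4)) => σ⁻¹ j₁ < σ⁻¹ i₁ ∧ σ i₂ < σ j₂)).card : ℤ)
      = 4 * k - 4 * ((((m+1).factorial : ℕ) : ℤ) * (((j₁:ℕ):ℤ) - ((i₁:ℕ):ℤ) - 1)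
          * (((j₂:ℕ):ℤ) - ((i₂:ℕ):ℤ) - 1)) := by
    linear_combination key + hS - e1 + hk
  linarith [h4]
end

section
/- Let n ≥ 4, let i₁ < j₁ and i₂ < j₂ be indices in {1,…,n}, and let b ∉ {i₁, j₁}. Then the number of permutations σ ∈ S_n with σ(i₁) > σ(j₁), σ⁻¹(i₂) = i₁ and σ⁻¹(j₂) = b equals (i₂ − 1)·(n−3)!. -/
open Finset Equiv

lemma card_fix3 {n : ℕ} (a₁ a₂ a₃ : Fin n) (h12 : a₁ ≠ a₂) (h13 : a₁ ≠ a₃) (h23 : a₂ ≠ a₃) :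
    (univ.filter fun σ : Perm (Fin n) => σ a₁ = a₁ ∧ σ a₂ = a₂ ∧ σ a₃ = a₃).card
      = (n - 3).factorial := by
  classical
  set p : Fin n → Prop := fun x => ¬(x = a₁ ∨ x = a₂ ∨ x = a₃) with hp
  have key : (univ.filter fun σ : Perm (Fin n) => σ a₁ = a₁ ∧ σ a₂ = a₂ ∧ σ a₃ = a₃).card
      = Fintype.card {σ : Perm (Fin n) // ∀ a, ¬ p a → σ a = a} := by
    rw [Fintype.card_subtype]
    congr 1
    apply Finset.filter_congr
    intro σ _
    simp only [hp, not_not]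
    constructor
    · rintro ⟨u, v, w⟩ a (rfl | rfl | rfl) <;> assumption
    · intro h
      exact ⟨h _ (Or.inl rfl), h _ (Or.inr (Or.inl rfl)), h _ (Or.inr (Or.inr rfl))⟩
  rw [key, ← Fintype.card_congr (Equiv.Perm.subtypeEquivSubtypePerm p), Fintype.card_perm]
  congr 1
  have h3 : Fintype.card {x : Fin n // x = a₁ ∨ x = a₂ ∨ x = a₃} = 3 := by
    rw [Fintype.card_subtype]
    have : (univ.filter fun x : Fin n => x = a₁ ∨ x = a₂ ∨ x = a₃) = {a₁, a₂, a₃} := by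
      ext x; simp [Finset.mem_insert]
    rw [this, Finset.card_insert_of_notMem (by simp [h12, h13]),
      Finset.card_insert_of_notMem (by simp [h23]), Finset.card_singleton]
  have hc := Fintype.card_subtype_compl (fun x : Fin n => x = a₁ ∨ x = a₂ ∨ x = a₃)
  rw [Fintype.card_fin, h3] at hc
  exact (Fintype.card_congr (Equiv.subtypeEquivRight fun x => Iff.rfl)).trans hc

lemma card_map3 {n : ℕ} (a₁ a₂ a₃ v₁ v₂ v₃ : Fin n)
    (h12 : a₁ ≠ a₂) (h13 : a₁ ≠ a₃) (h23 : a₂ ≠ a₃)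
    (g12 : v₁ ≠ v₂) (g13 : v₁ ≠ v₃) (g23 : v₂ ≠ v₃) :
    (univ.filter fun σ : Perm (Fin n) => σ a₁ = v₁ ∧ σ a₂ = v₂ ∧ σ a₃ = v₃).card
      = (n - 3).factorial := by
  classical
  -- build τ with τ a₁ = v₁, τ a₂ = v₂, τ a₃ = v₃
  set f : Fin n → Fin n := fun x => if x = a₁ then v₁ else if x = a₂ then v₂ else v₃ with hf
  have hfa₁ : f a₁ = v₁ := by simp [hf]
  have hfa₂ : f a₂ = v₂ := by simp [hf, h12.symm]
  have hfa₃ : f a₃ = v₃ := by simp [hf, h13.symm, h23.symm]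
  obtain ⟨g, hg⟩ := Finset.exists_equiv_extend_of_card_eq
    (t := (univ : Finset (Fin n))) (by simp) (s := {a₁, a₂, a₃}) (f := f)
    (by intro x _; simp)
    (by
      intro x hx y hy hxy
      simp only [coe_insert, Set.mem_insert_iff, coe_singleton, Set.mem_singleton_iff] at hx hy
      rcases hx with rfl | rfl | rfl <;> rcases hy with rfl | rfl | rfl <;>
        simp_all [hf, h12, h13, h23, h12.symm, h13.symm, h23.symm,
          g12, g13, g23, g12.symm, g13.symm, g23.symm])
  set τ : Perm (Fin n) := g.trans (Equiv.subtypeUnivEquiv (fun x => Finset.mem_univ x)) with hτ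
  have hτ₁ : τ a₁ = v₁ := by
    have := hg a₁ (by simp); simpa [hτ, Equiv.subtypeUnivEquiv, hfa₁] using this
  have hτ₂ : τ a₂ = v₂ := by
    have := hg a₂ (by simp); simpa [hτ, Equiv.subtypeUnivEquiv, hfa₂] using this
  have hτ₃ : τ a₃ = v₃ := by
    have := hg a₃ (by simp); simpa [hτ, Equiv.subtypeUnivEquiv, hfa₃] using this
  rw [← card_fix3 a₁ a₂ a₃ h12 h13 h23]
  apply Finset.card_bij' (fun σ _ => τ⁻¹ * σ) (fun π _ => τ * π)
  · intro σ hσ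
    simp only [Finset.mem_filter, Finset.mem_univ, true_and] at hσ ⊢
    simp [Perm.mul_apply, hσ.1, hσ.2.1, hσ.2.2, ← hτ₁, ← hτ₂, ← hτ₃]
  · intro π hπ
    simp only [Finset.mem_filter, Finset.mem_univ, true_and] at hπ ⊢
    simp [Perm.mul_apply, hπ.1, hπ.2.1, hπ.2.2, hτ₁, hτ₂, hτ₃]
  · intro σ _; simp [mul_assoc]
  · intro π _; simp [← mul_assoc]
theorem stmt_9 (n : ℕ) (hn : 4 ≤ n) (i₁ j₁ i₂ j₂ b : Fin n)
    (h₁ : i₁ < j₁) (h₂ : i₂ < j₂) (hb₁ : b ≠ i₁) (hb₂ : b ≠ j₁) :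
    (Finset.univ.filter
      (fun σ : Equiv.Perm (Fin n) => σ j₁ < σ i₁ ∧ σ⁻¹ i₂ = i₁ ∧ σ⁻¹ j₂ = b)).card =
      (i₂ : ℕ) * (n - 3).factorial := by
  classical
  have hrw : (Finset.univ.filter
      (fun σ : Equiv.Perm (Fin n) => σ j₁ < σ i₁ ∧ σ⁻¹ i₂ = i₁ ∧ σ⁻¹ j₂ = b))
      = Finset.univ.filter
      (fun σ : Equiv.Perm (Fin n) => σ i₁ = i₂ ∧ σ b = j₂ ∧ σ j₁ < i₂) := by
    apply Finset.filter_congr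
    intro σ _
    rw [Equiv.Perm.inv_eq_iff_eq, Equiv.Perm.inv_eq_iff_eq]
    constructor
    · rintro ⟨hlt, rfl, rfl⟩; exact ⟨rfl, rfl, hlt⟩
    · rintro ⟨hi, hb, hlt⟩; exact ⟨hi ▸ hlt, hi.symm, hb.symm⟩
  rw [hrw]
  rw [Finset.card_eq_sum_card_fiberwise
    (f := fun σ : Equiv.Perm (Fin n) => σ j₁) (t := Finset.Iio i₂)
    (fun σ hσ => by
      simp only [Finset.mem_coe, Finset.mem_filter] at hσ
      exact Finset.mem_Iio.2 hσ.2.2.2)]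
  have hterm : ∀ k ∈ Finset.Iio i₂,
      ((Finset.univ.filter
        (fun σ : Equiv.Perm (Fin n) => σ i₁ = i₂ ∧ σ b = j₂ ∧ σ j₁ < i₂)).filter
        (fun σ => σ j₁ = k)).card = (n - 3).factorial := by
    intro k hk
    rw [Finset.mem_Iio] at hk
    rw [Finset.filter_filter]
    have : (Finset.univ.filter
        (fun σ : Equiv.Perm (Fin n) => (σ i₁ = i₂ ∧ σ b = j₂ ∧ σ j₁ < i₂) ∧ σ j₁ = k))
        = Finset.univ.filter
        (fun σ : Equiv.Perm (Fin n) => σ i₁ = i₂ ∧ σ b = j₂ ∧ σ j₁ = k) := by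
      apply Finset.filter_congr
      intro σ _
      constructor
      · rintro ⟨⟨u, v, _⟩, w⟩; exact ⟨u, v, w⟩
      · rintro ⟨u, v, w⟩; exact ⟨⟨u, v, w ▸ hk⟩, w⟩
    rw [this]
    exact card_map3 i₁ b j₁ i₂ j₂ k hb₁.symm h₁.ne hb₂ h₂.ne hk.ne' (hk.trans h₂).ne'
  rw [Finset.sum_congr rfl hterm, Finset.sum_const, Fin.card_Iio, smul_eq_mul]
end

section
/- Let n ≥ 2 and let P = (P_{i,j}) be an n×n matrix over ℝ[X₁,…,X_k] such that every entry P_{i,j} is a nonzero polynomial with nonnegative coefficients, and all row sums equal a common polynomial P_n. Then P_n is an eigenvalue of P and its eigenspace is spanned by the all-ones vector. -/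
open MvPolynomial

lemma evalPos_aux {k : ℕ} (p : MvPolynomial (Fin k) ℝ) (hp : p ≠ 0)
    (hc : ∀ m, 0 ≤ coeff m p) (y : Fin k → ℝ) (hy : ∀ i, 0 < y i) :
    0 < eval y p := by
  rw [eval_eq]
  obtain ⟨m, hm⟩ := ne_zero_iff.mp hp
  apply Finset.sum_pos'
  · intro d _
    exact mul_nonneg (hc d) (Finset.prod_nonneg fun i _ => (pow_pos (hy i) _).le)
  · exact ⟨m, mem_support_iff.mpr hm,
      mul_pos (lt_of_le_of_ne (hc m) (Ne.symm hm))
        (Finset.prod_pos fun i _ => pow_pos (hy i) _)⟩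

lemma eval_aeval_aux {k : ℕ} (x : Fin k → ℝ) (t : ℝ) (p : MvPolynomial (Fin k) ℝ) :
    Polynomial.eval t
      (MvPolynomial.aeval (fun i => Polynomial.C (x i) + Polynomial.X) p : Polynomial ℝ) =
    eval (fun i => x i + t) p := by
  have h := MvPolynomial.comp_aeval (f := fun i => Polynomial.C (x i) + Polynomial.X)
    (Polynomial.aeval t : Polynomial ℝ →ₐ[ℝ] ℝ)
  have h2 := AlgHom.congr_fun h p
  simp only [AlgHom.coe_comp, Function.comp_apply] at h2
  rw [Polynomial.coe_aeval_eq_eval] at h2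
  rw [h2]
  simp only [Polynomial.eval_add, Polynomial.eval_C, Polynomial.eval_X]
  rw [← MvPolynomial.coe_aeval_eq_eval]
  rfl

lemma vanish_aux {k : ℕ} (p : MvPolynomial (Fin k) ℝ)
    (h : ∀ y : Fin k → ℝ, (∀ i, 0 < y i) → eval y p = 0) : p = 0 := by
  apply MvPolynomial.funext
  intro x
  have hF : (MvPolynomial.aeval (fun i => Polynomial.C (x i) + Polynomial.X) p : Polynomial ℝ)
      = 0 := by
    apply Polynomial.eq_zero_of_infinite_isRoot
    apply Set.Infinite.mono (s := Set.Ioi (∑ i, |x i|))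
    · intro t ht
      have ht' : ∑ i, |x i| < t := ht
      show Polynomial.IsRoot _ t
      unfold Polynomial.IsRoot
      rw [eval_aeval_aux]
      apply h
      intro i
      have h1 : |x i| ≤ ∑ j, |x j| :=
        Finset.single_le_sum (fun j _ => abs_nonneg (x j)) (Finset.mem_univ i)
      have h2 : -x i ≤ |x i| := neg_le_abs _
      linarith
    · exact Set.Ioi_infinite _
  have h3 := eval_aeval_aux x 0 p
  rw [hF] at h3
  simp only [Polynomial.eval_zero] at h3
  have hx : (fun i => x i + 0) = x := by funext i; ring
  rw [hx] at h3
  rw [map_zero]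
  exact h3.symm

theorem stmt_10 (n k : ℕ) (hn : 2 ≤ n)
    (P : Matrix (Fin n) (Fin n) (MvPolynomial (Fin k) ℝ))
    (Pn : MvPolynomial (Fin k) ℝ)
    (hne : ∀ i j, P i j ≠ 0)
    (hnonneg : ∀ i j m, 0 ≤ MvPolynomial.coeff m (P i j))
    (hrow : ∀ i, ∑ j, P i j = Pn) :
    P.mulVec (fun _ => 1) = Pn • ((fun _ => 1) : Fin n → MvPolynomial (Fin k) ℝ) ∧
      ∀ v : Fin n → MvPolynomial (Fin k) ℝ,
        P.mulVec v = Pn • v → ∃ c, v = fun _ => c := by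
  have hnn : Nonempty (Fin n) := ⟨⟨0, by omega⟩⟩
  constructor
  · funext i
    simp [Matrix.mulVec, dotProduct, hrow i]
  · intro v hv
    have z : Fin n := ⟨0, by omega⟩
    refine ⟨v ⟨0, by omega⟩, funext fun j => ?_⟩
    have key : v j - v ⟨0, by omega⟩ = 0 := by
      apply vanish_aux
      intro y hy
      set A : Matrix (Fin n) (Fin n) ℝ := fun a b => eval y (P a b) with hA
      set w : Fin n → ℝ := fun a => eval y (v a) with hw
      have hApos : ∀ a b, 0 < A a b := fun a b =>
        evalPos_aux _ (hne a b) (hnonneg a b) y hy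
      have hrowA : ∀ a, ∑ b, A a b = eval y Pn := by
        intro a
        rw [← hrow a, map_sum]
      have heig : ∀ a, ∑ b, A a b * w b = eval y Pn * w a := by
        intro a
        have h1 := congrFun hv a
        simp only [Matrix.mulVec, dotProduct, Pi.smul_apply, smul_eq_mul] at h1
        have h2 := congrArg (eval y) h1
        simpa [map_sum] using h2
      obtain ⟨i0, hi0⟩ := Finite.exists_max w
      have hsum : ∑ b, A i0 b * (w i0 - w b) = 0 := by
        have h3 : ∑ b, A i0 b * (w i0 - w b)
            = (∑ b, A i0 b) * w i0 - ∑ b, A i0 b * w b := by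
          rw [Finset.sum_mul, ← Finset.sum_sub_distrib]
          exact Finset.sum_congr rfl fun b _ => by ring
        rw [h3, hrowA, heig]
        ring
      have hall : ∀ b, w b = w i0 := by
        intro b
        have h0 := (Finset.sum_eq_zero_iff_of_nonneg
          (fun c _ => mul_nonneg (hApos i0 c).le (by linarith [hi0 c]))).mp hsum b
          (Finset.mem_univ b)
        rcases mul_eq_zero.mp h0 with h | h
        · exact absurd h (hApos i0 b).ne'
        · linarith
      have h4 : eval y (v j - v ⟨0, by omega⟩) = w j - w ⟨0, by omega⟩ := by simp [hw]
      rw [h4, hall j, hall ⟨0, by omega⟩]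
      ring
    exact sub_eq_zero.mp key
end

section
/- Let n ≥ 3. For permutations π, τ ∈ S_n define D(π,τ) = des(π τ⁻¹), the number of descents of π τ⁻¹, giving an n!×n! real matrix D_n. Then D_n satisfies the polynomial identity D_n·(D_n − C(n,2)(n-1)!·I)·(D_n + (n-1)!·I) = 0. -/
open Finset Equiv


/-- The number of descents of a permutation of `Fin n`. -/
def desCount {n : ℕ} (σ : Equiv.Perm (Fin n)) : ℕ :=
  (Finset.univ.filter
    (fun p : Fin n × Fin n => (p.2 : ℕ) = (p.1 : ℕ) + 1 ∧ σ p.2 < σ p.1)).card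

lemma desCount_eq {N : ℕ} (σ : Perm (Fin (N+1))) :
    desCount σ = ∑ k : Fin N, if σ k.succ < σ k.castSucc then 1 else 0 := by
  rw [← Finset.card_filter]
  unfold desCount
  have himg : (Finset.univ.filter
      (fun p : Fin (N+1) × Fin (N+1) => (p.2 : ℕ) = (p.1 : ℕ) + 1 ∧ σ p.2 < σ p.1))
      = (Finset.univ.filter (fun k : Fin N => σ k.succ < σ k.castSucc)).image
        (fun k => (k.castSucc, k.succ)) := by
    ext p
    simp only [Finset.mem_filter, Finset.mem_univ, true_and, Finset.mem_image]
    constructor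
    · rintro ⟨h1, h2⟩
      have hp1 : (p.1 : ℕ) < N := by
        have := p.2.isLt; omega
      refine ⟨⟨p.1, hp1⟩, ?_, ?_⟩
      · have e2 : (⟨p.1, hp1⟩ : Fin N).succ = p.2 := by
          apply Fin.ext; simp [h1]
        have e1 : (⟨p.1, hp1⟩ : Fin N).castSucc = p.1 := by
          apply Fin.ext; simp
        rw [e1, e2]; exact h2
      · have e2 : (⟨p.1, hp1⟩ : Fin N).succ = p.2 := by
          apply Fin.ext; simp [h1]
        have e1 : (⟨p.1, hp1⟩ : Fin N).castSucc = p.1 := by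
          apply Fin.ext; simp
        rw [Prod.ext_iff]; exact ⟨e1, e2⟩
    · rintro ⟨k, hk, rfl⟩
      exact ⟨by simp, hk⟩
  rw [himg, Finset.card_image_of_injective]
  intro x y h
  have := congrArg Prod.fst h
  simpa [Fin.ext_iff] using this


lemma swap_lt_iff {N : ℕ} (k : Fin N) {a b : Fin (N+1)}
    (hab : a ≠ b)
    (h1 : ¬(a = k.castSucc ∧ b = k.succ)) (h2 : ¬(a = k.succ ∧ b = k.castSucc)) :
    Equiv.swap k.castSucc k.succ a < Equiv.swap k.castSucc k.succ b ↔ a < b := by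
  have hks : (k.succ : ℕ) = (k.castSucc : ℕ) + 1 := by simp
  rcases eq_or_ne a k.castSucc with rfl | ha1
  · rcases eq_or_ne b k.succ with rfl | hb2
    · exact absurd ⟨rfl, rfl⟩ h1
    · have hb1 : b ≠ k.castSucc := hab.symm
      rw [Equiv.swap_apply_left, Equiv.swap_apply_of_ne_of_ne hb1 hb2]
      have e1 : (b : ℕ) ≠ (k.castSucc : ℕ) := fun h => hb1 (Fin.ext h)
      have e2 : (b : ℕ) ≠ (k.succ : ℕ) := fun h => hb2 (Fin.ext h)
      simp only [Fin.lt_def] at *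
      omega
  · rcases eq_or_ne a k.succ with rfl | ha2
    · rcases eq_or_ne b k.castSucc with rfl | hb1
      · exact absurd ⟨rfl, rfl⟩ h2
      · have hb2 : b ≠ k.succ := hab.symm
        rw [Equiv.swap_apply_right, Equiv.swap_apply_of_ne_of_ne hb1 hb2]
        have e1 : (b : ℕ) ≠ (k.succ : ℕ) := fun h => hb2 (Fin.ext h)
        have e2 : (b : ℕ) ≠ (k.castSucc : ℕ) := fun h => hb1 (Fin.ext h)
        simp only [Fin.lt_def] at *
        omega
    · rw [Equiv.swap_apply_of_ne_of_ne ha1 ha2]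
      rcases eq_or_ne b k.castSucc with rfl | hb1
      · rw [Equiv.swap_apply_left]
        have e1 : (a : ℕ) ≠ (k.castSucc : ℕ) := fun h => ha1 (Fin.ext h)
        have e2 : (a : ℕ) ≠ (k.succ : ℕ) := fun h => ha2 (Fin.ext h)
        simp only [Fin.lt_def] at *
        omega
      · rcases eq_or_ne b k.succ with rfl | hb2
        · rw [Equiv.swap_apply_right]
          have e1 : (a : ℕ) ≠ (k.succ : ℕ) := fun h => ha2 (Fin.ext h)
          have e2 : (a : ℕ) ≠ (k.castSucc : ℕ) := fun h => ha1 (Fin.ext h)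
          simp only [Fin.lt_def] at *
          omega
        · rw [Equiv.swap_apply_of_ne_of_ne hb1 hb2]


lemma card_fiber_congr {N : ℕ} (a c : Fin (N+1)) (b d b' d' : Fin (N+1))
    (hbd : b ≠ d) (hbd' : b' ≠ d') :
    (univ.filter (fun t : Perm (Fin (N+1)) => t a = b ∧ t c = d)).card
      = (univ.filter (fun t : Perm (Fin (N+1)) => t a = b' ∧ t c = d')).card := by
  set π : Perm (Fin (N+1)) := (Equiv.swap (Equiv.swap b b' d) d') * (Equiv.swap b b') with hπ
  have hπb : π b = b' := by
    rw [hπ]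
    simp only [Equiv.Perm.mul_apply, Equiv.swap_apply_left]
    apply Equiv.swap_apply_of_ne_of_ne
    · intro h
      have h2 := congrArg (Equiv.swap b b') h
      rw [Equiv.swap_apply_right, Equiv.swap_apply_self] at h2
      exact hbd h2
    · exact fun h => hbd' h
  have hπd : π d = d' := by
    rw [hπ]
    simp only [Equiv.Perm.mul_apply]
    exact Equiv.swap_apply_left _ _
  apply Finset.card_bij' (i := fun t _ => π * t) (j := fun t _ => π⁻¹ * t)
  · intro t ht
    simp only [Finset.mem_filter, Finset.mem_univ, true_and] at ht ⊢
    simp [Equiv.Perm.mul_apply, ht.1, ht.2, hπb, hπd]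
  · intro t ht
    simp only [Finset.mem_filter, Finset.mem_univ, true_and] at ht ⊢
    constructor
    · rw [Equiv.Perm.mul_apply, ht.1, ← hπb, Equiv.Perm.inv_def, Equiv.symm_apply_apply]
    · rw [Equiv.Perm.mul_apply, ht.2, ← hπd, Equiv.Perm.inv_def, Equiv.symm_apply_apply]
  · intro t _; simp [← mul_assoc]
  · intro t _; simp [← mul_assoc]


lemma card_fiber {N : ℕ} (hN : 1 ≤ N) (a c b d : Fin (N+1)) (hac : a ≠ c) (hbd : b ≠ d) :
    (univ.filter (fun t : Perm (Fin (N+1)) => t a = b ∧ t c = d)).card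
      = (N-1).factorial := by
  have hpart : (univ : Finset (Perm (Fin (N+1)))).card
      = ∑ p ∈ (univ : Finset (Fin (N+1))).offDiag,
          ((univ : Finset (Perm (Fin (N+1)))).filter (fun t => (t a, t c) = p)).card := by
    apply Finset.card_eq_sum_card_fiberwise
    intro t _
    rw [Finset.mem_coe, Finset.mem_offDiag]
    exact ⟨Finset.mem_univ _, Finset.mem_univ _, fun h => hac (t.injective h)⟩
  have hconst : ∀ p ∈ (univ : Finset (Fin (N+1))).offDiag,
      ((univ : Finset (Perm (Fin (N+1)))).filter (fun t => (t a, t c) = p)).card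
      = (univ.filter (fun t : Perm (Fin (N+1)) => t a = b ∧ t c = d)).card := by
    intro p hp
    rw [Finset.mem_offDiag] at hp
    have : ((univ : Finset (Perm (Fin (N+1)))).filter (fun t => (t a, t c) = p))
        = (univ.filter (fun t : Perm (Fin (N+1)) => t a = p.1 ∧ t c = p.2)) := by
      apply Finset.filter_congr
      intro t _
      simp [Prod.ext_iff]
    rw [this]
    exact card_fiber_congr a c p.1 p.2 b d hp.2.2 hbd
  rw [Finset.sum_congr rfl hconst, Finset.sum_const, smul_eq_mul] at hpart
  rw [Finset.offDiag_card] at hpart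
  have hcards : (univ : Finset (Fin (N+1))).card = N + 1 := by simp
  rw [hcards] at hpart
  have hcardP : (univ : Finset (Perm (Fin (N+1)))).card = (N+1).factorial := by
    simp [Finset.card_univ, Fintype.card_perm]
  rw [hcardP] at hpart
  obtain ⟨M, rfl⟩ : ∃ M, N = M + 1 := ⟨N - 1, by omega⟩
  have hfac : (M+2).factorial = ((M+2)*(M+1)) * M.factorial := by
    rw [Nat.factorial_succ, Nat.factorial_succ]; ring
  have hco : (M + 1 + 1) * (M + 1 + 1) - (M + 1 + 1) = (M+2)*(M+1) := by ring_nf; omega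
  rw [hco, hfac] at hpart
  have hpos : 0 < (M+2)*(M+1) := by positivity
  have := Nat.eq_of_mul_eq_mul_left hpos hpart
  simpa using this.symm


lemma card_descent_at {N : ℕ} (l : Fin N) :
    (univ.filter (fun t : Perm (Fin (N+1)) => t l.succ < t l.castSucc)).card * 2
      = (N+1).factorial := by
  have hne : l.castSucc ≠ l.succ := by
    intro h
    have := congrArg Fin.val h
    simp at this
  have hbij : (univ.filter (fun t : Perm (Fin (N+1)) => t l.succ < t l.castSucc)).card
      = (univ.filter (fun t : Perm (Fin (N+1)) => ¬ t l.succ < t l.castSucc)).card := by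
    apply Finset.card_bij' (i := fun t _ => t * Equiv.swap l.castSucc l.succ)
      (j := fun t _ => t * Equiv.swap l.castSucc l.succ)
    · intro t ht
      simp only [Finset.mem_filter, Finset.mem_univ, true_and] at ht ⊢
      simp only [Equiv.Perm.mul_apply, Equiv.swap_apply_left, Equiv.swap_apply_right]
      exact not_lt_of_gt ht
    · intro t ht
      simp only [Finset.mem_filter, Finset.mem_univ, true_and] at ht ⊢
      simp only [Equiv.Perm.mul_apply, Equiv.swap_apply_left, Equiv.swap_apply_right]
      have hne2 : t l.castSucc ≠ t l.succ := fun h => hne (t.injective h)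
      exact lt_of_le_of_ne (not_lt.mp ht) hne2
    · intro t _
      rw [mul_assoc, Equiv.swap_mul_self, mul_one]
    · intro t _
      rw [mul_assoc, Equiv.swap_mul_self, mul_one]
  have hsplit : (univ.filter (fun t : Perm (Fin (N+1)) => t l.succ < t l.castSucc)).card
      + (univ.filter (fun t : Perm (Fin (N+1)) => ¬ t l.succ < t l.castSucc)).card
      = (univ : Finset (Perm (Fin (N+1)))).card :=
    Finset.card_filter_add_card_filter_not _
  have hcardP : (univ : Finset (Perm (Fin (N+1)))).card = (N+1).factorial := by
    simp [Finset.card_univ, Fintype.card_perm]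
  omega


lemma split_card {α : Type*} (s : Finset α) (p q : α → Prop)
    [DecidablePred p] [DecidablePred q] [DecidablePred (fun x => p x ∧ q x)]
    [DecidablePred (fun x => p x ∧ ¬ q x)] :
    (s.filter (fun x => p x ∧ q x)).card + (s.filter (fun x => p x ∧ ¬ q x)).card
      = (s.filter p).card := by
  classical
  have h1 : s.filter (fun x => p x ∧ q x) = (s.filter p).filter q := by
    ext x; simp [and_assoc]
  have h2 : s.filter (fun x => p x ∧ ¬ q x) = (s.filter p).filter (fun x => ¬ q x) := by
    ext x; simp [and_assoc]
  rw [h1, h2]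
  exact Finset.card_filter_add_card_filter_not _

lemma card_filter_iff {α : Type*} (s : Finset α) (p q : α → Prop)
    [DecidablePred p] [DecidablePred q] (h : ∀ x ∈ s, p x ↔ q x) :
    (s.filter p).card = (s.filter q).card := by
  congr 1
  ext x
  simp only [Finset.mem_filter]
  exact and_congr_right fun hx => h x hx


lemma key {N : ℕ} (hN : 1 ≤ N) (g : Perm (Fin (N+1))) (k l : Fin N) :
    4 * (univ.filter (fun t : Perm (Fin (N+1)) =>
        t l.succ < t l.castSucc ∧ g (t⁻¹ k.succ) < g (t⁻¹ k.castSucc))).card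
    + 4 * (N-1).factorial * (if g l.succ < g l.castSucc then 1 else 0)
    = (N+1).factorial + 2 * (N-1).factorial := by
  classical
  have hlc : l.castSucc ≠ l.succ := by
    intro h; have := congrArg Fin.val h; simp at this
  have hkc : k.castSucc ≠ k.succ := by
    intro h; have := congrArg Fin.val h; simp at this
  have hklt : k.castSucc < k.succ := by
    rw [Fin.lt_def]; simp
  set A : Perm (Fin (N+1)) → Prop := fun t => t l.succ < t l.castSucc with hA
  set B : Perm (Fin (N+1)) → Prop :=
    fun t => g (t⁻¹ k.succ) < g (t⁻¹ k.castSucc) with hB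
  set Es : Perm (Fin (N+1)) → Prop := fun t =>
    (t l.castSucc = k.succ ∧ t l.succ = k.castSucc)
      ∨ (t l.castSucc = k.castSucc ∧ t l.succ = k.succ) with hEs
  -- the inverse images on E'
  have hinv : ∀ t : Perm (Fin (N+1)), t l.castSucc = k.succ → t l.succ = k.castSucc →
      t⁻¹ k.succ = l.castSucc ∧ t⁻¹ k.castSucc = l.succ := by
    intro t h1 h2
    constructor
    · rw [← h1]; exact t.symm_apply_apply _
    · rw [← h2]; exact t.symm_apply_apply _
  -- c1 : A ∧ B ∧ Es
  have hc1 : (univ.filter (fun t => (A t ∧ B t) ∧ Es t)).card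
      = if g l.castSucc < g l.succ then (N-1).factorial else 0 := by
    have hpred : ∀ t : Perm (Fin (N+1)), ((A t ∧ B t) ∧ Es t) ↔
        ((t l.castSucc = k.succ ∧ t l.succ = k.castSucc) ∧ g l.castSucc < g l.succ) := by
      intro t
      constructor
      · rintro ⟨⟨hAt, hBt⟩, hEt⟩
        rcases hEt with ⟨h1, h2⟩ | ⟨h1, h2⟩
        · obtain ⟨e1, e2⟩ := hinv t h1 h2
          have hBt' : g (t⁻¹ k.succ) < g (t⁻¹ k.castSucc) := hBt
          rw [e1, e2] at hBt'
          exact ⟨⟨h1, h2⟩, hBt'⟩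
        · exfalso
          have hAt' : t l.succ < t l.castSucc := hAt
          rw [h1, h2] at hAt'
          exact absurd hAt' (lt_asymm hklt)
      · rintro ⟨⟨h1, h2⟩, hg⟩
        obtain ⟨e1, e2⟩ := hinv t h1 h2
        refine ⟨⟨?_, ?_⟩, Or.inl ⟨h1, h2⟩⟩
        · show t l.succ < t l.castSucc
          rw [h1, h2]; exact hklt
        · show g (t⁻¹ k.succ) < g (t⁻¹ k.castSucc)
          rw [e1, e2]; exact hg
    rw [card_filter_iff univ _ _ (fun t _ => hpred t)]
    by_cases hg : g l.castSucc < g l.succ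
    · rw [if_pos hg]
      rw [card_filter_iff univ _ _ (fun t _ => and_iff_left hg)]
      exact card_fiber hN _ _ _ _ hlc hkc.symm
    · rw [if_neg hg]
      rw [Finset.filter_false_of_mem (fun t _ => fun h => hg h.2)]
      exact Finset.card_empty
  -- bijection : c2 = c3
  have hc23 : (univ.filter (fun t => (A t ∧ B t) ∧ ¬ Es t)).card
      = (univ.filter (fun t => (A t ∧ ¬ B t) ∧ ¬ Es t)).card := by
    have hswapinv : ∀ t : Perm (Fin (N+1)),
        (Equiv.swap k.castSucc k.succ * t)⁻¹
          = t⁻¹ * Equiv.swap k.castSucc k.succ := by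
      intro t; rw [mul_inv_rev, Equiv.swap_inv]
    have hAiff : ∀ t : Perm (Fin (N+1)), ¬ Es t →
        (A (Equiv.swap k.castSucc k.succ * t) ↔ A t) := by
      intro t hEt
      simp only [hEs] at hEt
      push_neg at hEt
      rw [hA]
      simp only [Equiv.Perm.mul_apply]
      apply swap_lt_iff k
      · intro h; exact hlc (t.injective h).symm
      · intro ⟨h1, h2⟩
        exact (hEt.1 h2) h1
      · intro ⟨h1, h2⟩
        exact (hEt.2 h2) h1
    have hBiff : ∀ t : Perm (Fin (N+1)),
        (B (Equiv.swap k.castSucc k.succ * t) ↔ ¬ B t) := by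
      intro t
      rw [hB]
      simp only [hswapinv, Equiv.Perm.mul_apply, Equiv.swap_apply_left,
        Equiv.swap_apply_right]
      have hne : g (t⁻¹ k.castSucc) ≠ g (t⁻¹ k.succ) := by
        intro h
        exact hkc (t⁻¹.injective (g.injective h))
      constructor
      · exact fun h => lt_asymm h
      · intro h
        exact lt_of_le_of_ne (not_lt.mp h) hne
    have hEiff : ∀ t : Perm (Fin (N+1)),
        (Es (Equiv.swap k.castSucc k.succ * t) ↔ Es t) := by
      intro t
      rw [hEs]
      simp only [Equiv.Perm.mul_apply]
      constructor
      · rintro (⟨h1, h2⟩ | ⟨h1, h2⟩)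
        · refine Or.inr ⟨?_, ?_⟩
          · have := congrArg (Equiv.swap k.castSucc k.succ) h1
            rwa [Equiv.swap_apply_self, Equiv.swap_apply_right] at this
          · have := congrArg (Equiv.swap k.castSucc k.succ) h2
            rwa [Equiv.swap_apply_self, Equiv.swap_apply_left] at this
        · refine Or.inl ⟨?_, ?_⟩
          · have := congrArg (Equiv.swap k.castSucc k.succ) h1
            rwa [Equiv.swap_apply_self, Equiv.swap_apply_left] at this
          · have := congrArg (Equiv.swap k.castSucc k.succ) h2
            rwa [Equiv.swap_apply_self, Equiv.swap_apply_right] at this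
      · rintro (⟨h1, h2⟩ | ⟨h1, h2⟩)
        · exact Or.inr ⟨by rw [h1, Equiv.swap_apply_right], by rw [h2, Equiv.swap_apply_left]⟩
        · exact Or.inl ⟨by rw [h1, Equiv.swap_apply_left], by rw [h2, Equiv.swap_apply_right]⟩
    apply Finset.card_bij' (i := fun t _ => Equiv.swap k.castSucc k.succ * t)
      (j := fun t _ => Equiv.swap k.castSucc k.succ * t)
    · intro t ht
      simp only [Finset.mem_filter, Finset.mem_univ, true_and] at ht ⊢
      obtain ⟨⟨hAt, hBt⟩, hEt⟩ := ht
      refine ⟨⟨(hAiff t hEt).mpr hAt, ?_⟩, fun h => hEt ((hEiff t).mp h)⟩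
      rw [hBiff t]
      exact fun h => h hBt
    · intro t ht
      simp only [Finset.mem_filter, Finset.mem_univ, true_and] at ht ⊢
      obtain ⟨⟨hAt, hBt⟩, hEt⟩ := ht
      refine ⟨⟨(hAiff t hEt).mpr hAt, ?_⟩, fun h => hEt ((hEiff t).mp h)⟩
      rw [hBiff t]
      exact hBt
    · intro t _
      rw [← mul_assoc, Equiv.swap_mul_self, one_mul]
    · intro t _
      rw [← mul_assoc, Equiv.swap_mul_self, one_mul]
  -- A ∧ Es has card (N-1)!
  have hAE : (univ.filter (fun t => A t ∧ Es t)).card = (N-1).factorial := by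
    have hpred : ∀ t : Perm (Fin (N+1)), (A t ∧ Es t) ↔
        (t l.castSucc = k.succ ∧ t l.succ = k.castSucc) := by
      intro t
      constructor
      · rintro ⟨hAt, hEt⟩
        rcases hEt with ⟨h1, h2⟩ | ⟨h1, h2⟩
        · exact ⟨h1, h2⟩
        · exfalso
          have hAt' : t l.succ < t l.castSucc := hAt
          rw [h1, h2] at hAt'
          exact absurd hAt' (lt_asymm hklt)
      · rintro ⟨h1, h2⟩
        refine ⟨?_, Or.inl ⟨h1, h2⟩⟩
        show t l.succ < t l.castSucc
        rw [h1, h2]; exact hklt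
    rw [card_filter_iff univ _ _ (fun t _ => hpred t)]
    exact card_fiber hN _ _ _ _ hlc hkc.symm
  -- splits
  have hsplit1 : (univ.filter (fun t => (A t ∧ B t) ∧ Es t)).card
      + (univ.filter (fun t => (A t ∧ B t) ∧ ¬ Es t)).card
      = (univ.filter (fun t => A t ∧ B t)).card :=
    split_card univ (fun t => A t ∧ B t) Es
  have hsplit2 : (univ.filter (fun t => (A t ∧ Es t))).card
      + (univ.filter (fun t => (A t ∧ ¬ Es t))).card
      = (univ.filter A).card :=
    split_card univ A Es
  have hsplit3 : (univ.filter (fun t => (A t ∧ ¬ Es t) ∧ B t)).card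
      + (univ.filter (fun t => (A t ∧ ¬ Es t) ∧ ¬ B t)).card
      = (univ.filter (fun t => A t ∧ ¬ Es t)).card :=
    split_card univ (fun t => A t ∧ ¬ Es t) B
  have hre1 : (univ.filter (fun t => (A t ∧ ¬ Es t) ∧ B t)).card
      = (univ.filter (fun t => (A t ∧ B t) ∧ ¬ Es t)).card := by
    exact card_filter_iff univ _ _ (fun t _ => by tauto)
  have hre2 : (univ.filter (fun t => (A t ∧ ¬ Es t) ∧ ¬ B t)).card
      = (univ.filter (fun t => (A t ∧ ¬ B t) ∧ ¬ Es t)).card := by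
    exact card_filter_iff univ _ _ (fun t _ => by tauto)
  have hcA : (univ.filter A).card * 2 = (N+1).factorial := card_descent_at l
  -- assemble
  have hgoal : (univ.filter (fun t : Perm (Fin (N+1)) =>
      t l.succ < t l.castSucc ∧ g (t⁻¹ k.succ) < g (t⁻¹ k.castSucc))).card
      = (univ.filter (fun t => A t ∧ B t)).card :=
    card_filter_iff univ _ _ (fun t _ => Iff.rfl)
  rw [hgoal]
  have hgne : g l.castSucc ≠ g l.succ := fun h => hlc (g.injective h)
  by_cases hg : g l.succ < g l.castSucc
  · have hg2 : ¬ g l.castSucc < g l.succ := lt_asymm hg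
    rw [if_pos hg]
    rw [if_neg hg2] at hc1
    omega
  · have hg2 : g l.castSucc < g l.succ := lt_of_le_of_ne (not_lt.mp hg) hgne
    rw [if_neg hg]
    rw [if_pos hg2] at hc1
    omega


lemma sum_des {N : ℕ} :
    (∑ σ : Perm (Fin (N+1)), desCount σ) * 2 = N * (N+1).factorial := by
  classical
  simp_rw [desCount_eq]
  rw [Finset.sum_comm, Finset.sum_mul]
  have h : ∀ l : Fin N,
      (∑ σ : Perm (Fin (N+1)), if σ l.succ < σ l.castSucc then 1 else 0) * 2
        = (N+1).factorial := by
    intro l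
    rw [← Finset.card_filter]
    exact card_descent_at l
  rw [Finset.sum_congr rfl (fun l _ => h l), Finset.sum_const, Finset.card_univ,
    Fintype.card_fin, smul_eq_mul]

lemma conv_des {N : ℕ} (hN : 1 ≤ N) (g : Perm (Fin (N+1))) :
    4 * (∑ t : Perm (Fin (N+1)), desCount (g * t⁻¹) * desCount t)
      + 4 * N.factorial * desCount g
      = N^2 * ((N+1).factorial + 2 * (N-1).factorial) := by
  classical
  have hS : (∑ t : Perm (Fin (N+1)), desCount (g * t⁻¹) * desCount t)
      = ∑ k : Fin N, ∑ l : Fin N,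
        (univ.filter (fun t : Perm (Fin (N+1)) =>
          t l.succ < t l.castSucc ∧ g (t⁻¹ k.succ) < g (t⁻¹ k.castSucc))).card := by
    simp_rw [desCount_eq, Finset.sum_mul_sum]
    rw [Finset.sum_comm]
    refine Finset.sum_congr rfl (fun k _ => ?_)
    rw [Finset.sum_comm]
    refine Finset.sum_congr rfl (fun l _ => ?_)
    rw [Finset.card_filter]
    refine Finset.sum_congr rfl (fun t _ => ?_)
    simp only [Equiv.Perm.mul_apply]
    by_cases h1 : t l.succ < t l.castSucc <;>
      by_cases h2 : g (t⁻¹ k.succ) < g (t⁻¹ k.castSucc) <;>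
      simp [h1, h2] <;> congr
  have hsum : ∑ k : Fin N, ∑ l : Fin N,
      (4 * (univ.filter (fun t : Perm (Fin (N+1)) =>
          t l.succ < t l.castSucc ∧ g (t⁻¹ k.succ) < g (t⁻¹ k.castSucc))).card
        + 4 * (N-1).factorial * (if g l.succ < g l.castSucc then 1 else 0))
      = N^2 * ((N+1).factorial + 2 * (N-1).factorial) := by
    rw [Finset.sum_congr rfl (fun k _ => Finset.sum_congr rfl (fun l _ => key hN g k l))]
    simp [Finset.sum_const, Finset.card_univ, Fintype.card_fin, pow_two]
    ring
  rw [← hsum]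
  simp_rw [Finset.sum_add_distrib, ← Finset.mul_sum]
  rw [hS]
  have hx : ∑ k : Fin N, ∑ l : Fin N,
      (4 * (N-1).factorial * if g l.succ < g l.castSucc then 1 else 0)
      = 4 * N.factorial * desCount g := by
    rw [desCount_eq g]
    simp_rw [← Finset.mul_sum]
    rw [Finset.sum_const, Finset.card_univ, Fintype.card_fin, smul_eq_mul]
    have h2 : N * (N-1).factorial = N.factorial := Nat.mul_factorial_pred (by omega)
    rw [← h2]
    ring
  congr 1
  rw [← hx]
  simp_rw [Finset.mul_sum]



theorem stmt_11 (n : ℕ) (hn : 3 ≤ n)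
    (D : Matrix (Equiv.Perm (Fin n)) (Equiv.Perm (Fin n)) ℝ)
    (hD : ∀ π τ, D π τ = desCount (π * τ⁻¹)) :
    D * (D - ((n.choose 2 * (n - 1).factorial : ℕ) : ℝ) • 1) *
      (D + (((n - 1).factorial : ℕ) : ℝ) • 1) = 0 := by
  classical
  obtain ⟨N, rfl⟩ : ∃ N, n = N + 1 := ⟨n - 1, by omega⟩
  have hN : 1 ≤ N := by omega
  simp only [Nat.add_sub_cancel]
  set a : ℝ := (((N+1).choose 2 * N.factorial : ℕ) : ℝ) with ha
  set b : ℝ := ((N.factorial : ℕ) : ℝ) with hb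
  set C : ℝ := ((N:ℝ)^2 * (((N+1).factorial : ℕ) + 2 * (((N-1).factorial : ℕ) : ℝ))) / 4
    with hC
  set J : Matrix (Perm (Fin (N+1))) (Perm (Fin (N+1))) ℝ :=
    Matrix.of (fun _ _ => (1:ℝ)) with hJ
  -- the total descent sum equals the binomial constant
  have hchoose : 2 * ((N+1).choose 2) = (N+1) * N := by
    have heven : 2 ∣ (N+1) * N := by
      rcases Nat.even_or_odd N with he | ho
      · exact Dvd.dvd.mul_left he.two_dvd _
      · exact Dvd.dvd.mul_right (ho.add_one).two_dvd _
    rw [Nat.choose_two_right, Nat.add_sub_cancel, Nat.mul_div_cancel' heven]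
  have htotal : (∑ σ : Perm (Fin (N+1)), desCount σ) = (N+1).choose 2 * N.factorial := by
    have h1 := sum_des (N := N)
    have h2 : ((N+1).choose 2 * N.factorial) * 2 = N * (N+1).factorial := by
      have : (N+1).factorial = (N+1) * N.factorial := Nat.factorial_succ N
      calc ((N+1).choose 2 * N.factorial) * 2 = (2 * ((N+1).choose 2)) * N.factorial := by
            ring
        _ = ((N+1) * N) * N.factorial := by rw [hchoose]
        _ = N * (N+1).factorial := by rw [this]; ring
    omega
  -- row sums
  have hrow : ∀ π : Perm (Fin (N+1)),
      (∑ ρ : Perm (Fin (N+1)), (desCount (π * ρ⁻¹) : ℝ)) = a := by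
    intro π
    have := Fintype.sum_equiv ((Equiv.inv (Perm (Fin (N+1)))).trans (Equiv.mulLeft π))
      (fun ρ => (desCount (π * ρ⁻¹) : ℝ)) (fun σ => (desCount σ : ℝ)) (fun ρ => rfl)
    rw [this, ha, ← Nat.cast_sum]
    exact_mod_cast congrArg (Nat.cast : ℕ → ℝ) htotal
  have hcol : ∀ τ : Perm (Fin (N+1)),
      (∑ ρ : Perm (Fin (N+1)), (desCount (ρ * τ⁻¹) : ℝ)) = a := by
    intro τ
    have := Fintype.sum_equiv (Equiv.mulRight τ⁻¹)
      (fun ρ => (desCount (ρ * τ⁻¹) : ℝ)) (fun σ => (desCount σ : ℝ)) (fun ρ => rfl)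
    rw [this, ha, ← Nat.cast_sum]
    exact_mod_cast congrArg (Nat.cast : ℕ → ℝ) htotal
  -- D * J and J * D
  have hDJ : D * J = a • J := by
    ext π τ
    rw [Matrix.mul_apply]
    simp only [hJ, Matrix.of_apply, Matrix.smul_apply, smul_eq_mul, mul_one]
    rw [Finset.sum_congr rfl (fun ρ _ => by rw [hD π ρ])]
    exact hrow π
  have hJD : J * D = a • J := by
    ext π τ
    rw [Matrix.mul_apply]
    simp only [hJ, Matrix.of_apply, Matrix.smul_apply, smul_eq_mul, mul_one]
    rw [Finset.sum_congr rfl (fun ρ _ => by rw [hD ρ τ, one_mul])]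
    exact hcol τ
  -- D * D
  have hDD : D * D = C • J - b • D := by
    ext π τ
    rw [Matrix.mul_apply]
    have hre : (∑ ρ : Perm (Fin (N+1)), D π ρ * D ρ τ)
        = ∑ t : Perm (Fin (N+1)),
            ((desCount ((π * τ⁻¹) * t⁻¹) : ℝ) * (desCount t : ℝ)) := by
      rw [← Fintype.sum_equiv (Equiv.mulRight τ)
        (fun t => ((desCount ((π * τ⁻¹) * t⁻¹) : ℝ) * (desCount t : ℝ)))
        (fun ρ => D π ρ * D ρ τ) (fun t => ?_)]
      simp only [Equiv.coe_mulRight, hD, mul_inv_rev,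
        mul_inv_cancel_right, mul_assoc, mul_inv_cancel, mul_one]
    rw [hre]
    have hconv := conv_des hN (π * τ⁻¹)
    have hcast : (4:ℝ) * (∑ t : Perm (Fin (N+1)),
          ((desCount ((π * τ⁻¹) * t⁻¹) : ℝ) * (desCount t : ℝ)))
        + 4 * (N.factorial : ℝ) * (desCount (π * τ⁻¹) : ℝ)
        = (N:ℝ)^2 * (((N+1).factorial : ℕ) + 2 * (((N-1).factorial : ℕ) : ℝ)) := by
      have := congrArg (Nat.cast : ℕ → ℝ) hconv
      push_cast at this ⊢
      linarith
    simp only [Matrix.sub_apply, Matrix.smul_apply, hJ, Matrix.of_apply, smul_eq_mul,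
      mul_one, hC, hb]
    rw [hD π τ]
    linarith
  -- final algebra
  have expand : D * (D - a • 1) * (D + b • 1)
      = (D*D)*D + b • (D*D) - a • (D*D) - (a*b) • D := by
    simp only [Matrix.mul_sub, Matrix.sub_mul, Matrix.mul_add, Matrix.add_mul,
      Matrix.mul_smul, Matrix.smul_mul, Matrix.mul_one, smul_smul]
    module
  have h3 : (D*D)*D = (C*a) • J - (b*C) • J + (b*b) • D := by
    rw [hDD, Matrix.sub_mul, Matrix.smul_mul, Matrix.smul_mul, hJD, hDD, smul_smul,
      smul_sub, smul_smul, smul_smul]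
    module
  rw [expand, h3, hDD]
  module
end

section
/- Let n ≥ 3. The matrix D_n = (des(π τ⁻¹))_{π,τ ∈ S_n} is diagonalizable with spectrum {C(n,2)(n-1)!, 0, −(n-1)!}, where the eigenvalue C(n,2)(n-1)! has multiplicity 1, the eigenvalue −(n-1)! has multiplicity C(n,2), and the eigenvalue 0 has multiplicity n! − C(n,2) − 1. -/
open Finset Equiv

namespace Stmt12Aux

variable {n : ℕ}

lemma two_mul_choose_two : ∀ n : ℕ, 2 * n.choose 2 = n * (n - 1) := by
  intro n
  induction n with
  | zero => rfl
  | succ m ih =>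
    rw [Nat.choose_succ_succ, Nat.mul_add, ih, Nat.choose_one_right]
    cases m with
    | zero => rfl
    | succ t => simp [Nat.succ_sub_one]; ring

lemma exists_perm_two {x y x' y' : Fin n} (hxy : x ≠ y) (hxy' : x' ≠ y') :
    ∃ g : Perm (Fin n), g x = x' ∧ g y = y' := by
  refine ⟨(swap (swap x x' y) y') * swap x x', ?_, ?_⟩
  · have h1 : (swap x x') x = x' := swap_apply_left x x'
    have h2 : x' ≠ swap x x' y := by
      intro h
      apply hxy
      have h3 := congrArg (swap x x') h
      rwa [swap_apply_right, swap_apply_self] at h3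
    simp only [Perm.mul_apply, h1]
    exact swap_apply_of_ne_of_ne h2 hxy'
  · simp only [Perm.mul_apply]
    exact swap_apply_left _ _

lemma fiber_card_eq (a b : Fin n) {x y x' y' : Fin n} (hxy : x ≠ y) (hxy' : x' ≠ y') :
    (univ.filter fun ρ : Perm (Fin n) => ρ a = x ∧ ρ b = y).card =
    (univ.filter fun ρ : Perm (Fin n) => ρ a = x' ∧ ρ b = y').card := by
  obtain ⟨g, hg1, hg2⟩ := exists_perm_two hxy hxy'
  refine Finset.card_nbij' (fun ρ => g * ρ) (fun ρ => g⁻¹ * ρ) ?_ ?_ ?_ ?_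
  · intro ρ hρ
    simp only [mem_coe, mem_filter, mem_univ, true_and] at hρ ⊢
    simp [Perm.mul_apply, hρ.1, hρ.2, hg1, hg2]
  · intro ρ hρ
    simp only [mem_coe, mem_filter, mem_univ, true_and] at hρ ⊢
    constructor
    · rw [Perm.mul_apply, hρ.1, ← hg1, ← Perm.mul_apply, inv_mul_cancel, Perm.one_apply]
    · rw [Perm.mul_apply, hρ.2, ← hg2, ← Perm.mul_apply, inv_mul_cancel, Perm.one_apply]
  · intro ρ _; simp [mul_assoc]
  · intro ρ _; simp [mul_assoc]

lemma card_fiber (hn : 2 ≤ n) {a b x y : Fin n} (hab : a ≠ b) (hxy : x ≠ y) :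
    (univ.filter fun ρ : Perm (Fin n) => ρ a = x ∧ ρ b = y).card = (n - 2).factorial := by
  classical
  set N := (univ.filter fun ρ : Perm (Fin n) => ρ a = x ∧ ρ b = y).card with hN
  have key : (univ : Finset (Perm (Fin n))).card =
      ∑ p ∈ (univ : Finset (Fin n)).offDiag,
        ((univ : Finset (Perm (Fin n))).filter fun ρ => (ρ a, ρ b) = p).card := by
    refine Finset.card_eq_sum_card_fiberwise ?_
    intro ρ _
    simp only [Finset.mem_coe, Finset.mem_offDiag, mem_univ, true_and]
    exact fun h => hab (ρ.injective h)
  have hconst : ∀ p ∈ (univ : Finset (Fin n)).offDiag,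
      ((univ : Finset (Perm (Fin n))).filter fun ρ => (ρ a, ρ b) = p).card = N := by
    intro p hp
    rw [Finset.mem_offDiag] at hp
    have : ((univ : Finset (Perm (Fin n))).filter fun ρ => (ρ a, ρ b) = p) =
        (univ.filter fun ρ : Perm (Fin n) => ρ a = p.1 ∧ ρ b = p.2) := by
      apply Finset.filter_congr
      intro ρ _
      constructor
      · intro h; exact ⟨congrArg Prod.fst h, congrArg Prod.snd h⟩
      · intro h; exact Prod.ext h.1 h.2
    rw [this, hN]
    exact fiber_card_eq a b hp.2.2 hxy
  rw [Finset.sum_congr rfl hconst, Finset.sum_const, smul_eq_mul] at key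
  have hcard : (univ : Finset (Perm (Fin n))).card = n.factorial := by
    simp [Finset.card_univ, Fintype.card_perm]
  have hoff : ((univ : Finset (Fin n)).offDiag).card = n * n - n := by
    rw [Finset.offDiag_card]; simp
  rw [hcard, hoff] at key
  obtain ⟨m, rfl⟩ : ∃ m, n = m + 2 := ⟨n - 2, by omega⟩
  have hfact : (m + 2).factorial = ((m+2) * (m+2) - (m+2)) * m.factorial := by
    have : (m+2) * (m+2) - (m+2) = (m+2) * (m+1) := by
      rw [Nat.mul_succ, Nat.add_sub_cancel]
    rw [this, Nat.factorial_succ, Nat.factorial_succ]; ring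
  rw [hfact] at key
  have hpos : 0 < (m+2) * (m+2) - (m+2) := by
    have h : (m+2) * (m+2) - (m+2) = (m+2) * (m+1) := by
      rw [Nat.mul_succ, Nat.add_sub_cancel]
    rw [h]
    positivity
  simpa using (Nat.eq_of_mul_eq_mul_left hpos key).symm



/-- the adjacent pairs -/
def K (n : ℕ) : Finset (Fin n × Fin n) :=
  Finset.univ.filter (fun p => (p.2 : ℕ) = (p.1 : ℕ) + 1)

lemma mem_K {p : Fin n × Fin n} : p ∈ K n ↔ (p.2 : ℕ) = (p.1 : ℕ) + 1 := by
  simp [K]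

/-- descent sign function -/
def tf (p : Fin n × Fin n) (σ : Perm (Fin n)) : ℝ :=
  if σ p.2 < σ p.1 then 1 else -1

lemma sgn_flip {u v : Fin n} (h : u ≠ v) :
    (if u < v then (1 : ℝ) else -1) = -(if v < u then (1 : ℝ) else -1) := by
  rcases lt_trichotomy u v with h1 | h1 | h1
  · simp [h1, asymm h1]
  · exact absurd h1 h
  · simp [h1, asymm h1]

lemma lt_iff_of_adj {k k1 m : Fin n} (h : (k1 : ℕ) = (k : ℕ) + 1)
    (h1 : m ≠ k) (h2 : m ≠ k1) : (m < k1 ↔ m < k) ∧ (k1 < m ↔ k < m) := by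
  have hv1 : (m : ℕ) ≠ (k : ℕ) := fun hh => h1 (Fin.ext hh)
  have hv2 : (m : ℕ) ≠ (k1 : ℕ) := fun hh => h2 (Fin.ext hh)
  simp only [Fin.lt_def]
  omega

lemma conv_tt (hn : 2 ≤ n) {p q : Fin n × Fin n} (hp : p ∈ K n) (hq : q ∈ K n)
    (σ : Perm (Fin n)) :
    ∑ ρ : Perm (Fin n), tf p (σ * ρ⁻¹) * tf q ρ
      = -(2 * ((n - 2).factorial : ℝ)) * tf q σ := by
  classical
  obtain ⟨k, k1⟩ := p
  obtain ⟨l, l1⟩ := q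
  rw [mem_K] at hp hq
  simp only at hp hq
  have hk : k ≠ k1 := fun h => by rw [h] at hp; omega
  have hl : l ≠ l1 := fun h => by rw [h] at hq; omega
  have hknotlt : ¬ (k1 < k) := by simp only [Fin.lt_def]; omega
  have hklt : k < k1 := by simp only [Fin.lt_def]; omega
  -- general flip lemma for the p-factor under swapping values k,k1
  have hBgen : ∀ ρ : Perm (Fin n),
      tf (k, k1) (σ * (swap k k1 * ρ)⁻¹) = -tf (k, k1) (σ * ρ⁻¹) := by
    intro ρ
    have hne : σ (ρ⁻¹ k) ≠ σ (ρ⁻¹ k1) := by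
      intro h
      exact hk (ρ⁻¹.injective (σ.injective h))
    simp only [mul_inv_rev, swap_inv, tf, Perm.mul_apply, swap_apply_left, swap_apply_right]
    exact sgn_flip hne
  rw [← Finset.sum_filter_add_sum_filter_not Finset.univ
    (fun ρ : Perm (Fin n) => (ρ l = k ∧ ρ l1 = k1) ∨ (ρ l = k1 ∧ ρ l1 = k))]
  have hBpart : ∑ ρ ∈ Finset.univ.filter
      (fun ρ : Perm (Fin n) => (ρ l = k ∧ ρ l1 = k1) ∨ (ρ l = k1 ∧ ρ l1 = k)),
      tf (k, k1) (σ * ρ⁻¹) * tf (l, l1) ρ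
        = -(2 * ((n - 2).factorial : ℝ)) * tf (l, l1) σ := by
    rw [Finset.filter_or, Finset.sum_union]
    · have e1 : ∀ ρ ∈ Finset.univ.filter (fun ρ : Perm (Fin n) => ρ l = k ∧ ρ l1 = k1),
          tf (k, k1) (σ * ρ⁻¹) * tf (l, l1) ρ = tf (l, l1) σ * (-1) := by
        intro ρ hρ
        simp only [Finset.mem_filter, Finset.mem_univ, true_and] at hρ
        obtain ⟨h1, h2⟩ := hρ
        have i1 : ρ⁻¹ k = l := by rw [← h1, ← Perm.mul_apply, inv_mul_cancel, Perm.one_apply]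
        have i2 : ρ⁻¹ k1 = l1 := by rw [← h2, ← Perm.mul_apply, inv_mul_cancel, Perm.one_apply]
        simp only [tf, Perm.mul_apply, i1, i2, h1, h2, if_neg hknotlt]
      have e2 : ∀ ρ ∈ Finset.univ.filter (fun ρ : Perm (Fin n) => ρ l = k1 ∧ ρ l1 = k),
          tf (k, k1) (σ * ρ⁻¹) * tf (l, l1) ρ = tf (l, l1) σ * (-1) := by
        intro ρ hρ
        simp only [Finset.mem_filter, Finset.mem_univ, true_and] at hρ
        obtain ⟨h1, h2⟩ := hρ
        have i1 : ρ⁻¹ k1 = l := by rw [← h1, ← Perm.mul_apply, inv_mul_cancel, Perm.one_apply]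
        have i2 : ρ⁻¹ k = l1 := by rw [← h2, ← Perm.mul_apply, inv_mul_cancel, Perm.one_apply]
        have hsl : σ l ≠ σ l1 := fun h => hl (σ.injective h)
        simp only [tf, Perm.mul_apply, i1, i2, h1, h2, if_pos hklt]
        rw [sgn_flip hsl]
        ring
      rw [Finset.sum_congr rfl e1, Finset.sum_congr rfl e2, Finset.sum_const,
        Finset.sum_const, card_fiber hn hl hk, card_fiber hn hl (Ne.symm hk),
        nsmul_eq_mul]
      ring
    · rw [Finset.disjoint_left]
      intro ρ hρ1 hρ2
      simp only [Finset.mem_filter, Finset.mem_univ, true_and] at hρ1 hρ2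
      rw [hρ1.1] at hρ2
      exact hk hρ2.1
  have hApart : ∑ ρ ∈ Finset.univ.filter
      (fun ρ : Perm (Fin n) => ¬((ρ l = k ∧ ρ l1 = k1) ∨ (ρ l = k1 ∧ ρ l1 = k))),
      tf (k, k1) (σ * ρ⁻¹) * tf (l, l1) ρ = 0 := by
    refine Finset.sum_involution
      (fun ρ _ => if ρ l = k ∨ ρ l = k1 ∨ ρ l1 = k ∨ ρ l1 = k1
        then swap k k1 * ρ else swap (ρ l) (ρ l1) * ρ) ?_ ?_ ?_ ?_
    · -- sum of term and image is zero
      intro ρ hρ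
      simp only [Finset.mem_filter, Finset.mem_univ, true_and] at hρ
      by_cases hC : ρ l = k ∨ ρ l = k1 ∨ ρ l1 = k ∨ ρ l1 = k1
      · rw [if_pos hC]
        have hA : tf (l, l1) (swap k k1 * ρ) = tf (l, l1) ρ := by
          simp only [tf, Perm.mul_apply]
          rcases hC with h | h | h | h
          · have m1 : ρ l1 ≠ k := by
              rw [← h]; exact fun hh => hl (ρ.injective hh).symm
            have m2 : ρ l1 ≠ k1 := fun hh => hρ (Or.inl ⟨h, hh⟩)
            simp only [h, swap_apply_left, swap_apply_of_ne_of_ne m1 m2]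
            simp [(lt_iff_of_adj hp m1 m2).1]
          · have m1 : ρ l1 ≠ k := fun hh => hρ (Or.inr ⟨h, hh⟩)
            have m2 : ρ l1 ≠ k1 := by
              rw [← h]; exact fun hh => hl (ρ.injective hh).symm
            simp only [h, swap_apply_right, swap_apply_of_ne_of_ne m1 m2]
            simp [(lt_iff_of_adj hp m1 m2).1]
          · have m1 : ρ l ≠ k := by
              rw [← h]; exact fun hh => hl (ρ.injective hh)
            have m2 : ρ l ≠ k1 := fun hh => hρ (Or.inr ⟨hh, h⟩)
            simp only [h, swap_apply_left, swap_apply_of_ne_of_ne m1 m2]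
            simp [(lt_iff_of_adj hp m1 m2).2]
          · have m1 : ρ l ≠ k := fun hh => hρ (Or.inl ⟨hh, h⟩)
            have m2 : ρ l ≠ k1 := by
              rw [← h]; exact fun hh => hl (ρ.injective hh)
            simp only [h, swap_apply_right, swap_apply_of_ne_of_ne m1 m2]
            simp [(lt_iff_of_adj hp m1 m2).2]
        rw [hA, hBgen ρ]
        ring
      · rw [if_neg hC]
        push_neg at hC
        obtain ⟨c1, c2, c3, c4⟩ := hC
        have hrl : ρ l ≠ ρ l1 := fun hh => hl (ρ.injective hh)
        have hA : tf (l, l1) (swap (ρ l) (ρ l1) * ρ) = -tf (l, l1) ρ := by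
          simp only [tf, Perm.mul_apply, swap_apply_left, swap_apply_right]
          exact sgn_flip hrl
        have hB : tf (k, k1) (σ * (swap (ρ l) (ρ l1) * ρ)⁻¹) = tf (k, k1) (σ * ρ⁻¹) := by
          simp only [mul_inv_rev, swap_inv, tf, Perm.mul_apply]
          rw [swap_apply_of_ne_of_ne (Ne.symm c2) (Ne.symm c4),
            swap_apply_of_ne_of_ne (Ne.symm c1) (Ne.symm c3)]
          rfl
        rw [hA, hB]
        ring
    · -- no fixed points
      intro ρ hρ _
      by_cases hC : ρ l = k ∨ ρ l = k1 ∨ ρ l1 = k ∨ ρ l1 = k1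
      · rw [if_pos hC]
        intro hEq
        have h0 : (swap k k1 * ρ) (ρ⁻¹ k) = ρ (ρ⁻¹ k) := by rw [hEq]
        rw [Perm.mul_apply, ← Perm.mul_apply ρ, mul_inv_cancel, Perm.one_apply, swap_apply_left] at h0
        exact hk h0.symm
      · rw [if_neg hC]
        intro hEq
        have h0 : (swap (ρ l) (ρ l1) * ρ) l = ρ l := by rw [hEq]
        rw [Perm.mul_apply, swap_apply_left] at h0
        exact hl (ρ.injective h0).symm
    · -- membership
      intro ρ hρ
      simp only [Finset.mem_filter, Finset.mem_univ, true_and] at hρ ⊢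
      by_cases hC : ρ l = k ∨ ρ l = k1 ∨ ρ l1 = k ∨ ρ l1 = k1
      · rw [if_pos hC]
        intro hP'
        rcases hP' with ⟨h1, h2⟩ | ⟨h1, h2⟩
        · have e1 : ρ l = k1 := by
            rw [Perm.mul_apply] at h1
            have := congrArg (swap k k1) h1
            rwa [swap_apply_self, swap_apply_left] at this
          have e2 : ρ l1 = k := by
            rw [Perm.mul_apply] at h2
            have := congrArg (swap k k1) h2
            rwa [swap_apply_self, swap_apply_right] at this
          exact hρ (Or.inr ⟨e1, e2⟩)
        · have e1 : ρ l = k := by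
            rw [Perm.mul_apply] at h1
            have := congrArg (swap k k1) h1
            rwa [swap_apply_self, swap_apply_right] at this
          have e2 : ρ l1 = k1 := by
            rw [Perm.mul_apply] at h2
            have := congrArg (swap k k1) h2
            rwa [swap_apply_self, swap_apply_left] at this
          exact hρ (Or.inl ⟨e1, e2⟩)
      · rw [if_neg hC]
        push_neg at hC
        obtain ⟨c1, c2, c3, c4⟩ := hC
        intro hP'
        rcases hP' with ⟨h1, h2⟩ | ⟨h1, h2⟩
        · rw [Perm.mul_apply, swap_apply_left] at h1
          exact c3 h1
        · rw [Perm.mul_apply, swap_apply_left] at h1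
          exact c4 h1
    · -- involution
      intro ρ hρ
      by_cases hC : ρ l = k ∨ ρ l = k1 ∨ ρ l1 = k ∨ ρ l1 = k1
      · have hC' : (swap k k1 * ρ) l = k ∨ (swap k k1 * ρ) l = k1 ∨
            (swap k k1 * ρ) l1 = k ∨ (swap k k1 * ρ) l1 = k1 := by
          rcases hC with h | h | h | h
          · exact Or.inr (Or.inl (by rw [Perm.mul_apply, h, swap_apply_left]))
          · exact Or.inl (by rw [Perm.mul_apply, h, swap_apply_right])
          · exact Or.inr (Or.inr (Or.inr (by rw [Perm.mul_apply, h, swap_apply_left])))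
          · exact Or.inr (Or.inr (Or.inl (by rw [Perm.mul_apply, h, swap_apply_right])))
        simp only [if_pos hC, if_pos hC']
        rw [← mul_assoc, swap_mul_self, one_mul]
      · push_neg at hC
        obtain ⟨c1, c2, c3, c4⟩ := hC
        have hC0 : ¬((swap (ρ l) (ρ l1) * ρ) l = k ∨ (swap (ρ l) (ρ l1) * ρ) l = k1 ∨
            (swap (ρ l) (ρ l1) * ρ) l1 = k ∨ (swap (ρ l) (ρ l1) * ρ) l1 = k1) := by
          push_neg
          refine ⟨?_, ?_, ?_, ?_⟩
          · rw [Perm.mul_apply, swap_apply_left]; exact c3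
          · rw [Perm.mul_apply, swap_apply_left]; exact c4
          · rw [Perm.mul_apply, swap_apply_right]; exact c1
          · rw [Perm.mul_apply, swap_apply_right]; exact c2
        have hCneg : ¬(ρ l = k ∨ ρ l = k1 ∨ ρ l1 = k ∨ ρ l1 = k1) := by
          push_neg; exact ⟨c1, c2, c3, c4⟩
        simp only [if_neg hCneg, if_neg hC0]
        have e1 : (swap (ρ l) (ρ l1) * ρ) l = ρ l1 := by
          rw [Perm.mul_apply, swap_apply_left]
        have e2 : (swap (ρ l) (ρ l1) * ρ) l1 = ρ l := by
          rw [Perm.mul_apply, swap_apply_right]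
        rw [e1, e2, ← mul_assoc, swap_comm, swap_mul_self, one_mul]
  rw [hBpart, hApart, add_zero]

lemma card_K (hn : 1 ≤ n) : (K n).card = n - 1 := by
  classical
  rw [show n - 1 = (Finset.range (n-1)).card by rw [Finset.card_range]]
  refine Finset.card_bij (fun p _ => (p.1 : ℕ)) ?_ ?_ ?_
  · intro p hp
    rw [mem_K] at hp
    have h2 := p.2.isLt
    simp only [Finset.mem_range]
    omega
  · intro p hp q hq h
    rw [mem_K] at hp hq
    have : (p.2 : ℕ) = (q.2 : ℕ) := by omega
    exact Prod.ext (Fin.ext h) (Fin.ext this)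
  · intro i hi
    simp only [Finset.mem_range] at hi
    refine ⟨(⟨i, by omega⟩, ⟨i + 1, by omega⟩), ?_, rfl⟩
    rw [mem_K]

lemma sum_tf_zero {p : Fin n × Fin n} (hp : p ∈ K n) :
    ∑ ρ : Perm (Fin n), tf p ρ = 0 := by
  classical
  rw [mem_K] at hp
  have hne : p.1 ≠ p.2 := fun h => by rw [h] at hp; omega
  refine Finset.sum_involution (fun ρ _ => swap (ρ p.1) (ρ p.2) * ρ) ?_ ?_ ?_ ?_
  · intro ρ _
    have hrl : ρ p.1 ≠ ρ p.2 := fun hh => hne (ρ.injective hh)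
    have : tf p (swap (ρ p.1) (ρ p.2) * ρ) = -tf p ρ := by
      simp only [tf, Perm.mul_apply, swap_apply_left, swap_apply_right]
      exact sgn_flip hrl
    rw [this]; ring
  · intro ρ _ _
    intro hEq
    have h0 : (swap (ρ p.1) (ρ p.2) * ρ) p.1 = ρ p.1 := by rw [hEq]
    rw [Perm.mul_apply, swap_apply_left] at h0
    exact hne (ρ.injective h0).symm
  · intro ρ _; exact Finset.mem_univ _
  · intro ρ _
    have e1 : (swap (ρ p.1) (ρ p.2) * ρ) p.1 = ρ p.2 := by
      rw [Perm.mul_apply, swap_apply_left]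
    have e2 : (swap (ρ p.1) (ρ p.2) * ρ) p.2 = ρ p.1 := by
      rw [Perm.mul_apply, swap_apply_right]
    rw [e1, e2, ← mul_assoc, swap_comm, swap_mul_self, one_mul]

/-- centered descent function -/
def ef (n : ℕ) (σ : Perm (Fin n)) : ℝ := ∑ p ∈ K n, tf p σ

lemma ef_eq_desCount' (hn : 1 ≤ n) (σ : Perm (Fin n)) :
    ef n σ = 2 * (((Finset.univ.filter
      (fun p : Fin n × Fin n => (p.2 : ℕ) = (p.1 : ℕ) + 1 ∧ σ p.2 < σ p.1)).card : ℕ) : ℝ)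
      - ((n : ℝ) - 1) := by
  classical
  have h1 : ∀ p ∈ K n, tf p σ = 2 * (if σ p.2 < σ p.1 then (1:ℝ) else 0) - 1 := by
    intro p _
    by_cases h : σ p.2 < σ p.1 <;> simp [tf, h] <;> norm_num
  rw [ef, Finset.sum_congr rfl h1, Finset.sum_sub_distrib, ← Finset.mul_sum,
    Finset.sum_boole, Finset.sum_const, card_K hn]
  have h2 : (K n).filter (fun p => σ p.2 < σ p.1) =
      Finset.univ.filter (fun p : Fin n × Fin n => (p.2 : ℕ) = (p.1 : ℕ) + 1 ∧ σ p.2 < σ p.1) := by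
    rw [K, Finset.filter_filter]
  rw [h2]
  have h3 : ((n - 1 : ℕ) : ℝ) = (n : ℝ) - 1 := by
    push_cast [hn]; ring
  rw [nsmul_eq_mul, mul_one, h3]

lemma sum_ef_zero : ∑ ρ : Perm (Fin n), ef n ρ = 0 := by
  classical
  unfold ef
  rw [Finset.sum_comm]
  exact Finset.sum_eq_zero (fun p hp => sum_tf_zero hp)

lemma conv_ef (hn : 3 ≤ n) (σ : Perm (Fin n)) :
    ∑ ρ : Perm (Fin n), ef n (σ * ρ⁻¹) * ef n ρ
      = -(2 * ((n - 1).factorial : ℝ)) * ef n σ := by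
  classical
  have h1 : ∀ ρ : Perm (Fin n), ef n (σ * ρ⁻¹) * ef n ρ
      = ∑ p ∈ K n, ∑ q ∈ K n, tf p (σ * ρ⁻¹) * tf q ρ := by
    intro ρ
    rw [ef, ef, Finset.sum_mul_sum]
  rw [Finset.sum_congr rfl (fun ρ _ => h1 ρ)]
  rw [Finset.sum_comm]
  have h2 : ∀ p ∈ K n, ∑ ρ : Perm (Fin n), ∑ q ∈ K n, tf p (σ * ρ⁻¹) * tf q ρ
      = -(2 * ((n - 2).factorial : ℝ)) * ef n σ := by
    intro p hp
    rw [Finset.sum_comm]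
    have h3 : ∀ q ∈ K n, ∑ ρ : Perm (Fin n), tf p (σ * ρ⁻¹) * tf q ρ
        = -(2 * ((n - 2).factorial : ℝ)) * tf q σ := by
      intro q hq
      exact conv_tt (by omega) hp hq σ
    rw [Finset.sum_congr rfl h3, ← Finset.mul_sum, ef]
  rw [Finset.sum_congr rfl h2, Finset.sum_const, card_K (by omega), nsmul_eq_mul]
  obtain ⟨m, rfl⟩ : ∃ m, n = m + 3 := ⟨n - 3, by omega⟩
  have e1 : m + 3 - 1 = m + 2 := by omega
  have e2 : m + 3 - 2 = m + 1 := by omega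
  rw [e1, e2, Nat.factorial_succ (m+1)]
  push_cast
  ring

lemma ef_eq_desCount (hn : 1 ≤ n) (σ : Perm (Fin n)) :
    ef n σ = 2 * (desCount σ : ℝ) - ((n : ℝ) - 1) :=
  ef_eq_desCount' hn σ

lemma desCount_one : desCount (1 : Perm (Fin n)) = 0 := by
  rw [desCount, Finset.card_eq_zero, Finset.filter_eq_empty_iff]
  rintro p - ⟨h1, h2⟩
  simp only [Perm.coe_one, id_eq] at h2
  rw [Fin.lt_def] at h2
  omega

lemma choose_add_one_lt_factorial (hn : 3 ≤ n) : n.choose 2 + 1 < n.factorial := by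
  have h2 : 2 * n.choose 2 = n * (n - 1) := two_mul_choose_two n
  have h3 : 6 ≤ n * (n - 1) := by
    calc 6 = 3 * 2 := rfl
    _ ≤ n * (n - 1) := Nat.mul_le_mul (by omega) (by omega)
  have h1 : n * (n - 1) ≤ n.factorial := by
    obtain ⟨m, rfl⟩ : ∃ m, n = m + 3 := ⟨n - 3, by omega⟩
    have e : m + 3 - 1 = m + 2 := by omega
    rw [e, Nat.factorial_succ, Nat.factorial_succ]
    have h : 1 ≤ (m + 1).factorial := Nat.factorial_pos _
    calc (m + 3) * (m + 2) = (m + 3) * ((m + 2) * 1) := by ring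
      _ ≤ (m + 3) * ((m + 2) * (m + 1).factorial) :=
        Nat.mul_le_mul_left _ (Nat.mul_le_mul_left _ h)
  have h5 : 6 ≤ 2 * n.choose 2 := by rw [h2]; exact h3
  have h6 : 2 * n.choose 2 ≤ n.factorial := by rw [h2]; exact h1
  omega

lemma trace_mulVecLin {m : Type*} [Fintype m] [DecidableEq m] (M : Matrix m m ℝ) :
    LinearMap.trace ℝ (m → ℝ) M.mulVecLin = M.trace := by
  rw [LinearMap.trace_eq_matrix_trace ℝ (Pi.basisFun ℝ m), LinearMap.toMatrix_eq_toMatrix']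
  have h : M.mulVecLin = Matrix.toLin' M := LinearMap.ext fun v => (Matrix.toLin'_apply M v).symm
  rw [h, LinearMap.toMatrix'_toLin']

end Stmt12Aux

set_option maxHeartbeats 1000000 in
theorem stmt_12 (n : ℕ) (hn : 3 ≤ n)
    (D : Matrix (Equiv.Perm (Fin n)) (Equiv.Perm (Fin n)) ℝ)
    (hD : ∀ π τ, D π τ = desCount (π * τ⁻¹))
    (f : Module.End ℝ (Equiv.Perm (Fin n) → ℝ)) (hf : f = D.mulVecLin) :
    (⨆ μ : ℝ, f.eigenspace μ) = ⊤ ∧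
    spectrum ℝ f =
      {((n.choose 2 * (n - 1).factorial : ℕ) : ℝ), 0, -(((n - 1).factorial : ℕ) : ℝ)} ∧
    Module.finrank ℝ (f.eigenspace ((n.choose 2 * (n - 1).factorial : ℕ) : ℝ)) = 1 ∧
    Module.finrank ℝ (f.eigenspace (-(((n - 1).factorial : ℕ) : ℝ))) = n.choose 2 ∧
    Module.finrank ℝ (f.eigenspace 0) = n.factorial - n.choose 2 - 1 := by
  classical
  set c1 : ℝ := ((n.choose 2 * (n - 1).factorial : ℕ) : ℝ) with hc1def
  set c2 : ℝ := (((n - 1).factorial : ℕ) : ℝ) with hc2def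
  have hc2pos : (0 : ℝ) < c2 := by
    rw [hc2def]; exact_mod_cast Nat.factorial_pos _
  have hc1pos : (0 : ℝ) < c1 := by
    rw [hc1def]
    exact_mod_cast Nat.mul_pos (Nat.choose_pos (by omega)) (Nat.factorial_pos _)
  have hn1 : ((n - 1 : ℕ) : ℝ) = (n : ℝ) - 1 := by
    rw [Nat.cast_sub (by omega : 1 ≤ n), Nat.cast_one]
  have h2c1 : 2 * c1 = ((n : ℝ) - 1) * (n.factorial : ℝ) := by
    have hNat : 2 * (n.choose 2 * (n - 1).factorial) = (n - 1) * n.factorial := by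
      rw [← mul_assoc, Stmt12Aux.two_mul_choose_two, mul_comm n (n - 1), mul_assoc,
        Nat.mul_factorial_pred (by omega)]
    calc 2 * c1 = ((2 * (n.choose 2 * (n - 1).factorial) : ℕ) : ℝ) := by
          rw [hc1def]; push_cast; ring
      _ = (((n - 1) * n.factorial : ℕ) : ℝ) := by rw [hNat]
      _ = ((n : ℝ) - 1) * (n.factorial : ℝ) := by rw [Nat.cast_mul, hn1]
  have hc1c2 : c1 = (n.choose 2 : ℝ) * c2 := by
    rw [hc1def, hc2def]; push_cast; ring
  -- matrices
  set E : Matrix (Equiv.Perm (Fin n)) (Equiv.Perm (Fin n)) ℝ :=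
    Matrix.of (fun π τ => Stmt12Aux.ef n (π * τ⁻¹)) with hEdef
  set J : Matrix (Equiv.Perm (Fin n)) (Equiv.Perm (Fin n)) ℝ :=
    Matrix.of (fun _ _ => (1 : ℝ)) with hJdef
  have hdes : ∀ σ : Equiv.Perm (Fin n),
      Stmt12Aux.ef n σ = 2 * (desCount σ : ℝ) - ((n : ℝ) - 1) :=
    fun σ => Stmt12Aux.ef_eq_desCount (by omega) σ
  have hD2 : D = (1/2 : ℝ) • E + (((n : ℝ) - 1)/2) • J := by
    ext π τ
    simp only [Matrix.add_apply, Matrix.smul_apply, hEdef, hJdef, Matrix.of_apply,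
      smul_eq_mul]
    rw [hD π τ, hdes (π * τ⁻¹)]
    ring
  have hsum_left : ∀ (g : Equiv.Perm (Fin n) → ℝ) (π : Equiv.Perm (Fin n)),
      ∑ ρ : Equiv.Perm (Fin n), g (π * ρ⁻¹) = ∑ ρ : Equiv.Perm (Fin n), g ρ := by
    intro g π
    exact Fintype.sum_equiv ((Equiv.inv (Equiv.Perm (Fin n))).trans (Equiv.mulLeft π))
      _ _ (fun ρ => rfl)
  have hsum_right : ∀ (g : Equiv.Perm (Fin n) → ℝ) (τ : Equiv.Perm (Fin n)),
      ∑ ρ : Equiv.Perm (Fin n), g (ρ * τ⁻¹) = ∑ ρ : Equiv.Perm (Fin n), g ρ :=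
    fun g τ => Fintype.sum_equiv (Equiv.mulRight τ⁻¹) _ _ (fun ρ => rfl)
  have hEE : E * E = (-(2 * c2)) • E := by
    ext π τ
    rw [Matrix.mul_apply, Matrix.smul_apply]
    have hre : ∑ ρ : Equiv.Perm (Fin n),
        Stmt12Aux.ef n ((π * τ⁻¹) * ρ⁻¹) * Stmt12Aux.ef n ρ
        = ∑ ρ : Equiv.Perm (Fin n), E π ρ * E ρ τ := by
      refine Fintype.sum_equiv (Equiv.mulRight τ) _ _ ?_
      intro ρ
      simp only [hEdef, Matrix.of_apply, Equiv.coe_mulRight, mul_inv_rev,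
        mul_inv_cancel_right]
      rw [← mul_assoc, mul_assoc π]
    rw [← hre, Stmt12Aux.conv_ef hn (π * τ⁻¹)]
    rw [hc2def, hEdef]
    simp [smul_eq_mul]
  have hEJ : E * J = 0 := by
    ext π τ
    rw [Matrix.mul_apply, Matrix.zero_apply]
    simp only [hJdef, Matrix.of_apply, mul_one, hEdef]
    rw [hsum_left (Stmt12Aux.ef n) π, Stmt12Aux.sum_ef_zero]
  have hJE : J * E = 0 := by
    ext π τ
    rw [Matrix.mul_apply, Matrix.zero_apply]
    simp only [hJdef, Matrix.of_apply, one_mul, hEdef]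
    rw [hsum_right (Stmt12Aux.ef n) τ, Stmt12Aux.sum_ef_zero]
  have hcard : (Finset.univ : Finset (Equiv.Perm (Fin n))).card = n.factorial := by
    rw [Finset.card_univ, Fintype.card_perm, Fintype.card_fin]
  have hJJ : J * J = (n.factorial : ℝ) • J := by
    ext π τ
    rw [Matrix.mul_apply, Matrix.smul_apply]
    simp only [hJdef, Matrix.of_apply, mul_one, smul_eq_mul]
    rw [Finset.sum_const, hcard, nsmul_eq_mul, mul_one]
  -- derived products
  have hED : E * D = (-c2) • E := by
    rw [hD2, Matrix.mul_add, Matrix.mul_smul, Matrix.mul_smul, hEE, hEJ, smul_zero,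
      add_zero, smul_smul]
    congr 1; ring
  have hDE : D * E = (-c2) • E := by
    rw [hD2, Matrix.add_mul, Matrix.smul_mul, Matrix.smul_mul, hEE, hJE, smul_zero,
      add_zero, smul_smul]
    congr 1; ring
  have hJD : J * D = c1 • J := by
    rw [hD2, Matrix.mul_add, Matrix.mul_smul, Matrix.mul_smul, hJE, hJJ, smul_zero,
      zero_add, smul_smul]
    congr 1; linarith [h2c1]
  have hDJ : D * J = c1 • J := by
    rw [hD2, Matrix.add_mul, Matrix.smul_mul, Matrix.smul_mul, hEJ, hJJ, smul_zero,
      zero_add, smul_smul]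
    congr 1; linarith [h2c1]
  -- vectors
  set ones : Equiv.Perm (Fin n) → ℝ := fun _ => 1 with honesdef
  have hones_ne : ones ≠ 0 := by
    intro h
    have := congrFun h 1
    simp [honesdef] at this
  have hJv : ∀ v : Equiv.Perm (Fin n) → ℝ, J.mulVec v = (∑ τ, v τ) • ones := by
    intro v
    funext π
    simp only [Matrix.mulVec, dotProduct, honesdef, hJdef, Matrix.of_apply, one_mul,
      Pi.smul_apply, honesdef, smul_eq_mul, mul_one]
  have hsumdes : ∑ σ : Equiv.Perm (Fin n), (desCount σ : ℝ) = c1 := by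
    have h0 := Stmt12Aux.sum_ef_zero (n := n)
    rw [Finset.sum_congr rfl (fun σ _ => hdes σ), Finset.sum_sub_distrib,
      ← Finset.mul_sum, Finset.sum_const, hcard, nsmul_eq_mul] at h0
    linarith [h2c1, h0]
  have hfones : D.mulVec ones = c1 • ones := by
    funext π
    simp only [Matrix.mulVec, dotProduct, honesdef, honesdef, mul_one, Pi.smul_apply, smul_eq_mul]
    rw [Finset.sum_congr rfl (fun τ _ => hD π τ),
      hsum_left (fun σ => (desCount σ : ℝ)) π, hsumdes]
  have hEones : E.mulVec ones = 0 := by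
    funext π
    simp only [Matrix.mulVec, dotProduct, honesdef, honesdef, mul_one, Pi.zero_apply, hEdef,
      Matrix.of_apply]
    rw [hsum_left (Stmt12Aux.ef n) π, Stmt12Aux.sum_ef_zero]
  have hJones : J.mulVec ones = (n.factorial : ℝ) • ones := by
    rw [hJv]
    congr 1
    rw [honesdef, Finset.sum_const, hcard, nsmul_eq_mul, mul_one]
  -- projection matrix
  set P2 : Matrix (Equiv.Perm (Fin n)) (Equiv.Perm (Fin n)) ℝ := (-(1/(2*c2))) • E
    with hP2def
  have hP2P2 : P2 * P2 = P2 := by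
    rw [hP2def, Matrix.smul_mul, Matrix.mul_smul, hEE, smul_smul, smul_smul]
    congr 1
    field_simp
  have hEP2 : E * P2 = E := by
    rw [hP2def, Matrix.mul_smul, hEE, smul_smul,
      show -(1/(2*c2)) * -(2*c2) = 1 by field_simp, one_smul]
  have hJP2 : J * P2 = 0 := by
    rw [hP2def, Matrix.mul_smul, hJE, smul_zero]
  have hDP2 : D * P2 = (1/2 : ℝ) • E := by
    rw [hP2def, Matrix.mul_smul, hDE, smul_smul]
    congr 1
    field_simp
  have hP2v : ∀ v : Equiv.Perm (Fin n) → ℝ,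
      P2.mulVec v = (-(1/(2*c2))) • E.mulVec v :=
    fun v => by rw [hP2def, Matrix.smul_mulVec]
  -- eigenspace for c1
  have hfapp : ∀ v, f v = D.mulVec v := by
    intro v; rw [hf]; exact Matrix.mulVecLin_apply _ _
  have heigA : f.eigenspace c1 = (ℝ ∙ ones) := by
    apply le_antisymm
    · intro v hv
      rw [Module.End.mem_eigenspace_iff, hfapp] at hv
      have hEv : E.mulVec v = 0 := by
        have h2 : E.mulVec (D.mulVec v) = c1 • E.mulVec v := by
          rw [hv, Matrix.mulVec_smul]
        have h3 : E.mulVec (D.mulVec v) = (-c2) • E.mulVec v := by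
          rw [Matrix.mulVec_mulVec, hED, Matrix.smul_mulVec]
        have h4 : (c1 + c2) • E.mulVec v = 0 := by
          have h5 := h2.symm.trans h3
          rw [show c1 + c2 = c1 - (-c2) by ring, sub_smul, h5, sub_self]
        exact (smul_eq_zero.mp h4).resolve_left
          (ne_of_gt (by linarith : (0:ℝ) < c1 + c2))
      have h7 : c1 • v = (((n : ℝ) - 1)/2) • ((∑ τ, v τ) • ones) := by
        rw [← hJv, ← hv, hD2, Matrix.add_mulVec, Matrix.smul_mulVec,
          Matrix.smul_mulVec, hEv, smul_zero, zero_add]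
      rw [Submodule.mem_span_singleton]
      refine ⟨c1⁻¹ * (((n : ℝ) - 1)/2 * (∑ τ, v τ)), ?_⟩
      have h8 := congrArg (fun x => c1⁻¹ • x) h7
      simp only [smul_smul] at h8
      rw [inv_mul_cancel₀ (ne_of_gt hc1pos), one_smul] at h8
      exact h8.symm
    · intro v hv
      rw [Submodule.mem_span_singleton] at hv
      obtain ⟨a, rfl⟩ := hv
      rw [Module.End.mem_eigenspace_iff, hfapp, Matrix.mulVec_smul,
        hfones, smul_smul, smul_smul, mul_comm]
  have hrankA : Module.finrank ℝ (f.eigenspace c1) = 1 := by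
    rw [heigA]
    exact finrank_span_singleton hones_ne
  have heigB : f.eigenspace (-c2) = LinearMap.range P2.mulVecLin := by
    apply le_antisymm
    · intro v hv
      rw [Module.End.mem_eigenspace_iff, hfapp] at hv
      have hJvv : J.mulVec v = 0 := by
        have h2 : J.mulVec (D.mulVec v) = (-c2) • J.mulVec v := by
          rw [hv, Matrix.mulVec_smul]
        have h3 : J.mulVec (D.mulVec v) = c1 • J.mulVec v := by
          rw [Matrix.mulVec_mulVec, hJD, Matrix.smul_mulVec]
        have h4 : (c1 + c2) • J.mulVec v = 0 := by
          have h5 := h3.symm.trans h2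
          rw [show c1 + c2 = c1 - (-c2) by ring, sub_smul, h5, sub_self]
        exact (smul_eq_zero.mp h4).resolve_left
          (ne_of_gt (by linarith : (0:ℝ) < c1 + c2))
      have hEvv : E.mulVec v = (-(2*c2)) • v := by
        have h6 : (-c2) • v = (1/2 : ℝ) • E.mulVec v := by
          rw [← hv, hD2, Matrix.add_mulVec, Matrix.smul_mulVec,
            Matrix.smul_mulVec, hJvv, smul_zero, add_zero]
        have h7 : E.mulVec v = (2:ℝ) • ((-c2) • v) := by
          rw [h6, smul_smul]
          norm_num
        rw [h7, smul_smul]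
        congr 1
        ring
      refine ⟨v, ?_⟩
      rw [Matrix.mulVecLin_apply, hP2v, hEvv, smul_smul,
        show -(1/(2*c2)) * -(2*c2) = 1 by field_simp, one_smul]
    · rintro v ⟨w, rfl⟩
      rw [Module.End.mem_eigenspace_iff, hfapp, Matrix.mulVecLin_apply,
        Matrix.mulVec_mulVec, hDP2, hP2v, Matrix.smul_mulVec, smul_smul]
      congr 1
      field_simp
  have hrankB : Module.finrank ℝ (f.eigenspace (-c2)) = n.choose 2 := by
    rw [heigB]
    have hproj : LinearMap.IsProj (LinearMap.range P2.mulVecLin) P2.mulVecLin := by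
      refine ⟨fun x => LinearMap.mem_range_self _ x, ?_⟩
      rintro x ⟨w, rfl⟩
      rw [Matrix.mulVecLin_apply, Matrix.mulVecLin_apply, Matrix.mulVec_mulVec, hP2P2]
    have htrace := LinearMap.IsProj.trace hproj
    rw [Stmt12Aux.trace_mulVecLin] at htrace
    have htrE : Matrix.trace E = (n.factorial : ℝ) * (-((n:ℝ) - 1)) := by
      rw [Matrix.trace]
      have hdiag : ∀ π : Equiv.Perm (Fin n), Matrix.diag E π
          = 2 * (desCount (1 : Equiv.Perm (Fin n)) : ℝ) - ((n:ℝ) - 1) := by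
        intro π
        rw [Matrix.diag_apply, hEdef, Matrix.of_apply, mul_inv_cancel, hdes]
      rw [Finset.sum_congr rfl (fun π _ => hdiag π), Finset.sum_const, hcard,
        Stmt12Aux.desCount_one, nsmul_eq_mul]
      push_cast
      ring
    have htrP2 : Matrix.trace P2 = (n.choose 2 : ℝ) := by
      rw [hP2def, Matrix.trace_smul, htrE, smul_eq_mul]
      have h10 : (2 * c1) / (2 * c2) = (n.choose 2 : ℝ) := by
        rw [hc1c2]
        field_simp
      rw [← h10, h2c1]
      field_simp
    rw [htrP2] at htrace
    exact_mod_cast htrace.symm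
  -- decomposition
  have hdecomp : ∀ v : Equiv.Perm (Fin n) → ℝ,
      v ∈ (f.eigenspace c1 ⊔ f.eigenspace (-c2) ⊔ f.eigenspace 0) := by
    intro v
    have hnfac_ne : ((n.factorial : ℝ)) ≠ 0 := by
      exact_mod_cast (Nat.factorial_pos n).ne'
    set a : Equiv.Perm (Fin n) → ℝ := ((∑ τ, v τ)/(n.factorial : ℝ)) • ones with hadef
    set b : Equiv.Perm (Fin n) → ℝ := P2.mulVec v with hbdef
    set w : Equiv.Perm (Fin n) → ℝ := v - a - b with hwdef
    have ha : a ∈ f.eigenspace c1 := by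
      rw [heigA, hadef]
      exact Submodule.smul_mem _ _ (Submodule.mem_span_singleton_self ones)
    have hb : b ∈ f.eigenspace (-c2) := by
      rw [heigB]
      exact ⟨v, Matrix.mulVecLin_apply _ _⟩
    have hJw : J.mulVec w = 0 := by
      rw [hwdef, Matrix.mulVec_sub, Matrix.mulVec_sub, hadef, Matrix.mulVec_smul,
        hJones, hbdef, Matrix.mulVec_mulVec, hJP2, Matrix.zero_mulVec, sub_zero,
        hJv v, smul_smul, div_mul_cancel₀ _ hnfac_ne, sub_self]
    have hEw : E.mulVec w = 0 := by
      rw [hwdef, Matrix.mulVec_sub, Matrix.mulVec_sub, hadef, Matrix.mulVec_smul,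
        hEones, smul_zero, sub_zero, hbdef, Matrix.mulVec_mulVec, hEP2, sub_self]
    have hw : w ∈ f.eigenspace (0:ℝ) := by
      rw [Module.End.mem_eigenspace_iff, hfapp, zero_smul, hD2, Matrix.add_mulVec,
        Matrix.smul_mulVec, Matrix.smul_mulVec, hEw, hJw, smul_zero,
        smul_zero, add_zero]
    have hv : v = a + b + w := by rw [hwdef]; abel
    rw [hv]
    exact Submodule.add_mem _
      (Submodule.add_mem _ (Submodule.mem_sup_left (Submodule.mem_sup_left ha))
        (Submodule.mem_sup_left (Submodule.mem_sup_right hb)))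
      (Submodule.mem_sup_right hw)
  have htop : f.eigenspace c1 ⊔ f.eigenspace (-c2) ⊔ f.eigenspace 0 = ⊤ := by
    rw [eq_top_iff]
    intro v _
    exact hdecomp v
  have hsup : (⨆ μ : ℝ, f.eigenspace μ) = ⊤ := by
    rw [eq_top_iff, ← htop]
    exact sup_le (sup_le (le_iSup _ c1) (le_iSup _ (-c2))) (le_iSup _ 0)
  -- dimension count
  have hne_c1_0 : c1 ≠ 0 := ne_of_gt hc1pos
  have hne_c2_0 : -c2 ≠ (0:ℝ) := by linarith
  have hne_c2_c1 : -c2 ≠ c1 := by linarith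
  have hindep := Module.End.eigenspaces_iSupIndep f
  have hdisjAB : Disjoint (f.eigenspace c1) (f.eigenspace (-c2)) := by
    refine (hindep c1).mono_right ?_
    exact le_iSup₂ (f := fun j (_ : j ≠ c1) => f.eigenspace j) (-c2) hne_c2_c1
  have hdisjC : Disjoint (f.eigenspace 0) (f.eigenspace c1 ⊔ f.eigenspace (-c2)) := by
    refine (hindep 0).mono_right ?_
    exact sup_le (le_iSup₂ (f := fun j (_ : j ≠ (0:ℝ)) => f.eigenspace j) c1 hne_c1_0)
      (le_iSup₂ (f := fun j (_ : j ≠ (0:ℝ)) => f.eigenspace j) (-c2) hne_c2_0)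
  have htotal : Module.finrank ℝ (Equiv.Perm (Fin n) → ℝ) = n.factorial := by
    rw [Module.finrank_fintype_fun_eq_card, Fintype.card_perm, Fintype.card_fin]
  have hd1 := Submodule.finrank_sup_add_finrank_inf_eq
    (f.eigenspace c1) (f.eigenspace (-c2))
  rw [disjoint_iff.mp hdisjAB, finrank_bot, add_zero, hrankA, hrankB] at hd1
  have hd2 := Submodule.finrank_sup_add_finrank_inf_eq
    (f.eigenspace c1 ⊔ f.eigenspace (-c2)) (f.eigenspace 0)
  rw [disjoint_iff.mp hdisjC.symm, finrank_bot, add_zero, htop, finrank_top,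
    htotal, hd1] at hd2
  have hlt := Stmt12Aux.choose_add_one_lt_factorial hn
  have hrankC : Module.finrank ℝ (f.eigenspace 0) = n.factorial - n.choose 2 - 1 := by
    omega
  -- spectrum
  have hspec : spectrum ℝ f = {c1, 0, -c2} := by
    ext μ
    rw [← Module.End.hasEigenvalue_iff_mem_spectrum]
    simp only [Set.mem_insert_iff, Set.mem_singleton_iff]
    constructor
    · intro hμ
      obtain ⟨v, hv1, hv2⟩ := hμ.exists_hasEigenvector
      rw [Module.End.mem_eigenspace_iff, hfapp] at hv1
      by_contra hcon
      push_neg at hcon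
      obtain ⟨hm1, hm2, hm3⟩ := hcon
      have hEv : E.mulVec v = 0 := by
        have h2 : E.mulVec (D.mulVec v) = μ • E.mulVec v := by
          rw [hv1, Matrix.mulVec_smul]
        have h3 : E.mulVec (D.mulVec v) = (-c2) • E.mulVec v := by
          rw [Matrix.mulVec_mulVec, hED, Matrix.smul_mulVec]
        have h4 : (μ + c2) • E.mulVec v = 0 := by
          have h5 := h2.symm.trans h3
          rw [show μ + c2 = μ - (-c2) by ring, sub_smul, h5, sub_self]
        refine (smul_eq_zero.mp h4).resolve_left ?_
        intro h6
        exact hm3 (by linarith [h6] : μ = -c2)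
      have hJv0 : J.mulVec v = 0 := by
        have h2 : J.mulVec (D.mulVec v) = μ • J.mulVec v := by
          rw [hv1, Matrix.mulVec_smul]
        have h3 : J.mulVec (D.mulVec v) = c1 • J.mulVec v := by
          rw [Matrix.mulVec_mulVec, hJD, Matrix.smul_mulVec]
        have h4 : (μ - c1) • J.mulVec v = 0 := by
          have h5 := h2.symm.trans h3
          rw [sub_smul, h5, sub_self]
        refine (smul_eq_zero.mp h4).resolve_left ?_
        intro h6
        exact hm1 (by linarith [h6] : μ = c1)
      have hzero : D.mulVec v = 0 := by
        rw [hD2, Matrix.add_mulVec, Matrix.smul_mulVec, Matrix.smul_mulVec,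
          hEv, hJv0, smul_zero, smul_zero, add_zero]
      rw [hzero] at hv1
      have : μ = 0 := by
        rcases smul_eq_zero.mp hv1.symm with h | h
        · exact h
        · exact absurd h hv2
      exact hm2 this
    · intro h
      rcases h with h | h | h <;> subst h
      · exact Module.End.hasEigenvalue_of_hasEigenvector
          ⟨Module.End.mem_eigenspace_iff.mpr
            (by rw [hfapp, hfones]), hones_ne⟩
      · rw [Module.End.hasEigenvalue_iff]
        intro hbot
        rw [hbot, finrank_bot] at hrankC
        omega
      · rw [Module.End.hasEigenvalue_iff]
        intro hbot
        rw [hbot, finrank_bot] at hrankB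
        have := Nat.choose_pos (show 2 ≤ n by omega)
        omega
  exact ⟨hsup, hspec, hrankA, hrankB, hrankC⟩
end

section
/- Let n ≥ 3. In the group algebra ℝ[S_n], let B = Σ_{σ ∈ S_n} des(σ)·σ. Then B·(B − C(n,2)(n-1)!·e)·(B + (n-1)!·e) = 0, where e is the unit of the group algebra. -/
open Finset Equiv

lemma exists_perm_two {α : Type*} [DecidableEq α] {x y x' y' : α}
    (hxy : x ≠ y) (hxy' : x' ≠ y') :
    ∃ ρ : Equiv.Perm α, ρ x = x' ∧ ρ y = y' := by
  classical
  by_cases h : Equiv.swap x x' y = y'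
  · exact ⟨Equiv.swap x x', Equiv.swap_apply_left x x', h⟩
  · refine ⟨Equiv.swap (Equiv.swap x x' y) y' * Equiv.swap x x', ?_, ?_⟩
    · have h1 : Equiv.swap x x' x = x' := Equiv.swap_apply_left x x'
      have h2 : Equiv.swap x x' y ≠ x' := by
        intro hc
        exact hxy ((Equiv.swap x x').injective (hc.trans h1.symm)).symm
    
      simp only [Equiv.Perm.mul_apply, h1]
      exact Equiv.swap_apply_of_ne_of_ne (Ne.symm h2) hxy'
    · simp only [Equiv.Perm.mul_apply]
      exact Equiv.swap_apply_left _ _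

lemma card_fiber_s16 {n : ℕ} {a b x y : Fin n} (hab : a ≠ b) (hxy : x ≠ y) :
    (univ.filter fun σ : Equiv.Perm (Fin n) => σ a = x ∧ σ b = y).card
      = (n - 2).factorial := by
  classical
  have hn2 : 2 ≤ n := by
    have h1 := x.isLt
    have h2 := y.isLt
    have h3 : (x : ℕ) ≠ (y : ℕ) := fun h => hxy (Fin.ext h)
    omega
  have hmaps : ∀ σ ∈ (univ : Finset (Equiv.Perm (Fin n))),
      (σ a, σ b) ∈ (univ : Finset (Fin n)).offDiag := by
    intro σ _
    simp only [Finset.mem_offDiag, mem_univ, true_and]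
    exact fun h => hab (σ.injective h)
  have hpart := Finset.card_eq_sum_card_fiberwise hmaps
  have hconst : ∀ p ∈ (univ : Finset (Fin n)).offDiag,
      (univ.filter fun σ : Equiv.Perm (Fin n) => (σ a, σ b) = p).card
        = (univ.filter fun σ : Equiv.Perm (Fin n) => (σ a, σ b) = (x, y)).card := by
    rintro ⟨p1, p2⟩ hp
    rw [Finset.mem_offDiag] at hp
    obtain ⟨ρ, hρ1, hρ2⟩ := exists_perm_two hxy hp.2.2
    refine Finset.card_nbij' (fun σ => ρ⁻¹ * σ) (fun σ => ρ * σ) ?_ ?_ ?_ ?_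
    · intro σ hσ
      simp only [Finset.mem_coe, mem_filter, mem_univ, true_and, Prod.mk.injEq, Equiv.Perm.mul_apply] at hσ ⊢
      rw [hσ.1, hσ.2]
      constructor
      · rw [Equiv.Perm.inv_eq_iff_eq]; exact hρ1.symm
      · rw [Equiv.Perm.inv_eq_iff_eq]; exact hρ2.symm
    · intro σ hσ
      simp only [Finset.mem_coe, mem_filter, mem_univ, true_and, Prod.mk.injEq, Equiv.Perm.mul_apply] at hσ ⊢
      rw [hσ.1, hσ.2, hρ1, hρ2]
      exact ⟨rfl, rfl⟩
    · intro σ _; simp [mul_assoc]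
    · intro σ _; simp [mul_assoc]
  have hsum : ((univ : Finset (Equiv.Perm (Fin n))).card : ℕ)
      = ((univ : Finset (Fin n)).offDiag).card
        * (univ.filter fun σ : Equiv.Perm (Fin n) => (σ a, σ b) = (x, y)).card := by
    rw [hpart, Finset.sum_congr rfl hconst, Finset.sum_const, smul_eq_mul]
  have hcardPerm : (univ : Finset (Equiv.Perm (Fin n))).card = n.factorial := by
    rw [Finset.card_univ, Fintype.card_perm, Fintype.card_fin]
  have hcardOff : ((univ : Finset (Fin n)).offDiag).card = n * n - n := by
    rw [Finset.offDiag_card, Finset.card_univ, Fintype.card_fin]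
  have hfact : n.factorial = (n * n - n) * (n - 2).factorial := by
    have h1 : n = (n - 1) + 1 := by omega
    have h2 : n - 1 = (n - 2) + 1 := by omega
    calc n.factorial = n * (n - 1).factorial := by
          conv_lhs => rw [h1]
          rw [Nat.factorial_succ, ← h1]
      _ = n * ((n - 1) * (n - 2).factorial) := by
          conv_lhs => rw [h2]
          rw [Nat.factorial_succ, ← h2]
      _ = (n * n - n) * (n - 2).factorial := by
          rw [← mul_assoc]
          congr 1
          cases n with
          | zero => omega
          | succ m => simp [Nat.succ_mul, Nat.mul_succ]
  have heq : (univ.filter fun σ : Equiv.Perm (Fin n) => (σ a, σ b) = (x, y))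
      = (univ.filter fun σ : Equiv.Perm (Fin n) => σ a = x ∧ σ b = y) := by
    apply Finset.filter_congr
    intro σ _
    simp [Prod.ext_iff]
  have hpos : 0 < n * n - n := by
    have h4 : n + n ≤ n * n := by nlinarith
    omega
  have := hsum
  rw [hcardPerm, hcardOff, heq, hfact] at this
  exact (Nat.eq_of_mul_eq_mul_left hpos this.symm)

lemma card_half_inv {n : ℕ} {x y : Fin n} (hxy : x ≠ y) :
    (univ.filter fun σ : Equiv.Perm (Fin n) => σ⁻¹ y < σ⁻¹ x).card * 2 = n.factorial := by
  classical
  have hkey : (univ.filter fun σ : Equiv.Perm (Fin n) => σ⁻¹ y < σ⁻¹ x).card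
      = (univ.filter fun σ : Equiv.Perm (Fin n) => ¬ σ⁻¹ y < σ⁻¹ x).card := by
    refine Finset.card_nbij' (fun σ => Equiv.swap x y * σ) (fun σ => Equiv.swap x y * σ)
      ?_ ?_ ?_ ?_
    · intro σ hσ
      simp only [Finset.mem_coe, mem_filter, mem_univ, true_and, mul_inv_rev, Equiv.Perm.mul_apply,
        Equiv.swap_inv, Equiv.swap_apply_left, Equiv.swap_apply_right] at hσ ⊢
      exact fun h => absurd (lt_trans h hσ) (lt_irrefl _)
    · intro σ hσ
      simp only [Finset.mem_coe, mem_filter, mem_univ, true_and, mul_inv_rev, Equiv.Perm.mul_apply,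
        Equiv.swap_inv, Equiv.swap_apply_left, Equiv.swap_apply_right] at hσ ⊢
      have hne : σ⁻¹ x ≠ σ⁻¹ y := fun h => hxy (σ⁻¹.injective h)
      exact lt_of_le_of_ne (not_lt.mp hσ) hne
    · intro σ _; simp [← mul_assoc]
    · intro σ _; simp [← mul_assoc]
  have htot := Finset.card_filter_add_card_filter_not
    (s := (univ : Finset (Equiv.Perm (Fin n))))
    (p := fun σ => σ⁻¹ y < σ⁻¹ x)
  rw [← hkey] at htot
  rw [Finset.card_univ, Fintype.card_perm, Fintype.card_fin] at htot
  omega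

lemma card_half_app {n : ℕ} {a b : Fin n} (hab : a ≠ b) :
    (univ.filter fun σ : Equiv.Perm (Fin n) => σ b < σ a).card * 2 = n.factorial := by
  classical
  have hkey : (univ.filter fun σ : Equiv.Perm (Fin n) => σ b < σ a).card
      = (univ.filter fun σ : Equiv.Perm (Fin n) => ¬ σ b < σ a).card := by
    refine Finset.card_nbij' (fun σ => σ * Equiv.swap a b) (fun σ => σ * Equiv.swap a b)
      ?_ ?_ ?_ ?_
    · intro σ hσ
      simp only [Finset.mem_coe, mem_filter, mem_univ, true_and, Equiv.Perm.mul_apply,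
        Equiv.swap_apply_left, Equiv.swap_apply_right] at hσ ⊢
      exact fun h => absurd (lt_trans h hσ) (lt_irrefl _)
    · intro σ hσ
      simp only [Finset.mem_coe, mem_filter, mem_univ, true_and, Equiv.Perm.mul_apply,
        Equiv.swap_apply_left, Equiv.swap_apply_right] at hσ ⊢
      have hne : σ a ≠ σ b := fun h => hab (σ.injective h)
      exact lt_of_le_of_ne (not_lt.mp hσ) hne
    · intro σ _; simp [mul_assoc]
    · intro σ _; simp [mul_assoc]
  have htot := Finset.card_filter_add_card_filter_not
    (s := (univ : Finset (Equiv.Perm (Fin n))))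
    (p := fun σ => σ b < σ a)
  rw [← hkey] at htot
  rw [Finset.card_univ, Fintype.card_perm, Fintype.card_fin] at htot
  omega

lemma swap_lt_swap {n : ℕ} {i i' a b : Fin n} (h : (i' : ℕ) = (i : ℕ) + 1)
    (hpat : ¬((a = i ∧ b = i') ∨ (a = i' ∧ b = i))) :
    (Equiv.swap i i' b < Equiv.swap i i' a ↔ b < a) := by
  simp only [Equiv.swap_apply_def, Fin.lt_def]
  split_ifs <;> simp only [Fin.ext_iff, not_or, not_and] at * <;> omega

lemma core_count {n : ℕ} {i i' x y : Fin n} (h : (i' : ℕ) = (i : ℕ) + 1) (hxy : x ≠ y) :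
    (univ.filter fun σ : Equiv.Perm (Fin n) => σ i' < σ i ∧ σ⁻¹ y < σ⁻¹ x).card * 4
      + 2 * (n - 2).factorial
    = n.factorial + 4 * (n - 2).factorial * (if x < y then 1 else 0) := by
  classical
  have hii : i ≠ i' := by
    intro hc; rw [hc] at h; omega
  set s : Equiv.Perm (Fin n) := Equiv.swap i i' with hs
  set P : Equiv.Perm (Fin n) → Prop := fun σ => σ i' < σ i ∧ σ⁻¹ y < σ⁻¹ x with hP
  have hre : ∑ σ : Equiv.Perm (Fin n), (if P (σ * s) then 1 else 0)
      = ∑ σ : Equiv.Perm (Fin n), (if P σ then 1 else 0) := by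
    exact Fintype.sum_equiv (Equiv.mulRight s) _ _ (fun σ => rfl)
  have h2f : (univ.filter fun σ => P σ).card * 2
      = ∑ σ : Equiv.Perm (Fin n),
          ((if P σ then 1 else 0) + (if P (σ * s) then 1 else 0)) := by
    rw [Finset.sum_add_distrib, hre, Finset.card_filter]
    ring
  -- pointwise analysis
  have hpt : ∀ σ : Equiv.Perm (Fin n),
      (if P σ then 1 else 0) + (if P (σ * s) then 1 else 0)
      = if (σ i = x ∧ σ i' = y) ∨ (σ i = y ∧ σ i' = x)
          then (if x < y then (1 : ℕ) else 0)
          else (if σ⁻¹ y < σ⁻¹ x then 1 else 0) := by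
    intro σ
    have hinv : ∀ z, (σ * s)⁻¹ z = s (σ⁻¹ z) := by
      intro z
      simp [hs, mul_inv_rev, Equiv.Perm.mul_apply]
    have happ1 : (σ * s) i = σ i' := by simp [hs, Equiv.Perm.mul_apply]
    have happ2 : (σ * s) i' = σ i := by simp [hs, Equiv.Perm.mul_apply]
    have hilt : i < i' := by rw [Fin.lt_def]; omega
    by_cases hc1 : σ i = x ∧ σ i' = y
    · have e1 : σ⁻¹ x = i := by rw [← hc1.1, Equiv.Perm.inv_eq_iff_eq]
      have e2 : σ⁻¹ y = i' := by rw [← hc1.2, Equiv.Perm.inv_eq_iff_eq]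
      have hPσ : ¬ P σ := by
        rintro ⟨-, h2⟩
        rw [e1, e2] at h2
        exact absurd (lt_trans h2 hilt) (lt_irrefl _)
      have hPσs : P (σ * s) ↔ x < y := by
        constructor
        · rintro ⟨h1, -⟩
          rwa [happ1, happ2, hc1.1, hc1.2] at h1
        · intro hlt
          refine ⟨by rwa [happ1, happ2, hc1.1, hc1.2], ?_⟩
          rw [hinv, hinv, e1, e2, hs, Equiv.swap_apply_left, Equiv.swap_apply_right]
          exact hilt
      simp only [if_pos (Or.inl hc1), if_neg hPσ]
      by_cases hxyl : x < y
      · rw [if_pos (hPσs.mpr hxyl), if_pos hxyl]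
      · rw [if_neg (fun hh => hxyl (hPσs.mp hh)), if_neg hxyl]
    · by_cases hc2 : σ i = y ∧ σ i' = x
      · have e1 : σ⁻¹ x = i' := by rw [← hc2.2, Equiv.Perm.inv_eq_iff_eq]
        have e2 : σ⁻¹ y = i := by rw [← hc2.1, Equiv.Perm.inv_eq_iff_eq]
        have hPσ : P σ ↔ x < y := by
          constructor
          · rintro ⟨h1, -⟩
            rwa [hc2.1, hc2.2] at h1
          · intro hlt
            refine ⟨by rwa [hc2.1, hc2.2], ?_⟩
            rw [e1, e2]
            exact hilt
        have hPσs : ¬ P (σ * s) := by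
          rintro ⟨-, h2⟩
          rw [hinv, hinv, e1, e2, hs, Equiv.swap_apply_left, Equiv.swap_apply_right] at h2
          exact absurd (lt_trans h2 hilt) (lt_irrefl _)
        simp only [if_pos (Or.inr hc2), if_neg hPσs]
        by_cases hxyl : x < y
        · rw [if_pos (hPσ.mpr hxyl), if_pos hxyl]
        · rw [if_neg (fun hh => hxyl (hPσ.mp hh)), if_neg hxyl]
      · -- generic case
        have hpat : ¬((σ⁻¹ x = i ∧ σ⁻¹ y = i') ∨ (σ⁻¹ x = i' ∧ σ⁻¹ y = i)) := by
          rintro (⟨ha, hb⟩ | ⟨ha, hb⟩)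
          · exact hc1 ⟨by rw [← ha]; simp,
              by rw [← hb]; simp⟩
          · exact hc2 ⟨by rw [← hb]; simp,
              by rw [← ha]; simp⟩
        have hCiff : ((σ * s)⁻¹ y < (σ * s)⁻¹ x) ↔ (σ⁻¹ y < σ⁻¹ x) := by
          rw [hinv, hinv, hs]
          exact swap_lt_swap h hpat
        have hAiff : ((σ * s) i' < (σ * s) i) ↔ ¬ (σ i' < σ i) := by
          rw [happ1, happ2]
          constructor
          · intro h1 h2; exact absurd (lt_trans h1 h2) (lt_irrefl _)
          · intro h1
            exact lt_of_le_of_ne (not_lt.mp h1) (fun hh => hii (σ.injective hh))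
        rw [if_neg (by tauto : ¬((σ i = x ∧ σ i' = y) ∨ (σ i = y ∧ σ i' = x)))]
        by_cases hC : σ⁻¹ y < σ⁻¹ x
        · by_cases hA : σ i' < σ i
          · rw [if_pos ⟨hA, hC⟩, if_neg (fun hh => (hAiff.mp hh.1) hA), if_pos hC]
          · rw [if_neg (fun hh => hA hh.1), if_pos ⟨hAiff.mpr hA, hCiff.mpr hC⟩, if_pos hC]
        · rw [if_neg (fun hh => hC hh.2), if_neg (fun hh => hC (hCiff.mp hh.2)), if_neg hC]
  -- counts
  have hxy' : y ≠ x := hxy.symm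
  have hP1 : (univ.filter fun σ : Equiv.Perm (Fin n) => σ i = x ∧ σ i' = y).card
      = (n - 2).factorial := card_fiber_s16 hii hxy
  have hP2 : (univ.filter fun σ : Equiv.Perm (Fin n) => σ i = y ∧ σ i' = x).card
      = (n - 2).factorial := card_fiber_s16 hii hxy'
  have hsplit : ∑ σ : Equiv.Perm (Fin n),
      (if (σ i = x ∧ σ i' = y) ∨ (σ i = y ∧ σ i' = x)
        then (if x < y then (1 : ℕ) else 0)
        else (if σ⁻¹ y < σ⁻¹ x then 1 else 0))
      = (univ.filter fun σ : Equiv.Perm (Fin n) =>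
            (σ i = x ∧ σ i' = y) ∨ (σ i = y ∧ σ i' = x)).card * (if x < y then 1 else 0)
        + (univ.filter fun σ : Equiv.Perm (Fin n) =>
            ¬((σ i = x ∧ σ i' = y) ∨ (σ i = y ∧ σ i' = x)) ∧ (σ⁻¹ y < σ⁻¹ x)).card := by
    rw [Finset.sum_ite]
    congr 1
    · rw [Finset.sum_const, smul_eq_mul]
    · rw [← Finset.card_filter, Finset.filter_filter]
  have hpair : (univ.filter fun σ : Equiv.Perm (Fin n) =>
      (σ i = x ∧ σ i' = y) ∨ (σ i = y ∧ σ i' = x)).card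
      = (n - 2).factorial + (n - 2).factorial := by
    rw [Finset.filter_or, Finset.card_union_of_disjoint, hP1, hP2]
    rw [Finset.disjoint_left]
    intro σ h1 h2
    rw [Finset.mem_filter] at h1 h2
    exact hxy (h1.2.1.symm.trans h2.2.1)
  have hilt : i < i' := by rw [Fin.lt_def]; omega
  have hfib : (univ.filter fun σ : Equiv.Perm (Fin n) =>
      (σ⁻¹ y < σ⁻¹ x) ∧ ((σ i = x ∧ σ i' = y) ∨ (σ i = y ∧ σ i' = x)))
      = univ.filter fun σ : Equiv.Perm (Fin n) => σ i = y ∧ σ i' = x := by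
    ext σ
    simp only [Finset.mem_filter, mem_univ, true_and]
    constructor
    · rintro ⟨hcond, (⟨h1, h2⟩ | h2)⟩
      · exfalso
        have e1 : σ⁻¹ x = i := by rw [← h1, Equiv.Perm.inv_eq_iff_eq]
        have e2 : σ⁻¹ y = i' := by rw [← h2, Equiv.Perm.inv_eq_iff_eq]
        rw [e1, e2] at hcond
        exact absurd (lt_trans hcond hilt) (lt_irrefl _)
      · exact h2
    · rintro ⟨h1, h2⟩
      have e1 : σ⁻¹ x = i' := by rw [← h2, Equiv.Perm.inv_eq_iff_eq]
      have e2 : σ⁻¹ y = i := by rw [← h1, Equiv.Perm.inv_eq_iff_eq]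
      exact ⟨by rw [e1, e2]; exact hilt, Or.inr ⟨h1, h2⟩⟩
  have hQ : (univ.filter fun σ : Equiv.Perm (Fin n) =>
        ¬((σ i = x ∧ σ i' = y) ∨ (σ i = y ∧ σ i' = x)) ∧ (σ⁻¹ y < σ⁻¹ x)).card
        + (n - 2).factorial
      = (univ.filter fun σ : Equiv.Perm (Fin n) => σ⁻¹ y < σ⁻¹ x).card := by
    have hsplit2 := Finset.card_filter_add_card_filter_not
      (s := univ.filter fun σ : Equiv.Perm (Fin n) => σ⁻¹ y < σ⁻¹ x)
      (p := fun σ : Equiv.Perm (Fin n) =>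
        (σ i = x ∧ σ i' = y) ∨ (σ i = y ∧ σ i' = x))
    rw [Finset.filter_filter, Finset.filter_filter, hfib] at hsplit2
    have hcomm : (univ.filter fun σ : Equiv.Perm (Fin n) =>
        (σ⁻¹ y < σ⁻¹ x) ∧ ¬((σ i = x ∧ σ i' = y) ∨ (σ i = y ∧ σ i' = x)))
        = univ.filter fun σ : Equiv.Perm (Fin n) =>
          ¬((σ i = x ∧ σ i' = y) ∨ (σ i = y ∧ σ i' = x)) ∧ (σ⁻¹ y < σ⁻¹ x) := by
      apply Finset.filter_congr
      intro σ _
      tauto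
    rw [hcomm] at hsplit2
    omega
  have hCtot : (univ.filter fun σ : Equiv.Perm (Fin n) => σ⁻¹ y < σ⁻¹ x).card * 2
      = n.factorial := card_half_inv hxy
  have hmain : (univ.filter fun σ : Equiv.Perm (Fin n) =>
      σ i' < σ i ∧ σ⁻¹ y < σ⁻¹ x).card * 2
      = (univ.filter fun σ : Equiv.Perm (Fin n) =>
            (σ i = x ∧ σ i' = y) ∨ (σ i = y ∧ σ i' = x)).card * (if x < y then 1 else 0)
        + (univ.filter fun σ : Equiv.Perm (Fin n) =>
            ¬((σ i = x ∧ σ i' = y) ∨ (σ i = y ∧ σ i' = x)) ∧ (σ⁻¹ y < σ⁻¹ x)).card := by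
    rw [h2f, Finset.sum_congr rfl (fun σ _ => hpt σ), hsplit]
  by_cases hxyl : x < y
  · rw [if_pos hxyl] at hmain ⊢
    omega
  · rw [if_neg hxyl] at hmain ⊢
    omega

def Jset (n : ℕ) : Finset (Fin n × Fin n) :=
  Finset.univ.filter fun p : Fin n × Fin n => (p.2 : ℕ) = (p.1 : ℕ) + 1

lemma desCount_eq_s16 {n : ℕ} (σ : Equiv.Perm (Fin n)) :
    desCount σ = ∑ p ∈ Jset n, (if σ p.2 < σ p.1 then 1 else 0) := by
  rw [desCount, ← Finset.card_filter, Jset, Finset.filter_filter]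

lemma card_Jset {n : ℕ} : (Jset n).card = n - 1 := by
  classical
  rw [← Finset.card_range (n - 1)]
  apply Finset.card_bij (fun p _ => (p.1 : ℕ))
  · rintro ⟨p1, p2⟩ hp
    rw [Jset, Finset.mem_filter] at hp
    have := p2.isLt
    simp only [Finset.mem_range]
    have h2 := hp.2
    simp only at h2
    omega
  · rintro ⟨p1, p2⟩ hp ⟨q1, q2⟩ hq hpq
    rw [Jset, Finset.mem_filter] at hp hq
    simp only at hpq hp hq
    have : p2 = q2 := by
      apply Fin.ext; omega
    have : p1 = q1 := Fin.ext hpq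
    simp_all
  · intro k hk
    rw [Finset.mem_range] at hk
    refine ⟨(⟨k, by omega⟩, ⟨k + 1, by omega⟩), ?_, rfl⟩
    rw [Jset, Finset.mem_filter]
    exact ⟨Finset.mem_univ _, rfl⟩

lemma mem_Jset_ne {n : ℕ} {p : Fin n × Fin n} (hp : p ∈ Jset n) : p.1 ≠ p.2 := by
  rw [Jset, Finset.mem_filter] at hp
  intro hc
  rw [hc] at hp
  omega

lemma sum_des_s16 {n : ℕ} :
    (∑ σ : Equiv.Perm (Fin n), desCount σ) * 2 = (n - 1) * n.factorial := by
  classical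
  simp_rw [desCount_eq_s16]
  rw [Finset.sum_comm, Finset.sum_mul]
  have : ∀ p ∈ Jset n,
      (∑ σ : Equiv.Perm (Fin n), (if σ p.2 < σ p.1 then 1 else 0)) * 2 = n.factorial := by
    intro p hp
    rw [← Finset.card_filter]
    exact card_half_app (mem_Jset_ne hp)
  rw [Finset.sum_congr rfl this, Finset.sum_const, smul_eq_mul, card_Jset]

-- number of ascent-indicator: complement identity
lemma asc_des {n : ℕ} (τ : Equiv.Perm (Fin n)) :
    (∑ q ∈ Jset n, (if τ q.1 < τ q.2 then (1:ℕ) else 0)) + desCount τ = n - 1 := by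
  classical
  rw [desCount_eq_s16, ← Finset.sum_add_distrib]
  have : ∀ q ∈ Jset n,
      ((if τ q.1 < τ q.2 then (1:ℕ) else 0) + (if τ q.2 < τ q.1 then 1 else 0)) = 1 := by
    intro q hq
    have hne : τ q.1 ≠ τ q.2 := fun hh => (mem_Jset_ne hq) (τ.injective hh)
    rcases lt_or_gt_of_ne hne with h | h
    · rw [if_pos h, if_neg (asymm h)]
    · rw [if_neg (asymm h), if_pos h]
  rw [Finset.sum_congr rfl this, Finset.sum_const, smul_eq_mul, mul_one, card_Jset]

lemma key_nat {n : ℕ} (τ : Equiv.Perm (Fin n)) :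
    (∑ σ : Equiv.Perm (Fin n), desCount σ * desCount (σ⁻¹ * τ)) * 4
      + (n - 1) * (n - 1) * (2 * (n - 2).factorial)
    = (n - 1) * (n - 1) * n.factorial
      + (n - 1) * (4 * (n - 2).factorial
          * ∑ q ∈ Jset n, (if τ q.1 < τ q.2 then (1:ℕ) else 0)) := by
  classical
  have step1 : ∀ σ : Equiv.Perm (Fin n), desCount σ * desCount (σ⁻¹ * τ)
      = ∑ p ∈ Jset n, ∑ q ∈ Jset n,
          (if σ p.2 < σ p.1 ∧ σ⁻¹ (τ q.2) < σ⁻¹ (τ q.1) then 1 else 0) := by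
    intro σ
    rw [desCount_eq_s16 σ, desCount_eq_s16 (σ⁻¹ * τ), Finset.sum_mul_sum]
    apply Finset.sum_congr rfl; intro p _
    apply Finset.sum_congr rfl; intro q _
    simp only [Equiv.Perm.mul_apply]
    by_cases h1 : σ p.2 < σ p.1 <;> by_cases h2 : σ⁻¹ (τ q.2) < σ⁻¹ (τ q.1) <;>
      simp [h1, h2] <;> congr 1
  rw [Finset.sum_congr rfl (fun σ _ => step1 σ)]
  rw [Finset.sum_comm]
  have swap2 : ∀ p ∈ Jset n,
      (∑ σ : Equiv.Perm (Fin n), ∑ q ∈ Jset n,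
        (if σ p.2 < σ p.1 ∧ σ⁻¹ (τ q.2) < σ⁻¹ (τ q.1) then (1:ℕ) else 0))
      = ∑ q ∈ Jset n, (univ.filter fun σ : Equiv.Perm (Fin n) =>
            σ p.2 < σ p.1 ∧ σ⁻¹ (τ q.2) < σ⁻¹ (τ q.1)).card := by
    intro p _
    rw [Finset.sum_comm]
    apply Finset.sum_congr rfl; intro q _
    rw [← Finset.card_filter]
  rw [Finset.sum_congr rfl swap2]
  -- now apply core_count per (p, q)
  have hcore : ∀ p ∈ Jset n, ∀ q ∈ Jset n,
      (univ.filter fun σ : Equiv.Perm (Fin n) =>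
          σ p.2 < σ p.1 ∧ σ⁻¹ (τ q.2) < σ⁻¹ (τ q.1)).card * 4 + 2 * (n - 2).factorial
      = n.factorial + 4 * (n - 2).factorial * (if τ q.1 < τ q.2 then 1 else 0) := by
    intro p hp q hq
    have hq' : τ q.1 ≠ τ q.2 := fun hh => (mem_Jset_ne hq) (τ.injective hh)
    have hp' : ((p.2 : Fin n) : ℕ) = ((p.1 : Fin n) : ℕ) + 1 := by
      rw [Jset, Finset.mem_filter] at hp; exact hp.2
    exact core_count hp' hq'
  -- assemble with sums
  have expand : (∑ p ∈ Jset n, ∑ q ∈ Jset n,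
        (univ.filter fun σ : Equiv.Perm (Fin n) =>
          σ p.2 < σ p.1 ∧ σ⁻¹ (τ q.2) < σ⁻¹ (τ q.1)).card) * 4
      + (n - 1) * (n - 1) * (2 * (n - 2).factorial)
      = ∑ p ∈ Jset n, ∑ q ∈ Jset n,
          ((univ.filter fun σ : Equiv.Perm (Fin n) =>
            σ p.2 < σ p.1 ∧ σ⁻¹ (τ q.2) < σ⁻¹ (τ q.1)).card * 4 + 2 * (n - 2).factorial) := by
    rw [Finset.sum_mul]
    simp_rw [Finset.sum_mul, Finset.sum_add_distrib, Finset.sum_const, smul_eq_mul, card_Jset]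
    ring
  rw [expand]
  have final : ∑ p ∈ Jset n, ∑ q ∈ Jset n,
      ((univ.filter fun σ : Equiv.Perm (Fin n) =>
          σ p.2 < σ p.1 ∧ σ⁻¹ (τ q.2) < σ⁻¹ (τ q.1)).card * 4 + 2 * (n - 2).factorial)
      = ∑ p ∈ Jset n, ∑ q ∈ Jset n,
          (n.factorial + 4 * (n - 2).factorial * (if τ q.1 < τ q.2 then 1 else 0)) := by
    apply Finset.sum_congr rfl; intro p hp
    apply Finset.sum_congr rfl; intro q hq
    exact hcore p hp q hq
  rw [final]
  simp_rw [Finset.sum_add_distrib, Finset.sum_const, smul_eq_mul, card_Jset, ← Finset.mul_sum]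
  ring

noncomputable def betaR (n : ℕ) : ℝ :=
  (((n - 1) * (n - 1) * n.factorial : ℕ) : ℝ) / 4
    + (((n - 1) * (n - 1) * (n - 2).factorial : ℕ) : ℝ)
    - (((n - 1) * (n - 1) * (n - 2).factorial : ℕ) : ℝ) / 2

lemma fact_split {n : ℕ} (hn : 2 ≤ n) :
    (n - 1).factorial = (n - 1) * (n - 2).factorial := by
  have h : n - 1 = (n - 2) + 1 := by omega
  rw [h, Nat.factorial_succ]

lemma key_real {n : ℕ} (hn : 3 ≤ n) (τ : Equiv.Perm (Fin n)) :
    ∑ σ : Equiv.Perm (Fin n), (desCount σ : ℝ) * (desCount (σ⁻¹ * τ) : ℝ)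
    = betaR n - ((n - 1).factorial : ℝ) * (desCount τ : ℝ) := by
  have h1 := key_nat τ
  have h2 := asc_des τ
  have hS : ∑ σ : Equiv.Perm (Fin n), (desCount σ : ℝ) * (desCount (σ⁻¹ * τ) : ℝ)
      = ((∑ σ : Equiv.Perm (Fin n), desCount σ * desCount (σ⁻¹ * τ) : ℕ) : ℝ) := by
    push_cast; rfl
  rw [hS, fact_split (by omega), betaR]
  have h2' : ((∑ q ∈ Jset n, (if τ q.1 < τ q.2 then (1:ℕ) else 0) : ℕ) : ℝ)
      = ((n - 1 : ℕ) : ℝ) - (desCount τ : ℝ) := by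
    rw [← h2]; push_cast; ring
  have h1' : ((∑ σ : Equiv.Perm (Fin n), desCount σ * desCount (σ⁻¹ * τ) : ℕ) : ℝ) * 4
      + ((n - 1 : ℕ) : ℝ) * ((n - 1 : ℕ) : ℝ) * (2 * ((n - 2).factorial : ℝ))
      = ((n - 1 : ℕ) : ℝ) * ((n - 1 : ℕ) : ℝ) * (n.factorial : ℝ)
      + ((n - 1 : ℕ) : ℝ) * (4 * ((n - 2).factorial : ℝ)
          * (((n - 1 : ℕ) : ℝ) - (desCount τ : ℝ))) := by
    rw [← h2']
    exact_mod_cast congrArg (fun z : ℕ => (z : ℝ)) h1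
  push_cast at h1' ⊢
  linarith

lemma mul_single_sum {n : ℕ} (f g : Equiv.Perm (Fin n) → ℝ) :
    (∑ σ : Equiv.Perm (Fin n), MonoidAlgebra.single σ (f σ))
      * (∑ π : Equiv.Perm (Fin n), MonoidAlgebra.single π (g π))
    = ∑ τ : Equiv.Perm (Fin n),
        MonoidAlgebra.single τ (∑ σ : Equiv.Perm (Fin n), f σ * g (σ⁻¹ * τ)) := by
  classical
  rw [Finset.sum_mul_sum]
  simp_rw [MonoidAlgebra.single_mul_single]
  have step : ∀ σ : Equiv.Perm (Fin n),
      (∑ π : Equiv.Perm (Fin n), MonoidAlgebra.single (σ * π) (f σ * g π))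
      = ∑ τ : Equiv.Perm (Fin n), MonoidAlgebra.single τ (f σ * g (σ⁻¹ * τ)) := by
    intro σ
    exact Fintype.sum_equiv (Equiv.mulLeft σ) _ _ (fun π => by simp)
  rw [Finset.sum_congr rfl (fun σ _ => step σ), Finset.sum_comm]
  apply Finset.sum_congr rfl
  intro τ _
  exact (map_sum (MonoidAlgebra.singleAddHom τ) _ _).symm

lemma cubic {A : Type*} [Ring A] [Algebra ℝ A] (B E : A) (lam mu beta : ℝ)
    (hBB : B * B = beta • E - mu • B) (hBE : B * E = lam • E) (hEB : E * B = lam • E) :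
    B * (B - lam • 1) * (B + mu • 1) = 0 := by
  simp only [mul_sub, sub_mul, mul_add, add_mul, smul_mul_assoc, mul_smul_comm, mul_one,
    one_mul, hBB, hBE, hEB, smul_sub, smul_smul]
  module

noncomputable def Ealg (n : ℕ) : MonoidAlgebra ℝ (Equiv.Perm (Fin n)) :=
  ∑ σ : Equiv.Perm (Fin n), MonoidAlgebra.single σ (1 : ℝ)

lemma lam_eq {n : ℕ} (hn : 1 ≤ n) :
    n.choose 2 * (n - 1).factorial * 2 = (n - 1) * n.factorial := by
  have h2 : n.choose 2 * 2 = n * (n - 1) := by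
    rw [Nat.choose_two_right]
    refine Nat.div_mul_cancel ?_
    have he := Nat.even_mul_succ_self (n - 1)
    rw [show (n - 1) + 1 = n from by omega] at he
    have := he.two_dvd
    rwa [mul_comm] at this
  have hnf : n.factorial = n * (n - 1).factorial := by
    conv_lhs => rw [show n = (n - 1) + 1 from by omega]
    rw [Nat.factorial_succ, show (n - 1) + 1 = n from by omega]
  calc n.choose 2 * (n - 1).factorial * 2
      = (n.choose 2 * 2) * (n - 1).factorial := by ring
    _ = n * (n - 1) * (n - 1).factorial := by rw [h2]
    _ = (n - 1) * (n * (n - 1).factorial) := by ring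
    _ = (n - 1) * n.factorial := by rw [← hnf]

theorem stmt_16 (n : ℕ) (hn : 3 ≤ n)
    (B : MonoidAlgebra ℝ (Equiv.Perm (Fin n)))
    (hB : B = ∑ σ : Equiv.Perm (Fin n), MonoidAlgebra.single σ ((desCount σ : ℝ))) :
    B * (B - ((n.choose 2 * (n - 1).factorial : ℕ) : ℝ) • 1) *
      (B + (((n - 1).factorial : ℕ) : ℝ) • 1) = 0 := by
  classical
  have hlamnat : ∑ σ : Equiv.Perm (Fin n), desCount σ
      = n.choose 2 * (n - 1).factorial := by
    have h1 := sum_des_s16 (n := n)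
    have h2 := lam_eq (n := n) (by omega)
    omega
  have hlam : ∑ σ : Equiv.Perm (Fin n), (desCount σ : ℝ)
      = ((n.choose 2 * (n - 1).factorial : ℕ) : ℝ) := by
    rw [← hlamnat]; push_cast; rfl
  have hBE : B * Ealg n = ((n.choose 2 * (n - 1).factorial : ℕ) : ℝ) • Ealg n := by
    rw [hB, Ealg, mul_single_sum, Finset.smul_sum]
    apply Finset.sum_congr rfl
    intro τ _
    rw [MonoidAlgebra.smul_single', mul_one]
    congr 1
    simp only [mul_one]
    exact hlam
  have hEB : Ealg n * B = ((n.choose 2 * (n - 1).factorial : ℕ) : ℝ) • Ealg n := by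
    rw [hB, Ealg, mul_single_sum, Finset.smul_sum]
    apply Finset.sum_congr rfl
    intro τ _
    rw [MonoidAlgebra.smul_single', mul_one]
    congr 1
    simp only [one_mul]
    rw [← hlam]
    exact Fintype.sum_equiv ((Equiv.inv (Equiv.Perm (Fin n))).trans (Equiv.mulRight τ))
      _ _ (fun σ => rfl)
  have hBB : B * B = betaR n • Ealg n - (((n - 1).factorial : ℕ) : ℝ) • B := by
    rw [hB, mul_single_sum, Ealg, Finset.smul_sum, Finset.smul_sum,
      ← Finset.sum_sub_distrib]
    apply Finset.sum_congr rfl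
    intro τ _
    rw [MonoidAlgebra.smul_single', mul_one, MonoidAlgebra.smul_single',
      ← MonoidAlgebra.single_sub]
    congr 1
    exact key_real hn τ
  exact cubic B (Ealg n) _ _ _ hBB hBE hEB
end
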